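/- arXiv:2502.14774 — 8 statements merged into one kernel-verified Lean document; each statement's English description precedes it below -/
import Mathlib

section
/- Let 0 < b < 1 and θ > 1 be real numbers with ⌊bθ⌋ ≥ 1 and (1-b)θ ≥ 1. Then ∑_{m=0}^{⌊bθ⌋} e^{-θ} θ^m/m! ≤ θ·e^{-θ(1-b+b·log b)}. -/
open scoped BigOperators

private lemma aux_mono (θ : ℝ) (hθ : 0 < θ) :
    ∀ k : ℕ, (k : ℝ) ≤ θ → ∀ m, m ≤ k →
      θ ^ m / (Nat.factorial m : ℝ) ≤ θ ^ k / (Nat.factorial k : ℝ) := by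
  intro k
  induction k with
  | zero => intro _ m hm; interval_cases m; simp
  | succ n ih =>
    intro hkθ m hm
    rcases Nat.eq_or_lt_of_le hm with h | h
    · subst h; exact le_refl _
    · have hm' : m ≤ n := Nat.lt_succ_iff.mp h
      have hn : (n : ℝ) ≤ θ := by push_cast at hkθ ⊢; linarith
      have step : θ ^ n / (Nat.factorial n : ℝ) ≤ θ ^ (n+1) / (Nat.factorial (n+1) : ℝ) := by
        have hf : (0:ℝ) < (Nat.factorial n : ℝ) := by positivity
        have hf' : (0:ℝ) < (Nat.factorial (n+1) : ℝ) := by positivity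
        rw [div_le_div_iff₀ hf hf', Nat.factorial_succ, pow_succ]
        push_cast
        have hp : (0:ℝ) < θ ^ n := pow_pos hθ n
        have h1 : (n:ℝ) + 1 ≤ θ := by push_cast at hkθ; linarith
        nlinarith [mul_pos hp hf]
      exact (ih hn m hm').trans step

private lemma aux_exp (θ : ℝ) (hθ : 0 < θ) (k : ℕ) (hk : 1 ≤ k) :
    θ ^ k / (Nat.factorial k : ℝ) ≤ Real.exp ((k:ℝ) * (1 + Real.log θ - Real.log k)) := by
  have hK0 : (0:ℝ) < k := by exact_mod_cast hk
  have h1 : (k:ℝ) ^ k / (Nat.factorial k : ℝ) ≤ Real.exp (k:ℝ) := by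
    have := Real.sum_le_exp_of_nonneg (x := (k:ℝ)) hK0.le (k+1)
    refine le_trans ?_ this
    exact Finset.single_le_sum (f := fun i => (k:ℝ)^i / (Nat.factorial i : ℝ))
      (fun i _ => by positivity) (Finset.self_mem_range_succ k)
  have hθK : θ ^ k / (Nat.factorial k : ℝ) = (θ / k) ^ k * ((k:ℝ) ^ k / (Nat.factorial k : ℝ)) := by
    field_simp
    rw [div_pow, div_mul_cancel₀ _ (pow_pos hK0 k).ne']
  rw [hθK]
  have h2 : (θ / k) ^ k * ((k:ℝ) ^ k / (Nat.factorial k : ℝ)) ≤ (θ / k) ^ k * Real.exp (k:ℝ) := by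
    apply mul_le_mul_of_nonneg_left h1 (by positivity)
  refine h2.trans_eq ?_
  have hpos : (0:ℝ) < θ / k := by positivity
  rw [← Real.exp_log hpos, ← Real.exp_nat_mul, ← Real.exp_add,
    Real.log_div (ne_of_gt hθ) (ne_of_gt hK0)]
  congr 1
  ring

/-- **Lemma (Poisson lower tail bound).**
If `0 < b < 1`, `θ > 1`, `⌊bθ⌋ ≥ 1`, and `(1-b)θ ≥ 1`, then
`∑_{m=0}^{⌊bθ⌋} e^{-θ} θ^m / m! ≤ θ e^{-θ(1 - b + b log b)}`. -/
theorem stmt_0 (b θ : ℝ) (hb0 : 0 < b) (hb1 : b < 1) (hθ : 1 < θ)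
    (hfloor : 1 ≤ ⌊b * θ⌋₊) (hbθ : 1 ≤ (1 - b) * θ) :
    ∑ m ∈ Finset.range (⌊b * θ⌋₊ + 1), Real.exp (-θ) * θ ^ m / (Nat.factorial m) ≤
      θ * Real.exp (-θ * (1 - b + b * Real.log b)) := by
  set k := ⌊b * θ⌋₊ with hkdef
  have hθ0 : (0:ℝ) < θ := by linarith
  have hc0 : (0:ℝ) < b * θ := by positivity
  have hKc : (k : ℝ) ≤ b * θ := Nat.floor_le hc0.le
  have hcθ : b * θ < θ := by nlinarith
  have hK1 : (1:ℝ) ≤ (k:ℝ) := by exact_mod_cast hfloor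
  have hK0 : (0:ℝ) < (k:ℝ) := by linarith
  have hk1θ : (k : ℝ) + 1 ≤ θ := by nlinarith
  -- Step 1: each term bounded by the largest term
  have hmax : ∀ m ∈ Finset.range (k+1),
      Real.exp (-θ) * θ ^ m / (Nat.factorial m : ℝ) ≤
      Real.exp (-θ) * (θ ^ k / (Nat.factorial k : ℝ)) := by
    intro m hm
    have hm' : m ≤ k := Nat.lt_succ_iff.mp (Finset.mem_range.mp hm)
    rw [mul_div_assoc]
    exact mul_le_mul_of_nonneg_left
      (aux_mono θ hθ0 k (by linarith) m hm') (Real.exp_pos _).le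
  have hsum : ∑ m ∈ Finset.range (k+1), Real.exp (-θ) * θ ^ m / (Nat.factorial m : ℝ) ≤
      ((k:ℝ) + 1) * (Real.exp (-θ) * (θ ^ k / (Nat.factorial k : ℝ))) := by
    calc ∑ m ∈ Finset.range (k+1), Real.exp (-θ) * θ ^ m / (Nat.factorial m : ℝ)
        ≤ (Finset.range (k+1)).card • (Real.exp (-θ) * (θ ^ k / (Nat.factorial k : ℝ))) :=
          Finset.sum_le_card_nsmul _ _ _ hmax
      _ = ((k:ℝ) + 1) * (Real.exp (-θ) * (θ ^ k / (Nat.factorial k : ℝ))) := by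
          rw [Finset.card_range, nsmul_eq_mul]; push_cast; ring
  -- Step 2: the analytic bound on θ^k/k!
  have hexp : θ ^ k / (Nat.factorial k : ℝ) ≤ Real.exp (b * θ * (1 - Real.log b)) := by
    refine (aux_exp θ hθ0 k hfloor).trans ?_
    rw [Real.exp_le_exp]
    -- monotonicity of x ↦ x(1 + log θ - log x) on (0, θ]
    have hA : (k:ℝ) * (Real.log (b*θ) - Real.log k) ≤ b * θ - k := by
      have hlog : Real.log ((b*θ) / k) ≤ (b*θ)/k - 1 :=
        Real.log_le_sub_one_of_pos (by positivity)
      rw [Real.log_div (ne_of_gt hc0) (ne_of_gt hK0)] at hlog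
      have := mul_le_mul_of_nonneg_left hlog hK0.le
      calc (k:ℝ) * (Real.log (b*θ) - Real.log k) ≤ (k:ℝ) * ((b*θ)/k - 1) := this
        _ = b * θ - k := by field_simp
    have hB : Real.log (b*θ) ≤ Real.log θ :=
      Real.log_le_log hc0 hcθ.le
    have hgoal : (k:ℝ) * (1 + Real.log θ - Real.log k) ≤
        (b*θ) * (1 + Real.log θ - Real.log (b*θ)) := by
      nlinarith [mul_nonneg (sub_nonneg.2 hKc) (sub_nonneg.2 hB)]
    refine hgoal.trans_eq ?_
    rw [Real.log_mul (ne_of_gt hb0) (ne_of_gt hθ0)]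
    ring
  -- Combine
  calc ∑ m ∈ Finset.range (k+1), Real.exp (-θ) * θ ^ m / (Nat.factorial m : ℝ)
      ≤ ((k:ℝ) + 1) * (Real.exp (-θ) * (θ ^ k / (Nat.factorial k : ℝ))) := hsum
    _ ≤ θ * (Real.exp (-θ) * (θ ^ k / (Nat.factorial k : ℝ))) := by
        apply mul_le_mul_of_nonneg_right hk1θ; positivity
    _ ≤ θ * (Real.exp (-θ) * Real.exp (b * θ * (1 - Real.log b))) := by
        apply mul_le_mul_of_nonneg_left _ hθ0.le
        exact mul_le_mul_of_nonneg_left hexp (Real.exp_pos _).le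
    _ = θ * Real.exp (-θ * (1 - b + b * Real.log b)) := by
        rw [← Real.exp_add]; congr 1; ring
end

section
/- Let B > 1 and θ > 0 be real numbers. Then ∑_{k=⌈Bθ⌉}^{∞} e^{-θ} θ^k/k! ≤ (B/(B-1))·e^{-θ(1-B+B·log B)}. -/
lemma exp_tsum_real (x : ℝ) : ∑' n : ℕ, x ^ n / (Nat.factorial n) = Real.exp x := by
  rw [Real.exp_eq_exp_ℝ, NormedSpace.exp_eq_tsum_div]

set_option maxHeartbeats 1000000 in
/-- **Lemma (Poisson upper tail bound).**
If `B > 1` and `θ > 0`, then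
`∑_{k=⌈Bθ⌉}^∞ e^{-θ} θ^k / k! ≤ (B/(B-1)) e^{-θ(1 - B + B log B)}`. -/
theorem stmt_1 (B θ : ℝ) (hB : 1 < B) (hθ : 0 < θ) :
    ∑' k : ℕ, (if ⌈B * θ⌉₊ ≤ k then Real.exp (-θ) * θ ^ k / (Nat.factorial k) else 0) ≤
      (B / (B - 1)) * Real.exp (-θ * (1 - B + B * Real.log B)) := by
  set n := ⌈B * θ⌉₊ with hn
  have hB0 : (0:ℝ) < B := lt_trans one_pos hB
  have hBn : (0:ℝ) < B ^ n := pow_pos hB0 n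
  have hsumg : Summable (fun k : ℕ => Real.exp (-θ) * (θ * B) ^ k / (Nat.factorial k) / B ^ n) := by
    apply Summable.div_const
    simp_rw [mul_div_assoc]
    exact (Real.summable_pow_div_factorial (θ * B)).mul_left _
  have hle : ∀ k : ℕ, (if n ≤ k then Real.exp (-θ) * θ ^ k / (Nat.factorial k) else 0)
      ≤ Real.exp (-θ) * (θ * B) ^ k / (Nat.factorial k) / B ^ n := by
    intro k
    have hpos : (0:ℝ) < (Nat.factorial k : ℝ) := by positivity
    by_cases hk : n ≤ k
    · simp only [hk, if_true]
      have heq : Real.exp (-θ) * (θ * B) ^ k / (Nat.factorial k) / B ^ n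
          = (Real.exp (-θ) * θ ^ k / (Nat.factorial k)) * (B ^ k / B ^ n) := by
        rw [mul_pow]; ring
      rw [heq]
      have h1 : (1:ℝ) ≤ B ^ k / B ^ n := by
        rw [one_le_div hBn]
        exact pow_le_pow_right₀ hB.le hk
      have h0 : (0:ℝ) ≤ Real.exp (-θ) * θ ^ k / (Nat.factorial k) := by positivity
      nlinarith
    · simp only [hk, if_false]
      positivity
  have hsumf : Summable (fun k : ℕ =>
      (if n ≤ k then Real.exp (-θ) * θ ^ k / (Nat.factorial k) else 0)) := by
    apply Summable.of_nonneg_of_le _ hle hsumg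
    intro k
    by_cases hk : n ≤ k <;> simp [hk] <;> positivity
  have h1 := Summable.tsum_le_tsum hle hsumf hsumg
  have h2 : ∑' k : ℕ, Real.exp (-θ) * (θ * B) ^ k / (Nat.factorial k) / B ^ n
      = Real.exp (-θ) * Real.exp (θ * B) / B ^ n := by
    rw [tsum_div_const]
    congr 1
    simp_rw [mul_div_assoc]
    rw [tsum_mul_left, exp_tsum_real]
  rw [h2] at h1
  refine h1.trans ?_
  -- now show exp(-θ)*exp(θB)/B^n ≤ (B/(B-1)) * exp(-θ(1-B+B log B))
  have hcoef : (1:ℝ) ≤ B / (B - 1) := by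
    rw [le_div_iff₀ (by linarith)]; linarith
  have hexp : Real.exp (-θ) * Real.exp (θ * B) / B ^ n
      ≤ Real.exp (-θ * (1 - B + B * Real.log B)) := by
    have hBnexp : (B:ℝ) ^ n = Real.exp (n * Real.log B) := by
      rw [Real.exp_nat_mul, Real.exp_log hB0]
    have hkey : Real.exp (θ * B * Real.log B) ≤ B ^ n := by
      rw [hBnexp]
      apply Real.exp_le_exp.mpr
      have := Nat.le_ceil (B * θ)
      have hlog : 0 < Real.log B := Real.log_pos hB
      nlinarith [this]
    rw [div_le_iff₀ hBn, ← Real.exp_add]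
    calc Real.exp (-θ + θ * B)
        = Real.exp (-θ * (1 - B + B * Real.log B)) * Real.exp (θ * B * Real.log B) := by
          rw [← Real.exp_add]; ring_nf
      _ ≤ Real.exp (-θ * (1 - B + B * Real.log B)) * B ^ n := by
          exact mul_le_mul_of_nonneg_left hkey (Real.exp_pos _).le
  calc Real.exp (-θ) * Real.exp (θ * B) / B ^ n
      ≤ Real.exp (-θ * (1 - B + B * Real.log B)) := hexp
    _ ≤ (B / (B - 1)) * Real.exp (-θ * (1 - B + B * Real.log B)) := by
        nlinarith [Real.exp_pos (-θ * (1 - B + B * Real.log B))]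
end

section
/- Let B > 1, let f ≥ θ > 0, and let x ≥ 1. If the event {𝒳_{t-1} ≤ x} has positive probability, then P(𝒳_t ≤ B·x·f | 𝒳_{t-1} ≤ x) ≥ 1 - (B/(B-1))·e^{-x·f·B·(log B - 1)}. -/
open MeasureTheory ProbabilityTheory
open scoped ENNReal

/-- A Galton–Watson branching process `X` with Poisson(`θ`) offspring, started from a single
individual, built from an i.i.d. array `ξ` of Poisson(`θ`) random variables:
`X 0 = 1` and `X (t+1) = ∑_{i < X t} ξ (t, i)`. -/
def IsGWPoisson {Ω : Type*} [MeasurableSpace Ω] (P : Measure Ω) (θ : ℝ)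
    (ξ : ℕ × ℕ → Ω → ℕ) (X : ℕ → Ω → ℕ) : Prop :=
  (∀ p, Measurable (ξ p)) ∧
  iIndepFun ξ P ∧
  (∀ p k, P {ω | ξ p ω = k} = ENNReal.ofReal (Real.exp (-θ) * θ ^ k / (Nat.factorial k))) ∧
  (∀ ω, X 0 ω = 1) ∧
  (∀ t ω, X (t + 1) ω = ∑ i ∈ Finset.range (X t ω), ξ (t, i) ω)

/-- `X s` is measurable with respect to the σ-algebra generated by the `ξ (r, i)` with `r < s`. -/
lemma gw_measurable {Ω : Type*} [MeasurableSpace Ω] (ξ : ℕ × ℕ → Ω → ℕ) (X : ℕ → Ω → ℕ)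
    (hX0 : ∀ ω, X 0 ω = 1)
    (hXs : ∀ t ω, X (t + 1) ω = ∑ i ∈ Finset.range (X t ω), ξ (t, i) ω) :
    ∀ s, Measurable[⨆ q ∈ {q : ℕ × ℕ | q.1 < s}, MeasurableSpace.comap (ξ q) inferInstance]
      (X s) := by
  intro s
  induction s with
  | zero =>
    have h : X 0 = fun _ => 1 := funext hX0
    rw [h]
    exact measurable_const
  | succ s ih =>
    have key : ∀ k : ℕ, MeasurableSet[⨆ q ∈ {q : ℕ × ℕ | q.1 < s + 1},
        MeasurableSpace.comap (ξ q) inferInstance] (X (s + 1) ⁻¹' {k}) := by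
      intro k
      have hpre : X (s + 1) ⁻¹' {k} = ⋃ n : ℕ,
          ((X s ⁻¹' {n}) ∩ ((fun ω => ∑ i ∈ Finset.range n, ξ (s, i) ω) ⁻¹' {k})) := by
        ext ω
        simp only [Set.mem_preimage, Set.mem_singleton_iff, Set.mem_iUnion, Set.mem_inter_iff]
        constructor
        · intro h
          exact ⟨X s ω, rfl, by rw [← hXs s ω]; exact h⟩
        · rintro ⟨n, hn, hk⟩
          rw [hXs s ω, hn]
          exact hk
      rw [hpre]
      apply MeasurableSet.iUnion
      intro n
      apply MeasurableSet.inter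
      · have hle : (⨆ q ∈ {q : ℕ × ℕ | q.1 < s}, MeasurableSpace.comap (ξ q) inferInstance)
            ≤ ⨆ q ∈ {q : ℕ × ℕ | q.1 < s + 1}, MeasurableSpace.comap (ξ q) inferInstance := by
          apply biSup_mono
          intro q hq
          exact hq.trans (Nat.lt_succ_self s)
        exact hle _ (ih (measurableSet_singleton n))
      · have hm : Measurable[⨆ q ∈ {q : ℕ × ℕ | q.1 < s + 1},
            MeasurableSpace.comap (ξ q) inferInstance]
            (fun ω => ∑ i ∈ Finset.range n, ξ (s, i) ω) := by
          apply Finset.measurable_sum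
          intro i _
          have h1 : Measurable[MeasurableSpace.comap (ξ (s, i)) inferInstance] (ξ (s, i)) :=
            Measurable.of_comap_le le_rfl
          exact h1.mono (le_biSup
              (fun q : ℕ × ℕ => MeasurableSpace.comap (ξ q) inferInstance)
              (show (s, i) ∈ {q : ℕ × ℕ | q.1 < s + 1} from Nat.lt_succ_self s)) le_rfl
        exact hm (measurableSet_singleton k)
    exact @measurable_to_countable' ℕ Ω _ _
      (⨆ q ∈ {q : ℕ × ℕ | q.1 < s + 1}, MeasurableSpace.comap (ξ q) inferInstance) _ key

/-- **Lemma.** If `B > 1`, `f ≥ θ > 0`, `x ≥ 1`, and `P(𝒳_{t-1} ≤ x) > 0`, then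
`P(𝒳_t ≤ B x f | 𝒳_{t-1} ≤ x) ≥ 1 - (B/(B-1)) e^{-x f B (log B - 1)}`. -/
theorem stmt_3 {Ω : Type*} [MeasurableSpace Ω] (P : Measure Ω) [IsProbabilityMeasure P]
    (θ : ℝ) (hθpos : 0 < θ) (ξ : ℕ × ℕ → Ω → ℕ) (X : ℕ → Ω → ℕ)
    (hGW : IsGWPoisson P θ ξ X)
    (B f x : ℝ) (hB : 1 < B) (hfθ : θ ≤ f) (hx : 1 ≤ x)
    (t : ℕ) (ht : 1 ≤ t)
    (hpos : 0 < P {ω | (X (t - 1) ω : ℝ) ≤ x}) :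
    ENNReal.ofReal (1 - (B / (B - 1)) * Real.exp (-(x * f * B * (Real.log B - 1)))) ≤
      (P[|{ω | (X (t - 1) ω : ℝ) ≤ x}]) {ω | (X t ω : ℝ) ≤ B * x * f} := by
  obtain ⟨hmeas, hindep, hdist, hX0, hXs⟩ := hGW
  set msp : ℕ × ℕ → MeasurableSpace Ω :=
    fun p => MeasurableSpace.comap (ξ p) inferInstance with hmsp
  have hle : ∀ p, msp p ≤ ‹MeasurableSpace Ω› := fun p => measurable_iff_comap_le.1 (hmeas p)
  have hiI : iIndep msp P := hindep.iIndep
  have hB0 : (0 : ℝ) < B := lt_trans one_pos hB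
  have hx0 : (0 : ℝ) < x := lt_of_lt_of_le one_pos hx
  have hf0 : (0 : ℝ) < f := lt_of_lt_of_le hθpos hfθ
  set m : ℕ := ⌊x⌋₊ with hm
  set a : ℝ := B * x * f with ha
  set A : Set Ω := {ω | (X (t - 1) ω : ℝ) ≤ x} with hA
  set T : Set Ω := {ω | (X t ω : ℝ) ≤ a} with hT
  set S : Ω → ℕ := fun ω => ∑ i ∈ Finset.range m, ξ (t - 1, i) ω with hSdef
  set C : Set Ω := {ω | a < (S ω : ℝ)} with hC
  have ht' : t - 1 + 1 = t := Nat.succ_pred_eq_of_pos ht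
  -- pointwise comparison on A
  have hpt : ∀ ω ∈ A, X t ω ≤ S ω := by
    intro ω hω
    have h1 : X (t - 1) ω ≤ m := Nat.le_floor hω
    have h2 := hXs (t - 1) ω
    rw [ht'] at h2
    rw [h2]
    exact Finset.sum_le_sum_of_subset (Finset.range_subset_range.2 h1)
  have hsub : A ∩ Tᶜ ⊆ A ∩ C := by
    rintro ω ⟨hωA, hωT⟩
    refine ⟨hωA, ?_⟩
    have h1 : a < (X t ω : ℝ) := lt_of_not_ge hωT
    exact lt_of_lt_of_le h1 (Nat.cast_le.2 (hpt ω hωA))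
  -- measurability
  have hXm := gw_measurable ξ X hX0 hXs
  have hXamb : ∀ s, Measurable (X s) :=
    fun s => (hXm s).mono (iSup₂_le fun q _ => hle q) le_rfl
  have hNatSet : ∀ s : Set ℕ, MeasurableSet s := fun s => MeasurableSpace.measurableSet_top
  have hAmeas : MeasurableSet A := hXamb (t - 1) (hNatSet {n : ℕ | (n : ℝ) ≤ x})
  have hSamb : Measurable S := Finset.measurable_sum _ fun i _ => hmeas (t - 1, i)
  -- independence of A and C
  have hAMA : MeasurableSet[⨆ q ∈ {q : ℕ × ℕ | q.1 < t - 1}, msp q] A :=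
    hXm (t - 1) (hNatSet {n : ℕ | (n : ℝ) ≤ x})
  have hSMB : Measurable[⨆ q ∈ {q : ℕ × ℕ | q.1 = t - 1}, msp q] S := by
    apply Finset.measurable_sum
    intro i _
    have h1 : Measurable[msp (t - 1, i)] (ξ (t - 1, i)) := Measurable.of_comap_le le_rfl
    exact h1.mono (le_biSup _ (show (t - 1, i) ∈ {q : ℕ × ℕ | q.1 = t - 1} from rfl)) le_rfl
  have hCMB : MeasurableSet[⨆ q ∈ {q : ℕ × ℕ | q.1 = t - 1}, msp q] C :=
    hSMB (hNatSet {n : ℕ | a < (n : ℝ)})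
  have hdisj : Disjoint {q : ℕ × ℕ | q.1 < t - 1} {q : ℕ × ℕ | q.1 = t - 1} := by
    rw [Set.disjoint_left]
    intro q h1 h2
    rw [Set.mem_setOf_eq] at h1 h2
    omega
  have hInd : Indep (⨆ q ∈ {q : ℕ × ℕ | q.1 < t - 1}, msp q)
      (⨆ q ∈ {q : ℕ × ℕ | q.1 = t - 1}, msp q) P :=
    indep_iSup_of_disjoint hle hiI hdisj
  have hindAC : P (A ∩ C) = P A * P C :=
    (hInd.indepSet_of_measurableSet hAMA hCMB).measure_inter_eq_mul
  -- the one-variable exponential moment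
  set c : ℝ≥0∞ := ENNReal.ofReal B with hc
  have hone : ∀ p : ℕ × ℕ, ∫⁻ ω, c ^ (ξ p ω) ∂P = ENNReal.ofReal (Real.exp (θ * (B - 1))) := by
    intro p
    rw [← lintegral_map (measurable_of_countable _) (hmeas p), lintegral_countable']
    have hpt' : ∀ n : ℕ, (P.map (ξ p)) {n}
        = ENNReal.ofReal (Real.exp (-θ) * θ ^ n / n.factorial) := by
      intro n
      rw [Measure.map_apply (hmeas p) (measurableSet_singleton n)]
      exact hdist p n
    have hterm : ∀ n : ℕ, c ^ n * (P.map (ξ p)) {n}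
        = ENNReal.ofReal (Real.exp (-θ) * ((B * θ) ^ n / n.factorial)) := by
      intro n
      rw [hpt' n, hc, ← ENNReal.ofReal_pow hB0.le,
        ← ENNReal.ofReal_mul (pow_nonneg hB0.le n)]
      congr 1
      rw [mul_pow]
      field_simp
    simp_rw [hterm]
    rw [← ENNReal.ofReal_tsum_of_nonneg]
    · congr 1
      rw [tsum_mul_left]
      have hexp : (∑' n : ℕ, (B * θ) ^ n / (n.factorial : ℝ)) = Real.exp (B * θ) := by
        rw [Real.exp_eq_exp_ℝ, NormedSpace.exp_eq_tsum_div]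
      rw [hexp, ← Real.exp_add]
      ring_nf
    · intro n
      positivity
    · exact (Real.summable_pow_div_factorial (B * θ)).mul_left _
  -- product of exponential moments
  have hprod : ∀ n : ℕ, ∫⁻ ω, ∏ i ∈ Finset.range n, c ^ (ξ (t - 1, i) ω) ∂P
      = (ENNReal.ofReal (Real.exp (θ * (B - 1)))) ^ n := by
    intro n
    induction n with
    | zero => simp
    | succ n ihn =>
      have hsplit : ∀ ω : Ω, ∏ i ∈ Finset.range (n + 1), c ^ (ξ (t - 1, i) ω)
          = (∏ i ∈ Finset.range n, c ^ (ξ (t - 1, i) ω)) * c ^ (ξ (t - 1, n) ω) :=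
        fun ω => Finset.prod_range_succ _ n
      simp_rw [hsplit]
      have hdisj2 : Disjoint {q : ℕ × ℕ | q.1 = t - 1 ∧ q.2 < n} {((t - 1 : ℕ), n)} := by
        rw [Set.disjoint_left]
        rintro q hq rfl
        exact lt_irrefl n hq.2
      have hI := indep_iSup_of_disjoint hle hiI hdisj2
      rw [show (⨆ q ∈ ({((t - 1 : ℕ), n)} : Set (ℕ × ℕ)), msp q) = msp (t - 1, n) by simp] at hI
      rw [lintegral_mul_eq_lintegral_mul_lintegral_of_independent_measurableSpace
        (iSup₂_le fun q _ => hle q) (hle _) hI ?_ ?_]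
      · rw [ihn, hone, pow_succ]
      · apply Finset.measurable_prod
        intro i hi
        have h1 : Measurable[msp (t - 1, i)] (ξ (t - 1, i)) := Measurable.of_comap_le le_rfl
        exact (measurable_of_countable (fun k : ℕ => c ^ k)).comp
          (h1.mono (le_biSup _ (show (t - 1, i) ∈ {q : ℕ × ℕ | q.1 = t - 1 ∧ q.2 < n}
            from ⟨rfl, Finset.mem_range.1 hi⟩)) le_rfl)
      · exact (measurable_of_countable (fun k : ℕ => c ^ k)).comp (Measurable.of_comap_le le_rfl)
  -- the exponential moment of S
  have hgS : ∀ ω, ∏ i ∈ Finset.range m, c ^ (ξ (t - 1, i) ω) = c ^ (S ω) := by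
    intro ω
    rw [hSdef]
    exact Finset.prod_pow_eq_pow_sum _ _ _
  have hES : ∫⁻ ω, c ^ (S ω) ∂P = (ENNReal.ofReal (Real.exp (θ * (B - 1)))) ^ m := by
    rw [← hprod m]
    exact lintegral_congr fun ω => (hgS ω).symm
  have hESle : ∫⁻ ω, c ^ (S ω) ∂P ≤ ENNReal.ofReal (Real.exp (x * f * (B - 1))) := by
    rw [hES, ← ENNReal.ofReal_pow (Real.exp_pos _).le, ← Real.exp_nat_mul]
    apply ENNReal.ofReal_le_ofReal
    apply Real.exp_le_exp.2
    have h1 : (m : ℝ) ≤ x := Nat.floor_le hx0.le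
    have h2 : (0 : ℝ) ≤ B - 1 := by linarith
    have h3 : (0 : ℝ) ≤ (m : ℝ) := Nat.cast_nonneg m
    nlinarith [mul_le_mul h1 hfθ hθpos.le hx0.le]
  -- Markov / Chernoff bound for P C
  have hCsub : C ⊆ {ω | ENNReal.ofReal (Real.exp (a * Real.log B)) ≤ c ^ (S ω)} := by
    intro ω hω
    have hlogB : 0 < Real.log B := Real.log_pos hB
    have h1 : Real.exp (a * Real.log B) ≤ B ^ (S ω) := by
      have h2 : Real.exp (a * Real.log B) ≤ Real.exp ((S ω : ℝ) * Real.log B) :=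
        Real.exp_le_exp.2 (mul_le_mul_of_nonneg_right (le_of_lt hω) hlogB.le)
      refine h2.trans_eq ?_
      rw [mul_comm, ← Real.rpow_def_of_pos hB0, Real.rpow_natCast]
    calc ENNReal.ofReal (Real.exp (a * Real.log B)) ≤ ENNReal.ofReal (B ^ (S ω)) :=
          ENNReal.ofReal_le_ofReal h1
      _ = c ^ (S ω) := ENNReal.ofReal_pow hB0.le _
  have hMar : ENNReal.ofReal (Real.exp (a * Real.log B)) * P C
      ≤ ENNReal.ofReal (Real.exp (x * f * (B - 1))) := by
    calc ENNReal.ofReal (Real.exp (a * Real.log B)) * P C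
        ≤ ENNReal.ofReal (Real.exp (a * Real.log B))
          * P {ω | ENNReal.ofReal (Real.exp (a * Real.log B)) ≤ c ^ (S ω)} :=
          mul_le_mul_right (measure_mono hCsub) _
      _ ≤ ∫⁻ ω, c ^ (S ω) ∂P :=
          mul_meas_ge_le_lintegral ((measurable_of_countable (fun k : ℕ => c ^ k)).comp hSamb) _
      _ ≤ _ := hESle
  set ε₀ : ℝ := Real.exp (-(x * f * B * (Real.log B - 1))) with hε₀
  have hPC : P C ≤ ENNReal.ofReal ε₀ := by
    have hu0 : ENNReal.ofReal (Real.exp (a * Real.log B)) ≠ 0 := by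
      simp [ENNReal.ofReal_eq_zero, not_le, Real.exp_pos]
    have huT : ENNReal.ofReal (Real.exp (a * Real.log B)) ≠ ⊤ := ENNReal.ofReal_ne_top
    have hfac : ENNReal.ofReal (Real.exp (x * f * (B - 1)))
        ≤ ENNReal.ofReal ε₀ * ENNReal.ofReal (Real.exp (a * Real.log B)) := by
      rw [← ENNReal.ofReal_mul (Real.exp_pos _).le, ← Real.exp_add]
      apply ENNReal.ofReal_le_ofReal
      apply Real.exp_le_exp.2
      have hxf : 0 < x * f := mul_pos hx0 hf0
      rw [ha]
      nlinarith
    have := hMar.trans hfac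
    rw [mul_comm (ENNReal.ofReal (Real.exp (a * Real.log B)))] at this
    exact (ENNReal.mul_le_mul_iff_left hu0 huT).1 this
  -- assemble
  set ε : ℝ := (B / (B - 1)) * ε₀ with hε
  have hε₀pos : 0 < ε₀ := Real.exp_pos _
  have hεge : ε₀ ≤ ε := by
    rw [hε]
    nth_rewrite 1 [← one_mul ε₀]
    apply mul_le_mul_of_nonneg_right _ hε₀pos.le
    rw [le_div_iff₀ (by linarith)]
    linarith
  rw [cond_apply hAmeas]
  by_cases hcase : 1 - ε ≤ 0
  · rw [ENNReal.ofReal_of_nonpos hcase]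
    exact bot_le
  push_neg at hcase
  have hεlt1 : ε < 1 := by linarith
  have hεpos : 0 < ε := lt_of_lt_of_le hε₀pos hεge
  have hPA0 : P A ≠ 0 := hpos.ne'
  have hPAT : P A ≠ ⊤ := measure_ne_top P A
  have hkey : ENNReal.ofReal (1 - ε) * P A ≤ P (A ∩ T) := by
    have h1 : P A ≤ P (A ∩ T) + P (A ∩ Tᶜ) := by
      conv_lhs => rw [← Set.inter_union_compl A T]
      exact measure_union_le _ _
    have h2 : P (A ∩ Tᶜ) ≤ ENNReal.ofReal ε * P A := by
      calc P (A ∩ Tᶜ) ≤ P (A ∩ C) := measure_mono hsub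
        _ = P A * P C := hindAC
        _ ≤ P A * ENNReal.ofReal ε := by
            exact mul_le_mul_right (hPC.trans (ENNReal.ofReal_le_ofReal hεge)) _
        _ = ENNReal.ofReal ε * P A := mul_comm _ _
    have h3 : ENNReal.ofReal (1 - ε) = 1 - ENNReal.ofReal ε := by
      rw [ENNReal.ofReal_sub _ hεpos.le, ENNReal.ofReal_one]
    rw [h3, ENNReal.sub_mul (fun _ _ => hPAT), one_mul, tsub_le_iff_right]
    calc P A ≤ P (A ∩ T) + P (A ∩ Tᶜ) := h1
      _ ≤ P (A ∩ T) + ENNReal.ofReal ε * P A := add_le_add_right h2 _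
  calc ENNReal.ofReal (1 - ε) = (P A)⁻¹ * (ENNReal.ofReal (1 - ε) * P A) := by
        rw [mul_comm (ENNReal.ofReal (1 - ε)) (P A), ← mul_assoc,
          ENNReal.inv_mul_cancel hPA0 hPAT, one_mul]
    _ ≤ (P A)⁻¹ * P (A ∩ T) := mul_le_mul_right hkey _
end

section
/- Let 0 < b < 1, let θ ≥ f ≥ 1/(1-b+b·log b), and assume b·f > 1. Then for every nonnegative integer τ with P(𝒳_τ ≥ b^τ f^τ) > 0, P(𝒳_t ≥ b^t f^t for all t ≥ τ | 𝒳_τ ≥ b^τ f^τ) ≥ 1 - f·(1 + 1/log(b·f))·e^{-f·(1-b+b·log b)}; in particular the right-hand side does not depend on τ. -/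
open MeasureTheory ProbabilityTheory

section GWAux
set_option linter.unusedSectionVars false
open Finset

lemma gw_inv_bound {f c L : ℝ} (hc : 0 < c) (hL : 0 < L) (hfc : 1 ≤ f * c) (hf1 : 1 ≤ f) :
    (1 - Real.exp (-(f * c * L)))⁻¹ ≤ f * (1 + 1 / L) := by
  set x := f * c * L with hx_def
  have hf0 : 0 < f := lt_of_lt_of_le zero_lt_one hf1
  have hx : 0 < x := by
    have : 0 < f * c := lt_of_lt_of_le zero_lt_one hfc
    positivity
  have hxL : L ≤ x := by
    calc L = 1 * L := (one_mul L).symm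
      _ ≤ (f * c) * L := mul_le_mul_of_nonneg_right hfc hL.le
  have h2 : 1 + x ≤ Real.exp x := by linarith [Real.add_one_le_exp x]
  have h1 : Real.exp (-x) ≤ (1 + x)⁻¹ := by
    rw [Real.exp_neg]
    exact inv_anti₀ (by linarith) h2
  have h3 : x / (1 + x) ≤ 1 - Real.exp (-x) := by
    have he : 1 - (1 + x)⁻¹ = x / (1 + x) := by field_simp; ring
    linarith [he]
  have h4 : (1 - Real.exp (-x))⁻¹ ≤ (x / (1 + x))⁻¹ :=
    inv_anti₀ (by positivity) h3
  have h5 : (x / (1 + x))⁻¹ = 1 + 1 / x := by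
    rw [inv_div]
    field_simp
    ring
  have h6 : 1 + 1 / x ≤ 1 + 1 / L := by
    have := one_div_le_one_div_of_le hL hxL
    linarith
  have h7 : 1 + 1 / L ≤ f * (1 + 1 / L) := by
    nlinarith [one_div_pos.mpr hL]
  calc (1 - Real.exp (-x))⁻¹ ≤ (x / (1 + x))⁻¹ := h4
    _ = 1 + 1 / x := h5
    _ ≤ 1 + 1 / L := h6
    _ ≤ f * (1 + 1 / L) := h7

lemma gw_tail_sum {b f : ℝ} (hb0 : 0 < b) (hb1 : b < 1)
    (hf : 1 / (1 - b + b * Real.log b) ≤ f) (hbf : 1 < b * f)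
    (hc : 0 < 1 - b + b * Real.log b) (τ : ℕ) :
    ∑' s : ℕ, ENNReal.ofReal
        (Real.exp (-((b*f)^(τ+s) * (f * (1 - b + b * Real.log b)))))
      ≤ ENNReal.ofReal (f * (1 + 1 / Real.log (b * f)) *
          Real.exp (-(f * (1 - b + b * Real.log b)))) := by
  set c := 1 - b + b * Real.log b with hc_def
  set L := Real.log (b * f) with hL_def
  have hL : 0 < L := Real.log_pos hbf
  have hfc : 1 ≤ f * c := by
    rw [div_le_iff₀ hc] at hf
    linarith
  have hf1 : 1 ≤ f := by nlinarith
  have hf0 : 0 < f := lt_of_lt_of_le zero_lt_one hf1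
  set q : ℝ := Real.exp (-(f * c * L)) with hq_def
  have hq0 : 0 ≤ q := Real.exp_nonneg _
  have hq1 : q < 1 := by
    rw [hq_def]
    apply Real.exp_lt_one_iff.mpr
    have : 0 < f * c := lt_of_lt_of_le zero_lt_one hfc
    nlinarith
  -- per-term bound
  have hterm : ∀ s : ℕ, Real.exp (-((b*f)^(τ+s) * (f * c)))
      ≤ Real.exp (-(f * c)) * q ^ s := by
    intro s
    have hbf0 : (0:ℝ) < b * f := by linarith
    have hpow1 : (b*f)^s ≤ (b*f)^(τ+s) := pow_le_pow_right₀ hbf.le (Nat.le_add_left s τ)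
    have hpow2 : 1 + (s : ℝ) * L ≤ (b*f)^s := by
      have he : (b*f)^s = Real.exp ((s : ℝ) * L) := by
        rw [hL_def, Real.exp_nat_mul, Real.exp_log hbf0]
      rw [he]
      linarith [Real.add_one_le_exp ((s : ℝ) * L)]
    have hq_pow : q ^ s = Real.exp (-((s:ℝ) * (f * c * L))) := by
      rw [hq_def, ← Real.exp_nat_mul]
      ring_nf
    rw [hq_pow, ← Real.exp_add]
    apply Real.exp_le_exp.mpr
    have hfc0 : (0:ℝ) ≤ f * c := by linarith
    nlinarith [mul_le_mul_of_nonneg_right (le_trans hpow2 hpow1) hfc0,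
      Nat.cast_nonneg (α := ℝ) s]
  calc ∑' s : ℕ, ENNReal.ofReal (Real.exp (-((b*f)^(τ+s) * (f * c))))
      ≤ ∑' s : ℕ, ENNReal.ofReal (Real.exp (-(f * c)) * q ^ s) :=
        ENNReal.tsum_le_tsum fun s => ENNReal.ofReal_le_ofReal (hterm s)
    _ = ∑' s : ℕ, ENNReal.ofReal (Real.exp (-(f * c))) * (ENNReal.ofReal q) ^ s := by
        congr 1
        funext s
        rw [ENNReal.ofReal_mul (Real.exp_nonneg _), ENNReal.ofReal_pow hq0]
    _ = ENNReal.ofReal (Real.exp (-(f * c))) * (1 - ENNReal.ofReal q)⁻¹ := by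
        rw [ENNReal.tsum_mul_left, ENNReal.tsum_geometric]
    _ = ENNReal.ofReal (Real.exp (-(f * c))) * ENNReal.ofReal ((1 - q)⁻¹) := by
        congr 1
        rw [← ENNReal.ofReal_one, ← ENNReal.ofReal_sub _ hq0,
          ← ENNReal.ofReal_inv_of_pos (by linarith)]
    _ = ENNReal.ofReal (Real.exp (-(f * c)) * (1 - q)⁻¹) :=
        (ENNReal.ofReal_mul (Real.exp_nonneg _)).symm
    _ ≤ ENNReal.ofReal (f * (1 + 1 / L) * Real.exp (-(f * c))) := by
        apply ENNReal.ofReal_le_ofReal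
        have := gw_inv_bound hc hL hfc hf1
        calc Real.exp (-(f * c)) * (1 - q)⁻¹
            ≤ Real.exp (-(f * c)) * (f * (1 + 1 / L)) :=
              mul_le_mul_of_nonneg_left this (Real.exp_nonneg _)
          _ = f * (1 + 1 / L) * Real.exp (-(f * c)) := by ring


lemma gw_c_pos {b : ℝ} (hb0 : 0 < b) (hb1 : b < 1) : 0 < 1 - b + b * Real.log b := by
  have h := Real.log_lt_sub_one_of_pos (x := b⁻¹) (by positivity) (by
    intro h; rw [inv_eq_one] at h; linarith)
  rw [Real.log_inv] at h
  have hbb : b * b⁻¹ = 1 := mul_inv_cancel₀ (ne_of_gt hb0)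
  nlinarith [mul_lt_mul_of_pos_left h hb0]

lemma gw_chernoff {b lam a : ℝ} (hb0 : 0 < b) (hb1 : b < 1) (hlam : 0 ≤ lam)
    (ha : a ≤ b * lam) :
    ∑ k ∈ Finset.range (Nat.ceil a), Real.exp (-lam) * lam ^ k / (Nat.factorial k)
      ≤ Real.exp (-(lam * (1 - b + b * Real.log b))) := by
  have hlb : Real.log b ≤ 0 := Real.log_nonpos hb0.le hb1.le
  have hsplit : Real.exp (-lam - b * lam * Real.log b)
      = Real.exp (-lam) * Real.exp (-(b * lam * Real.log b)) := by
    rw [← Real.exp_add]; ring_nf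
  have key : ∀ k ∈ Finset.range (Nat.ceil a),
      Real.exp (-lam) * lam ^ k / (Nat.factorial k)
        ≤ Real.exp (-lam - b * lam * Real.log b) * ((b * lam) ^ k / (Nat.factorial k)) := by
    intro k hk
    have hka : (k : ℝ) < a := Nat.lt_ceil.mp (Finset.mem_range.mp hk)
    have hkb : (k : ℝ) ≤ b * lam := le_of_lt (lt_of_lt_of_le hka ha)
    have hlamk : lam ^ k = (b * lam) ^ k * Real.exp (-(k * Real.log b)) := by
      have h0 : lam = (b * lam) * Real.exp (-Real.log b) := by
        rw [← Real.log_inv, Real.exp_log (by positivity)]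
        field_simp
      calc lam ^ k = ((b * lam) * Real.exp (-Real.log b)) ^ k := by rw [← h0]
        _ = (b * lam) ^ k * (Real.exp (-Real.log b)) ^ k := mul_pow _ _ _
        _ = (b * lam) ^ k * Real.exp (-(k * Real.log b)) := by
            rw [← Real.exp_nat_mul]; ring_nf
    have hexp : Real.exp (-(k * Real.log b)) ≤ Real.exp (-(b * lam * Real.log b)) := by
      apply Real.exp_le_exp.mpr; nlinarith
    calc Real.exp (-lam) * lam ^ k / (Nat.factorial k)
        = (Real.exp (-lam) * (b * lam) ^ k / (Nat.factorial k)) * Real.exp (-(k * Real.log b)) := by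
          rw [hlamk]; ring
      _ ≤ (Real.exp (-lam) * (b * lam) ^ k / (Nat.factorial k)) * Real.exp (-(b * lam * Real.log b)) := by
          apply mul_le_mul_of_nonneg_left hexp (by positivity)
      _ = Real.exp (-lam - b * lam * Real.log b) * ((b * lam) ^ k / (Nat.factorial k)) := by
          rw [hsplit]; ring
  calc ∑ k ∈ Finset.range (Nat.ceil a), Real.exp (-lam) * lam ^ k / (Nat.factorial k)
      ≤ ∑ k ∈ Finset.range (Nat.ceil a),
          Real.exp (-lam - b * lam * Real.log b) * ((b * lam) ^ k / (Nat.factorial k)) :=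
        Finset.sum_le_sum key
    _ = Real.exp (-lam - b * lam * Real.log b)
          * ∑ k ∈ Finset.range (Nat.ceil a), (b * lam) ^ k / (Nat.factorial k) := by
        rw [Finset.mul_sum]
    _ ≤ Real.exp (-lam - b * lam * Real.log b) * Real.exp (b * lam) := by
        apply mul_le_mul_of_nonneg_left (Real.sum_le_exp_of_nonneg (by positivity) _)
          (Real.exp_nonneg _)
    _ = Real.exp (-(lam * (1 - b + b * Real.log b))) := by
        rw [← Real.exp_add]; ring_nf

lemma gw_conv {Ω : Type*} [MeasurableSpace Ω] (P : Measure Ω) [IsProbabilityMeasure P]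
    (θ : ℝ) (hθ : 0 < θ) (ξ : ℕ × ℕ → Ω → ℕ)
    (hmeas : ∀ p, Measurable (ξ p))
    (hind : iIndepFun ξ P)
    (hpmf : ∀ p k, P {ω | ξ p ω = k}
      = ENNReal.ofReal (Real.exp (-θ) * θ ^ k / (Nat.factorial k)))
    (t m k : ℕ) :
    P {ω | ∑ i ∈ Finset.range m, ξ (t, i) ω = k}
      = ENNReal.ofReal (Real.exp (-((m : ℝ) * θ)) * ((m : ℝ) * θ) ^ k / (Nat.factorial k)) := by
  induction m generalizing k with
  | zero =>
    simp only [Finset.range_zero, Finset.sum_empty, Nat.cast_zero, zero_mul]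
    rcases Nat.eq_zero_or_pos k with hk | hk
    · subst hk
      simp [Set.setOf_true, measure_univ, Real.exp_zero]
    · have h0 : {ω : Ω | 0 = k} = ∅ := by
        ext ω; simp; omega
      rw [h0, measure_empty, zero_pow hk.ne']
      simp
  | succ m ih =>
    -- independence of partial sum and next term
    have hIF : IndepFun (fun ω => ∑ i ∈ Finset.range m, ξ (t, i) ω) (ξ (t, m)) P := by
      have hinj : Function.Injective (fun i : ℕ => ((t, i) : ℕ × ℕ)) := by
        intro a b hab; simpa using hab
      have hnm : ((t, m) : ℕ × ℕ) ∉ (Finset.range m).image (fun i => ((t, i) : ℕ × ℕ)) := by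
        simp
      have h := hind.indepFun_finsetSum_of_notMem hmeas hnm
      have hsum : (∑ j ∈ (Finset.range m).image (fun i => ((t, i) : ℕ × ℕ)), ξ j)
          = fun ω => ∑ i ∈ Finset.range m, ξ (t, i) ω := by
        funext ω
        rw [Finset.sum_apply]  -- might not apply; sum of functions
        rw [Finset.sum_image (fun a _ b _ h => hinj h)]
      rwa [hsum] at h
    -- decompose the event
    have hset : {ω : Ω | ∑ i ∈ Finset.range (m + 1), ξ (t, i) ω = k}
        = ⋃ j ∈ Finset.range (k + 1),
            ((fun ω => ∑ i ∈ Finset.range m, ξ (t, i) ω) ⁻¹' {j} ∩ ξ (t, m) ⁻¹' {k - j}) := by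
      ext ω
      simp only [Set.mem_setOf_eq, Set.mem_iUnion, Finset.mem_range, Set.mem_inter_iff,
        Set.mem_preimage, Set.mem_singleton_iff, Finset.sum_range_succ]
      constructor
      · intro h
        exact ⟨∑ i ∈ Finset.range m, ξ (t, i) ω, by omega, rfl, by omega⟩
      · rintro ⟨j, hj, h1, h2⟩
        omega
    have hmS : Measurable (fun ω => ∑ i ∈ Finset.range m, ξ (t, i) ω) := by
      apply Finset.measurable_sum
      exact fun i _ => hmeas (t, i)
    rw [hset, measure_biUnion_finset]
    · have hterm : ∀ j ∈ Finset.range (k + 1),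
          P ((fun ω => ∑ i ∈ Finset.range m, ξ (t, i) ω) ⁻¹' {j} ∩ ξ (t, m) ⁻¹' {k - j})
          = ENNReal.ofReal ((Real.exp (-((m : ℝ) * θ)) * ((m : ℝ) * θ) ^ j / (Nat.factorial j))
              * (Real.exp (-θ) * θ ^ (k - j) / (Nat.factorial (k - j)))) := by
        intro j hj
        rw [hIF.measure_inter_preimage_eq_mul _ _ (measurableSet_singleton j)
          (measurableSet_singleton (k - j))]
        have e1 : (fun ω => ∑ i ∈ Finset.range m, ξ (t, i) ω) ⁻¹' {j}
            = {ω : Ω | ∑ i ∈ Finset.range m, ξ (t, i) ω = j} := rfl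
        have e2 : ξ (t, m) ⁻¹' {k - j} = {ω : Ω | ξ (t, m) ω = k - j} := rfl
        rw [e1, e2, ih j, hpmf]
        rw [← ENNReal.ofReal_mul (by positivity)]
      rw [Finset.sum_congr rfl hterm]
      rw [← ENNReal.ofReal_sum_of_nonneg (fun j _ => by positivity)]
      congr 1
      -- real binomial identity
      have hchoose : ∀ j ∈ Finset.range (k + 1),
          (Real.exp (-((m : ℝ) * θ)) * ((m : ℝ) * θ) ^ j / (Nat.factorial j))
              * (Real.exp (-θ) * θ ^ (k - j) / (Nat.factorial (k - j)))
          = Real.exp (-(((m : ℝ) + 1) * θ)) / (Nat.factorial k)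
              * (((m : ℝ) * θ) ^ j * θ ^ (k - j) * (Nat.choose k j)) := by
        intro j hj
        have hjk : j ≤ k := by simpa using Nat.lt_succ_iff.mp (Finset.mem_range.mp hj)
        have hfact : ((Nat.choose k j : ℝ)) * (Nat.factorial j) * (Nat.factorial (k - j))
            = (Nat.factorial k) := by
          exact_mod_cast congrArg (Nat.cast : ℕ → ℝ)
            (Nat.choose_mul_factorial_mul_factorial hjk)
        have hexp : Real.exp (-((m : ℝ) * θ)) * Real.exp (-θ)
            = Real.exp (-(((m : ℝ) + 1) * θ)) := by
          rw [← Real.exp_add]; ring_nf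
        have hj0 : (0:ℝ) < (Nat.factorial j : ℝ) := by positivity
        have hkj0 : (0:ℝ) < (Nat.factorial (k - j) : ℝ) := by positivity
        have hk0 : (0:ℝ) < (Nat.factorial k : ℝ) := by positivity
        rw [← hexp, ← hfact]
        have hc0 : (0:ℝ) < (Nat.choose k j : ℝ) := by exact_mod_cast Nat.choose_pos hjk
        field_simp
      rw [Finset.sum_congr rfl hchoose, ← Finset.mul_sum, ← add_pow]
      push_cast
      ring
    · -- pairwise disjoint
      intro i hi j hj hij
      simp only [Function.onFun]
      apply Set.disjoint_left.mpr
      rintro ω ⟨h1, _⟩ ⟨h2, _⟩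
      simp only [Set.mem_preimage, Set.mem_singleton_iff] at h1 h2
      exact hij (h1 ▸ h2 ▸ rfl)
    · intro j hj
      exact (hmS (measurableSet_singleton j)).inter (hmeas (t, m) (measurableSet_singleton (k - j)))

variable {Ω : Type*} [MeasurableSpace Ω]

/-- σ-algebra generated by the first `T` rows of the array `ξ`. -/
def gwSig (ξ : ℕ × ℕ → Ω → ℕ) (T : ℕ) : MeasurableSpace Ω :=
  ⨆ p ∈ {p : ℕ × ℕ | p.1 < T}, MeasurableSpace.comap (ξ p) inferInstance

lemma gwSig_le (ξ : ℕ × ℕ → Ω → ℕ) (hmeas : ∀ p, Measurable (ξ p)) (T : ℕ) :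
    gwSig ξ T ≤ ‹MeasurableSpace Ω› := by
  apply iSup₂_le
  intro p _
  exact (hmeas p).comap_le

lemma gwSig_mono (ξ : ℕ × ℕ → Ω → ℕ) {T T' : ℕ} (h : T ≤ T') : gwSig ξ T ≤ gwSig ξ T' := by
  apply iSup₂_le
  intro p hp
  exact le_iSup₂_of_le p (lt_of_lt_of_le hp h) le_rfl

lemma gwSig_meas_row (ξ : ℕ × ℕ → Ω → ℕ) {t T : ℕ} (h : t < T) (i : ℕ) :
    Measurable[gwSig ξ T] (ξ (t, i)) := by
  rw [measurable_iff_comap_le]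
  exact le_iSup₂_of_le (t, i) h le_rfl

lemma gwSig_meas_X (ξ : ℕ × ℕ → Ω → ℕ) (X : ℕ → Ω → ℕ)
    (hX0 : ∀ ω, X 0 ω = 1) (hXrec : ∀ t ω, X (t + 1) ω = ∑ i ∈ Finset.range (X t ω), ξ (t, i) ω)
    (t : ℕ) : Measurable[gwSig ξ t] (X t) := by
  induction t with
  | zero =>
    have : X 0 = fun _ => 1 := funext hX0
    rw [this]
    exact @measurable_const _ _ _ (gwSig ξ 0) _
  | succ t ih =>
    apply @measurable_to_countable' ℕ Ω _ _ (gwSig ξ (t+1)) (X (t+1))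
    intro k
    have hset : X (t + 1) ⁻¹' {k}
        = ⋃ m : ℕ, (X t ⁻¹' {m} ∩ {ω | ∑ i ∈ Finset.range m, ξ (t, i) ω = k}) := by
      ext ω
      simp only [Set.mem_preimage, Set.mem_singleton_iff, Set.mem_iUnion, Set.mem_inter_iff,
        Set.mem_setOf_eq, hXrec t ω]
      constructor
      · intro h; exact ⟨X t ω, rfl, h⟩
      · rintro ⟨m, rfl, h⟩; exact h
    rw [hset]
    apply MeasurableSet.iUnion
    intro m
    have h1 : MeasurableSet[gwSig ξ (t + 1)] (X t ⁻¹' {m}) :=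
      gwSig_mono ξ (Nat.le_succ t) _ (ih (measurableSet_singleton m))
    have h2 : Measurable[gwSig ξ (t + 1)] (fun ω => ∑ i ∈ Finset.range m, ξ (t, i) ω) := by
      apply Finset.measurable_sum
      intro i _
      exact gwSig_meas_row ξ (Nat.lt_succ_self t) i
    exact h1.inter (h2 (measurableSet_singleton k))

lemma gwSig_indep (P : Measure Ω) [IsProbabilityMeasure P]
    (ξ : ℕ × ℕ → Ω → ℕ) (hmeas : ∀ p, Measurable (ξ p))
    (hind : iIndepFun ξ P) (T : ℕ)
    {A B : Set Ω} (hA : MeasurableSet[gwSig ξ T] A)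
    {S : Ω → ℕ} (hS : Measurable[⨆ p ∈ {p : ℕ × ℕ | p.1 < T}ᶜ, MeasurableSpace.comap (ξ p) inferInstance] S)
    {V : Set ℕ} (hB : B = S ⁻¹' V) :
    P (A ∩ B) = P A * P B := by
  have hiI : iIndep (fun p => MeasurableSpace.comap (ξ p) inferInstance) P := by
    rwa [iIndepFun_iff_iIndep] at hind
  have h := indep_biSup_compl (fun p => (hmeas p).comap_le) hiI {p : ℕ × ℕ | p.1 < T}
  rw [Indep_iff] at h
  apply h
  · exact hA
  · subst hB
    exact hS (by trivial)

lemma gw_step (P : Measure Ω) [IsProbabilityMeasure P]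
    (θ : ℝ) (hθ : 0 < θ) (ξ : ℕ × ℕ → Ω → ℕ) (X : ℕ → Ω → ℕ)
    (hmeas : ∀ p, Measurable (ξ p))
    (hind : iIndepFun ξ P)
    (hpmf : ∀ p k, P {ω | ξ p ω = k}
      = ENNReal.ofReal (Real.exp (-θ) * θ ^ k / (Nat.factorial k)))
    (hX0 : ∀ ω, X 0 ω = 1) (hXrec : ∀ t ω, X (t + 1) ω = ∑ i ∈ Finset.range (X t ω), ξ (t, i) ω)
    (b f : ℝ) (hb0 : 0 < b) (hb1 : b < 1) (hfθ : f ≤ θ) (hf0 : 0 < f)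
    (τ t : ℕ) (hτt : τ ≤ t) :
    P ({ω | (b*f)^τ ≤ ((X τ ω : ℕ) : ℝ)} ∩ {ω | (b*f)^t ≤ ((X t ω : ℕ) : ℝ)}
        ∩ {ω | ((X (t+1) ω : ℕ) : ℝ) < (b*f)^(t+1)})
      ≤ P {ω | (b*f)^τ ≤ ((X τ ω : ℕ) : ℝ)}
          * ENNReal.ofReal (Real.exp (-((b*f)^t * (f * (1 - b + b * Real.log b))))) := by
  set c := 1 - b + b * Real.log b with hc_def
  have hXm : ∀ s, Measurable (X s) := fun s =>
    (gwSig_meas_X ξ X hX0 hXrec s).mono (gwSig_le ξ hmeas s) le_rfl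
  set r : ℝ := (b*f)^(t+1) with hr_def
  set Aτ : Set Ω := {ω | (b*f)^τ ≤ ((X τ ω : ℕ) : ℝ)} with hAτ_def
  set B : ℕ → Set Ω := fun m => Aτ ∩ {ω | (b*f)^t ≤ ((X t ω : ℕ) : ℝ)} ∩ X t ⁻¹' {m} with hB_def
  set D : ℕ → Set Ω := fun m =>
    B m ∩ {ω | ((∑ i ∈ Finset.range m, ξ (t, i) ω : ℕ) : ℝ) < r} with hD_def
  set κ : ENNReal := ENNReal.ofReal (Real.exp (-((b*f)^t * (f * c)))) with hκ_def
  -- step 1: the event is contained in ⋃ m, D m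
  have hsub : Aτ ∩ {ω | (b*f)^t ≤ ((X t ω : ℕ) : ℝ)} ∩ {ω | ((X (t+1) ω : ℕ) : ℝ) < r}
      ⊆ ⋃ m : ℕ, D m := by
    intro ω hω
    refine Set.mem_iUnion.mpr ⟨X t ω, ⟨hω.1, rfl⟩, ?_⟩
    have := hω.2
    simp only [Set.mem_setOf_eq] at this ⊢
    rwa [hXrec t ω] at this
  -- step 2: product structure of D m
  have hDm : ∀ m : ℕ, P (D m)
      = P (B m) * P {ω | ((∑ i ∈ Finset.range m, ξ (t, i) ω : ℕ) : ℝ) < r} := by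
    intro m
    apply gwSig_indep P ξ hmeas hind t
      (A := B m) (B := {ω | ((∑ i ∈ Finset.range m, ξ (t, i) ω : ℕ) : ℝ) < r})
      (S := fun ω => ∑ i ∈ Finset.range m, ξ (t, i) ω)
      (V := {k : ℕ | (k : ℝ) < r})
    · have h1 : MeasurableSet[gwSig ξ t] (Aτ) := by
        have := (gwSig_meas_X ξ X hX0 hXrec τ).mono (le_refl _) (le_refl _)
        have h2 : MeasurableSet[gwSig ξ τ] (X τ ⁻¹' {n : ℕ | (b*f)^τ ≤ (n : ℝ)}) :=
          (gwSig_meas_X ξ X hX0 hXrec τ) (by trivial)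
        exact gwSig_mono ξ hτt _ h2
      have h2 : MeasurableSet[gwSig ξ t] ({ω | (b*f)^t ≤ ((X t ω : ℕ) : ℝ)}) :=
        (gwSig_meas_X ξ X hX0 hXrec t) (show MeasurableSet {n : ℕ | (b*f)^t ≤ (n : ℝ)} from trivial)
      have h3 : MeasurableSet[gwSig ξ t] (X t ⁻¹' {m}) :=
        (gwSig_meas_X ξ X hX0 hXrec t) (by trivial)
      exact (h1.inter h2).inter h3
    · apply Finset.measurable_sum
      intro i _
      rw [measurable_iff_comap_le]
      exact le_iSup₂_of_le (t, i) (by simp) le_rfl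
    · rfl
  -- step 3: tail bound
  have htail : ∀ m : ℕ, P (D m) ≤ P (B m) * κ := by
    intro m
    rw [hDm m]
    by_cases hm : (b*f)^t ≤ (m : ℝ)
    · apply mul_le_mul_right
      have hev : {ω | ((∑ i ∈ Finset.range m, ξ (t, i) ω : ℕ) : ℝ) < r}
          ⊆ ⋃ k ∈ Finset.range (Nat.ceil r), {ω | ∑ i ∈ Finset.range m, ξ (t, i) ω = k} := by
        intro ω hω
        simp only [Set.mem_setOf_eq] at hω
        exact Set.mem_biUnion (Finset.mem_range.mpr (Nat.lt_ceil.mpr hω)) rfl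
      calc P {ω | ((∑ i ∈ Finset.range m, ξ (t, i) ω : ℕ) : ℝ) < r}
          ≤ ∑ k ∈ Finset.range (Nat.ceil r),
              P {ω | ∑ i ∈ Finset.range m, ξ (t, i) ω = k} :=
            le_trans (measure_mono hev) (measure_biUnion_finset_le _ _)
        _ = ∑ k ∈ Finset.range (Nat.ceil r),
              ENNReal.ofReal (Real.exp (-((m : ℝ) * θ)) * ((m : ℝ) * θ) ^ k / (Nat.factorial k)) := by
            exact Finset.sum_congr rfl fun k _ => gw_conv P θ hθ ξ hmeas hind hpmf t m k
        _ = ENNReal.ofReal (∑ k ∈ Finset.range (Nat.ceil r),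
              Real.exp (-((m : ℝ) * θ)) * ((m : ℝ) * θ) ^ k / (Nat.factorial k)) :=
            (ENNReal.ofReal_sum_of_nonneg (fun k _ => by positivity)).symm
        _ ≤ ENNReal.ofReal (Real.exp (-(((m : ℝ) * θ) * c))) := by
            apply ENNReal.ofReal_le_ofReal
            apply gw_chernoff hb0 hb1 (by positivity)
            -- r ≤ b * (m * θ)
            have hbf0 : 0 < b * f := by positivity
            have : r = (b*f)^t * (b * f) := by rw [hr_def]; ring
            rw [this]
            calc (b*f)^t * (b*f) ≤ (m : ℝ) * (b * f) :=
                  mul_le_mul_of_nonneg_right hm (le_of_lt hbf0)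
              _ ≤ b * ((m : ℝ) * θ) := by
                  nlinarith [mul_le_mul_of_nonneg_left hfθ
                    (mul_nonneg hb0.le (Nat.cast_nonneg (α := ℝ) m))]
        _ ≤ κ := by
            apply ENNReal.ofReal_le_ofReal
            apply Real.exp_le_exp.mpr
            have hc_pos : 0 < c := gw_c_pos hb0 hb1
            have h1 : (b*f)^t * f ≤ (m : ℝ) * θ := by
              calc (b*f)^t * f ≤ (m : ℝ) * f := mul_le_mul_of_nonneg_right hm hf0.le
                _ ≤ (m : ℝ) * θ := mul_le_mul_of_nonneg_left hfθ (Nat.cast_nonneg m)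
            nlinarith [mul_le_mul_of_nonneg_right h1 hc_pos.le]
    · have hBm : B m = ∅ := by
        ext ω
        simp only [hB_def, Set.mem_inter_iff, Set.mem_preimage, Set.mem_singleton_iff,
          Set.mem_setOf_eq, Set.mem_empty_iff_false, iff_false]
        rintro ⟨⟨_, h1⟩, h2⟩
        rw [h2] at h1
        exact hm h1
      rw [hBm]
      simp
  -- step 4: sum up
  calc P (Aτ ∩ {ω | (b*f)^t ≤ ((X t ω : ℕ) : ℝ)} ∩ {ω | ((X (t+1) ω : ℕ) : ℝ) < r})
      ≤ P (⋃ m : ℕ, D m) := measure_mono hsub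
    _ ≤ ∑' m : ℕ, P (D m) := measure_iUnion_le _
    _ ≤ ∑' m : ℕ, P (B m) * κ := ENNReal.tsum_le_tsum htail
    _ = (∑' m : ℕ, P (B m)) * κ := ENNReal.tsum_mul_right
    _ ≤ P Aτ * κ := by
        apply mul_le_mul_left
        have : (∑' m : ℕ, P (B m)) = P (⋃ m : ℕ, B m) := by
          rw [measure_iUnion]
          · intro i j hij
            simp only [Function.onFun]
            apply Set.disjoint_left.mpr
            rintro ω ⟨_, h1⟩ ⟨_, h2⟩
            simp only [Set.mem_preimage, Set.mem_singleton_iff] at h1 h2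
            exact hij (h1 ▸ h2 ▸ rfl)
          · intro m
            have hAm : MeasurableSet Aτ := by
              have he : Aτ = X τ ⁻¹' {n : ℕ | (b*f)^τ ≤ (n : ℝ)} := rfl
              rw [he]; exact hXm τ trivial
            have h2 : MeasurableSet {ω | (b*f)^t ≤ ((X t ω : ℕ) : ℝ)} := by
              have he : {ω | (b*f)^t ≤ ((X t ω : ℕ) : ℝ)}
                  = X t ⁻¹' {n : ℕ | (b*f)^t ≤ (n : ℝ)} := rfl
              rw [he]; exact hXm t trivial
            exact (hAm.inter h2).inter (hXm t (measurableSet_singleton m))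
        rw [this]
        apply measure_mono
        intro ω hω
        rcases Set.mem_iUnion.mp hω with ⟨m, ⟨hm1, _⟩, _⟩
        exact hm1

end GWAux

/-- **Lemma.** If `0 < b < 1`, `θ ≥ f ≥ 1/(1-b+b log b)`, `b f > 1`, then for every
nonnegative integer `τ` with `P(𝒳_τ ≥ b^τ f^τ) > 0`,
`P(𝒳_t ≥ b^t f^t for all t ≥ τ | 𝒳_τ ≥ b^τ f^τ)
  ≥ 1 - f (1 + 1/log(bf)) e^{-f(1-b+b log b)}`;
in particular the right-hand side does not depend on `τ`. -/
theorem stmt_5 {Ω : Type*} [MeasurableSpace Ω] (P : Measure Ω) [IsProbabilityMeasure P]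
    (θ : ℝ) (hθpos : 0 < θ) (ξ : ℕ × ℕ → Ω → ℕ) (X : ℕ → Ω → ℕ)
    (hGW : IsGWPoisson P θ ξ X)
    (b f : ℝ) (hb0 : 0 < b) (hb1 : b < 1)
    (hfθ : f ≤ θ) (hf : 1 / (1 - b + b * Real.log b) ≤ f) (hbf : 1 < b * f)
    (τ : ℕ) (hpos : 0 < P {ω | b ^ τ * f ^ τ ≤ (X τ ω : ℝ)}) :
    ENNReal.ofReal (1 - f * (1 + 1 / Real.log (b * f)) *
        Real.exp (-(f * (1 - b + b * Real.log b)))) ≤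
      (P[|{ω | b ^ τ * f ^ τ ≤ (X τ ω : ℝ)}])
        {ω | ∀ t : ℕ, τ ≤ t → b ^ t * f ^ t ≤ (X t ω : ℝ)} := by
  obtain ⟨hmeas, hind, hpmf, hX0, hXrec⟩ := hGW
  have hc : 0 < 1 - b + b * Real.log b := gw_c_pos hb0 hb1
  set c := 1 - b + b * Real.log b with hc_def
  have hL : 0 < Real.log (b * f) := Real.log_pos hbf
  have hfc : 1 ≤ f * c := by rw [div_le_iff₀ hc] at hf; linarith
  have hf1 : 1 ≤ f := by nlinarith
  have hf0 : 0 < f := lt_of_lt_of_le zero_lt_one hf1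
  have hε0 : 0 ≤ f * (1 + 1 / Real.log (b * f)) * Real.exp (-(f * c)) := by positivity
  have hXm : ∀ s, Measurable (X s) := fun s =>
    (gwSig_meas_X ξ X hX0 hXrec s).mono (gwSig_le ξ hmeas s) le_rfl
  -- rewrite sets with (b*f)^t
  simp only [← mul_pow]
  set Aτ : Set Ω := {ω | (b*f)^τ ≤ ((X τ ω : ℕ) : ℝ)} with hAτ_def
  set T : Set Ω := {ω | ∀ t : ℕ, τ ≤ t → (b*f)^t ≤ ((X t ω : ℕ) : ℝ)} with hT_def
  have hpos' : 0 < P Aτ := by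
    have : {ω | b ^ τ * f ^ τ ≤ ((X τ ω : ℕ) : ℝ)} = Aτ := by
      rw [hAτ_def, mul_pow]
    rwa [this] at hpos
  have hAmeas : MeasurableSet Aτ := by
    have he : Aτ = X τ ⁻¹' {n : ℕ | (b*f)^τ ≤ (n : ℝ)} := rfl
    rw [he]; exact hXm τ trivial
  have hTmeas : MeasurableSet T := by
    have he : T = ⋂ (t : ℕ), ⋂ (_ : τ ≤ t), X t ⁻¹' {n : ℕ | (b*f)^t ≤ (n : ℝ)} := by
      ext ω
      simp only [hT_def, Set.mem_setOf_eq, Set.mem_iInter, Set.mem_preimage]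
    rw [he]
    exact MeasurableSet.iInter fun t => MeasurableSet.iInter fun _ => hXm t trivial
  -- the bad event decomposition
  set D : ℕ → Set Ω := fun s =>
    Aτ ∩ {ω | (b*f)^(τ+s) ≤ ((X (τ+s) ω : ℕ) : ℝ)}
      ∩ {ω | ((X (τ+s+1) ω : ℕ) : ℝ) < (b*f)^(τ+s+1)} with hD_def
  have hsub : Aτ ∩ Tᶜ ⊆ ⋃ s : ℕ, D s := by
    rintro ω ⟨hωA, hωT⟩
    simp only [hT_def, Set.mem_compl_iff, Set.mem_setOf_eq, not_forall] at hωT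
    obtain ⟨t, ht, hfail⟩ := hωT
    have hex : ∃ n : ℕ, ¬((b*f)^(τ+n) ≤ ((X (τ+n) ω : ℕ) : ℝ)) := by
      refine ⟨t - τ, ?_⟩
      rwa [Nat.add_sub_cancel' ht]
    classical
    obtain ⟨n₁, hn₁⟩ : ∃ n₁, Nat.find hex = n₁ + 1 := by
      have h0 : 0 < Nat.find hex := (Nat.find_pos hex).mpr (by
        simp only [Nat.add_zero, not_not]
        exact hωA)
      exact ⟨Nat.find hex - 1, by omega⟩
    have hspec := Nat.find_spec hex
    rw [hn₁] at hspec
    have hmin := Nat.find_min hex (show n₁ < Nat.find hex by omega)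
    push_neg at hmin
    refine Set.mem_iUnion.mpr ⟨n₁, ⟨hωA, hmin⟩, ?_⟩
    simp only [Set.mem_setOf_eq]
    have h2 : τ + n₁ + 1 = τ + (n₁ + 1) := by omega
    rw [h2]
    exact not_le.mp hspec
  -- bound on the bad part
  have hbad : P (Aτ ∩ Tᶜ) ≤ P Aτ
      * ENNReal.ofReal (f * (1 + 1 / Real.log (b * f)) * Real.exp (-(f * c))) := by
    calc P (Aτ ∩ Tᶜ) ≤ P (⋃ s : ℕ, D s) := measure_mono hsub
      _ ≤ ∑' s : ℕ, P (D s) := measure_iUnion_le _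
      _ ≤ ∑' s : ℕ, P Aτ * ENNReal.ofReal (Real.exp (-((b*f)^(τ+s) * (f * c)))) := by
          apply ENNReal.tsum_le_tsum
          intro s
          exact gw_step P θ hθpos ξ X hmeas hind hpmf hX0 hXrec b f hb0 hb1 hfθ hf0
            τ (τ+s) (Nat.le_add_right τ s)
      _ = P Aτ * ∑' s : ℕ, ENNReal.ofReal (Real.exp (-((b*f)^(τ+s) * (f * c)))) :=
          ENNReal.tsum_mul_left
      _ ≤ P Aτ * ENNReal.ofReal (f * (1 + 1 / Real.log (b * f)) * Real.exp (-(f * c))) :=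
          mul_le_mul_right (gw_tail_sum hb0 hb1 hf hbf hc τ) _
  -- conclude via conditional probability
  have hPA0 : P Aτ ≠ 0 := hpos'.ne'
  have hPAtop : P Aτ ≠ ⊤ := measure_ne_top P Aτ
  have hcond : (P[|Aτ]) Tᶜ
      ≤ ENNReal.ofReal (f * (1 + 1 / Real.log (b * f)) * Real.exp (-(f * c))) := by
    rw [ProbabilityTheory.cond_apply hAmeas]
    calc (P Aτ)⁻¹ * P (Aτ ∩ Tᶜ)
        ≤ (P Aτ)⁻¹ * (P Aτ
            * ENNReal.ofReal (f * (1 + 1 / Real.log (b * f)) * Real.exp (-(f * c)))) :=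
          mul_le_mul_right hbad _
      _ = ENNReal.ofReal (f * (1 + 1 / Real.log (b * f)) * Real.exp (-(f * c))) := by
          rw [← mul_assoc, ENNReal.inv_mul_cancel hPA0 hPAtop, one_mul]
  have : IsProbabilityMeasure (P[|Aτ]) :=
    ProbabilityTheory.cond_isProbabilityMeasure hPA0
  have hcompl : (P[|Aτ]) T = 1 - (P[|Aτ]) Tᶜ := by
    have h := prob_compl_eq_one_sub (μ := P[|Aτ]) hTmeas.compl
    rw [compl_compl] at h
    rw [h]
  rw [hcompl]
  calc ENNReal.ofReal (1 - f * (1 + 1 / Real.log (b * f)) * Real.exp (-(f * c)))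
      = 1 - ENNReal.ofReal (f * (1 + 1 / Real.log (b * f)) * Real.exp (-(f * c))) := by
        rw [ENNReal.ofReal_sub _ hε0, ENNReal.ofReal_one]
    _ ≤ 1 - (P[|Aτ]) Tᶜ := tsub_le_tsub_left hcond 1
end

section
/- Let B > 1, θ > 0, and 1 ≤ x₁ < x₂ - 1. If the event {x₁ ≤ 𝒳_{t-1} ≤ x₂} has positive probability, then P(𝒳_t ≤ B·x₂·θ | x₁ ≤ 𝒳_{t-1} ≤ x₂) ≥ 1 - (B/(B-1))·e^{-x₁·θ·(B·log B - B + 1)}. -/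
open MeasureTheory ProbabilityTheory

lemma aux_iIndepFun_precomp {Ω ι ι' β : Type*} [MeasurableSpace Ω] [mβ : MeasurableSpace β]
    {μ : Measure Ω} {f : ι → Ω → β}
    (hf : iIndepFun f μ) (g : ι' → ι) (hg : Function.Injective g) :
    iIndepFun (fun i => f (g i)) μ := by
  rw [iIndepFun_iff_measure_inter_preimage_eq_mul] at hf ⊢
  intro S sets H
  classical
  have h1 := hf (S.image g)
    (sets := fun p => Function.extend g sets (fun _ => Set.univ) p) ?_
  · have h2 : (⋂ p ∈ S.image g, f p ⁻¹' Function.extend g sets (fun _ => Set.univ) p)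
        = ⋂ i ∈ S, f (g i) ⁻¹' sets i := by
      rw [Finset.set_biInter_finset_image]
      exact Set.iInter₂_congr fun i _ => by rw [hg.extend_apply]
    rw [h2, Finset.prod_image (fun i _ j _ h => hg h)] at h1
    rw [h1]
    exact Finset.prod_congr rfl fun i _ => by rw [hg.extend_apply]
  · intro p hp
    rcases Finset.mem_image.1 hp with ⟨i, hi, rfl⟩
    show MeasurableSet (Function.extend g sets (fun _ => Set.univ) (g i))
    rw [hg.extend_apply]
    exact H i hi

lemma aux_X_meas {Ω : Type*} {m' : MeasurableSpace Ω} (ξ : ℕ × ℕ → Ω → ℕ) (X : ℕ → Ω → ℕ)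
    (hX0 : ∀ ω, X 0 ω = 1)
    (hXs : ∀ t ω, X (t + 1) ω = ∑ i ∈ Finset.range (X t ω), ξ (t, i) ω)
    (n : ℕ) (hξ : ∀ p : ℕ × ℕ, p.1 < n → Measurable[m'] (ξ p)) :
    ∀ k, k ≤ n → Measurable[m'] (X k) := by
  intro k
  induction k with
  | zero =>
    intro _
    have h : X 0 = fun _ => 1 := funext hX0
    rw [h]; exact measurable_const
  | succ k ih =>
    intro hk
    have ihm := ih (Nat.le_of_succ_le hk)
    apply measurable_to_countable'
    intro j
    have h : X (k + 1) ⁻¹' {j}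
        = ⋃ m, (X k ⁻¹' {m} ∩ {ω | ∑ i ∈ Finset.range m, ξ (k, i) ω = j}) := by
      ext ω
      simp only [Set.mem_preimage, Set.mem_singleton_iff, Set.mem_iUnion, Set.mem_inter_iff,
        Set.mem_setOf_eq]
      constructor
      · intro h; exact ⟨X k ω, rfl, by rw [← hXs k ω]; exact h⟩
      · rintro ⟨m, hm, hsum⟩; rw [hXs k ω, hm]; exact hsum
    rw [h]
    refine MeasurableSet.iUnion fun m => (ihm (measurableSet_singleton m)).inter ?_
    exact (Finset.measurable_sum _ fun i _ => hξ (k, i) (Nat.lt_of_succ_le hk))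
      (measurableSet_singleton j)

lemma aux_poisson_mgf {Ω : Type*} [MeasurableSpace Ω] (P : Measure Ω) [IsProbabilityMeasure P]
    {θ : ℝ} (hθ : 0 ≤ θ) (f : Ω → ℕ) (hf : Measurable f)
    (hlaw : ∀ k, P {ω | f ω = k} = ENNReal.ofReal (Real.exp (-θ) * θ ^ k / (Nat.factorial k)))
    (s : ℝ) :
    Integrable (fun ω => Real.exp (s * (f ω : ℝ))) P ∧
      ∫ ω, Real.exp (s * (f ω : ℝ)) ∂P = Real.exp (θ * (Real.exp s - 1)) := by
  have hcast : Measurable (fun k : ℕ => (k : ℝ)) := measurable_from_top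
  have hmeasR : Measurable fun ω => Real.exp (s * (f ω : ℝ)) :=
    ((hcast.comp hf).const_mul s).exp
  have hnn : ∀ ω, 0 ≤ Real.exp (s * (f ω : ℝ)) := fun ω => (Real.exp_pos _).le
  have hsum : Summable fun k : ℕ =>
      Real.exp (-θ) * ((θ * Real.exp s) ^ k / (Nat.factorial k)) :=
    (Real.summable_pow_div_factorial (θ * Real.exp s)).mul_left _
  have hterm : ∀ k : ℕ, Real.exp (s * (k : ℝ)) * (Real.exp (-θ) * θ ^ k / (Nat.factorial k))
      = Real.exp (-θ) * ((θ * Real.exp s) ^ k / (Nat.factorial k)) := by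
    intro k
    have hk : ((Nat.factorial k : ℝ)) ≠ 0 := Nat.cast_ne_zero.mpr (Nat.factorial_ne_zero k)
    rw [mul_comm s (k : ℝ), Real.exp_nat_mul, mul_pow]
    field_simp
  have htsum : ∑' k : ℕ, Real.exp (-θ) * ((θ * Real.exp s) ^ k / (Nat.factorial k))
      = Real.exp (θ * (Real.exp s - 1)) := by
    rw [tsum_mul_left]
    have h : ∑' k : ℕ, (θ * Real.exp s) ^ k / (Nat.factorial k : ℝ)
        = Real.exp (θ * Real.exp s) := by
      rw [Real.exp_eq_exp_ℝ, NormedSpace.exp_eq_tsum_div]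
    rw [h, ← Real.exp_add]
    ring_nf
  have hkey : ∫⁻ ω, ENNReal.ofReal (Real.exp (s * (f ω : ℝ))) ∂P
      = ENNReal.ofReal (Real.exp (θ * (Real.exp s - 1))) := by
    have hg : Measurable (fun k : ℕ => ENNReal.ofReal (Real.exp (s * (k : ℝ)))) :=
      measurable_from_top
    rw [← MeasureTheory.lintegral_map hg hf, MeasureTheory.lintegral_countable']
    have hpt : ∀ k : ℕ, (P.map f) {k}
        = ENNReal.ofReal (Real.exp (-θ) * θ ^ k / (Nat.factorial k)) := by
      intro k
      rw [Measure.map_apply hf (measurableSet_singleton k)]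
      exact hlaw k
    calc ∑' k : ℕ, ENNReal.ofReal (Real.exp (s * (k : ℝ))) * (P.map f) {k}
        = ∑' k : ℕ, ENNReal.ofReal
            (Real.exp (-θ) * ((θ * Real.exp s) ^ k / (Nat.factorial k))) := by
          refine tsum_congr fun k => ?_
          rw [hpt k, ← ENNReal.ofReal_mul (Real.exp_pos _).le, hterm k]
      _ = ENNReal.ofReal (Real.exp (θ * (Real.exp s - 1))) := by
          rw [← ENNReal.ofReal_tsum_of_nonneg (fun k => by positivity) hsum, htsum]
  constructor
  · refine ⟨hmeasR.aestronglyMeasurable, ?_⟩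
    rw [hasFiniteIntegral_iff_ofReal (ae_of_all _ hnn), hkey]
    exact ENNReal.ofReal_lt_top
  · rw [MeasureTheory.integral_eq_lintegral_of_nonneg_ae (ae_of_all _ hnn)
      hmeasR.aestronglyMeasurable, hkey, ENNReal.toReal_ofReal (Real.exp_pos _).le]

/-- **Lemma.** If `B > 1`, `θ > 0`, `1 ≤ x₁ < x₂ - 1`, and `P(x₁ ≤ 𝒳_{t-1} ≤ x₂) > 0`,
then `P(𝒳_t ≤ B x₂ θ | x₁ ≤ 𝒳_{t-1} ≤ x₂) ≥ 1 - (B/(B-1)) e^{-x₁ θ (B log B - B + 1)}`. -/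
theorem stmt_6 {Ω : Type*} [MeasurableSpace Ω] (P : Measure Ω) [IsProbabilityMeasure P]
    (θ : ℝ) (hθpos : 0 < θ) (ξ : ℕ × ℕ → Ω → ℕ) (X : ℕ → Ω → ℕ)
    (hGW : IsGWPoisson P θ ξ X)
    (B x₁ x₂ : ℝ) (hB : 1 < B) (hx₁ : 1 ≤ x₁) (hx₁₂ : x₁ < x₂ - 1)
    (t : ℕ) (ht : 1 ≤ t)
    (hpos : 0 < P {ω | x₁ ≤ (X (t - 1) ω : ℝ) ∧ (X (t - 1) ω : ℝ) ≤ x₂}) :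
    ENNReal.ofReal (1 - (B / (B - 1)) * Real.exp (-(x₁ * θ * (B * Real.log B - B + 1)))) ≤
      (P[|{ω | x₁ ≤ (X (t - 1) ω : ℝ) ∧ (X (t - 1) ω : ℝ) ≤ x₂}])
        {ω | (X t ω : ℝ) ≤ B * x₂ * θ} := by
  obtain ⟨hξmeas, hξindep, hξlaw, hX0, hXs⟩ := hGW
  set n := t - 1 with hn
  have htn : t = n + 1 := (Nat.succ_pred_eq_of_pos ht).symm
  have hcast : Measurable (fun k : ℕ => (k : ℝ)) := measurable_from_top
  have hXmeas : ∀ k, Measurable (X k) := fun k =>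
    aux_X_meas ξ X hX0 hXs k (fun p _ => hξmeas p) k le_rfl
  set a : ℝ := B * x₂ * θ with ha
  set s : ℝ := Real.log B with hs
  have hB0 : (0:ℝ) < B := lt_trans one_pos hB
  have hB1 : (0:ℝ) < B - 1 := by linarith
  have hspos : 0 < s := Real.log_pos hB
  have heB : Real.exp s = B := Real.exp_log hB0
  have hc : 0 ≤ B * Real.log B - B + 1 := by
    have h1 := Real.one_sub_inv_le_log_of_pos hB0
    have h2 : B * (1 - B⁻¹) ≤ B * Real.log B :=
      mul_le_mul_of_nonneg_left h1 hB0.le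
    have h3 : B * (1 - B⁻¹) = B - 1 := by field_simp
    linarith
  set ε : ℝ := (B / (B - 1)) * Real.exp (-(x₁ * θ * (B * Real.log B - B + 1))) with hε
  have hεnn : 0 ≤ ε := by positivity
  set A : Set Ω := {ω | x₁ ≤ (X n ω : ℝ) ∧ (X n ω : ℝ) ≤ x₂} with hA
  set S : Set Ω := {ω | (X t ω : ℝ) ≤ a} with hS
  have hXR : ∀ k, Measurable fun ω => (X k ω : ℝ) := fun k => hcast.comp (hXmeas k)
  have hAmeas : MeasurableSet A := by
    have : A = (fun ω => (X n ω : ℝ)) ⁻¹' (Set.Icc x₁ x₂) := rfl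
    rw [this]; exact (hXR n) measurableSet_Icc
  have hSmeas : MeasurableSet S := by
    have : S = (fun ω => (X t ω : ℝ)) ⁻¹' (Set.Iic a) := rfl
    rw [this]; exact (hXR t) measurableSet_Iic
  -- per-generation sums
  have hYmeas : ∀ m : ℕ, Measurable fun ω => ∑ i ∈ Finset.range m, ξ (n, i) ω :=
    fun m => Finset.measurable_sum _ fun i _ => hξmeas (n, i)
  set T : ℕ → Set Ω :=
    fun m => {ω | a < ((∑ i ∈ Finset.range m, ξ (n, i) ω : ℕ) : ℝ)} with hT
  have hTmeas : ∀ m, MeasurableSet (T m) := by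
    intro m
    have : T m = (fun ω => ((∑ i ∈ Finset.range m, ξ (n, i) ω : ℕ) : ℝ)) ⁻¹' (Set.Ioi a) := rfl
    rw [this]; exact (hcast.comp (hYmeas m)) measurableSet_Ioi
  set D : ℕ → Set Ω :=
    fun m => {ω | X n ω = m} ∩ ({ω | x₁ ≤ (m:ℝ) ∧ (m:ℝ) ≤ x₂} ∩ T m) with hD
  set E : ℕ → Set Ω :=
    fun m => {ω | X n ω = m} ∩ {ω | x₁ ≤ (m:ℝ) ∧ (m:ℝ) ≤ x₂} with hE
  have hDmeas : ∀ m, MeasurableSet (D m) := fun m =>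
    ((hXmeas n) (measurableSet_singleton m)).inter
      ((MeasurableSet.const _).inter (hTmeas m))
  have hEmeas : ∀ m, MeasurableSet (E m) := fun m =>
    ((hXmeas n) (measurableSet_singleton m)).inter (MeasurableSet.const _)
  have hDdisj : Pairwise (Function.onFun Disjoint D) := by
    intro m m' hmm'
    refine Set.disjoint_left.mpr ?_
    rintro ω ⟨h1, -⟩ ⟨h2, -⟩
    exact hmm' (h1.symm.trans h2)
  have hEdisj : Pairwise (Function.onFun Disjoint E) := by
    intro m m' hmm'
    refine Set.disjoint_left.mpr ?_
    rintro ω ⟨h1, -⟩ ⟨h2, -⟩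
    exact hmm' (h1.symm.trans h2)
  have hXt : ∀ ω, X t ω = ∑ i ∈ Finset.range (X n ω), ξ (n, i) ω := by
    intro ω; rw [htn]; exact hXs n ω
  have hAE : A = ⋃ m, E m := by
    ext ω
    simp only [hA, hE, Set.mem_setOf_eq, Set.mem_iUnion, Set.mem_inter_iff]
    constructor
    · rintro ⟨h1, h2⟩; exact ⟨X n ω, rfl, h1, h2⟩
    · rintro ⟨m, hm, h1, h2⟩
      rw [hm]; exact ⟨h1, h2⟩
  have hAS : A \ S = ⋃ m, D m := by
    ext ω
    simp only [hA, hS, hD, Set.mem_diff, Set.mem_setOf_eq, Set.mem_iUnion, Set.mem_inter_iff,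
      not_le, hT]
    constructor
    · rintro ⟨⟨h1, h2⟩, h3⟩
      rw [hXt ω] at h3
      exact ⟨X n ω, rfl, ⟨h1, h2⟩, h3⟩
    · rintro ⟨m, hm, ⟨h1, h2⟩, h3⟩
      rw [hm]
      refine ⟨⟨h1, h2⟩, ?_⟩
      rw [hXt ω, hm]
      exact h3
  -- Chernoff bound for each admissible m
  have hchern : ∀ m : ℕ, (m : ℝ) ≤ x₂ → P (T m) ≤ ENNReal.ofReal ε := by
    intro m hm2
    set Z : ℕ → Ω → ℝ := fun i ω => ((ξ (n, i) ω : ℕ) : ℝ) with hZ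
    have hZindep : iIndepFun Z P := by
      have h1 : iIndepFun
          (fun i : ℕ => ξ (n, i)) P :=
        aux_iIndepFun_precomp hξindep (fun i => (n, i))
          (fun i j h => congrArg Prod.snd h)
      exact h1.comp (fun _ => (fun k : ℕ => (k : ℝ))) (fun _ => hcast)
    have hZmeas : ∀ i, Measurable (Z i) := fun i => hcast.comp (hξmeas (n, i))
    have hpois := fun i : ℕ => aux_poisson_mgf P hθpos.le (ξ (n, i)) (hξmeas (n, i))
      (hξlaw (n, i)) s
    have hZint : ∀ i : ℕ, Integrable (fun ω => Real.exp (s * Z i ω)) P :=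
      fun i => (hpois i).1
    have hZmgf : ∀ i : ℕ, mgf (Z i) P s = Real.exp (θ * (Real.exp s - 1)) :=
      fun i => (hpois i).2
    have hint_sum : Integrable (fun ω => Real.exp (s * (∑ i ∈ Finset.range m, Z i) ω)) P :=
      hZindep.integrable_exp_mul_sum hZmeas (fun i _ => hZint i)
    have hchern0 := measure_ge_le_exp_mul_mgf (μ := P) (X := ∑ i ∈ Finset.range m, Z i)
      a hspos.le hint_sum
    have hmgfsum : mgf (∑ i ∈ Finset.range m, Z i) P s
        = Real.exp (θ * (Real.exp s - 1)) ^ m := by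
      rw [hZindep.mgf_sum hZmeas]
      simp [hZmgf]
    have hrhs : Real.exp (-s * a) * Real.exp (θ * (Real.exp s - 1)) ^ m
        = Real.exp (-s * a + (m : ℝ) * (θ * (Real.exp s - 1))) := by
      rw [← Real.exp_nat_mul, ← Real.exp_add]
    have hkey : -s * a + (m : ℝ) * (θ * (Real.exp s - 1))
        ≤ -(x₁ * θ * (B * Real.log B - B + 1)) := by
      rw [heB, hs, ha]
      have h1 : (m : ℝ) * (θ * (B - 1)) ≤ x₂ * (θ * (B - 1)) := by
        apply mul_le_mul_of_nonneg_right hm2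
        positivity
      have h2 : x₁ * (θ * (B * Real.log B - B + 1)) ≤ x₂ * (θ * (B * Real.log B - B + 1)) := by
        apply mul_le_mul_of_nonneg_right (by linarith)
        positivity
      nlinarith [h1, h2]
    have hεge : Real.exp (-s * a + (m : ℝ) * (θ * (Real.exp s - 1))) ≤ ε := by
      have h1 : Real.exp (-s * a + (m : ℝ) * (θ * (Real.exp s - 1)))
          ≤ Real.exp (-(x₁ * θ * (B * Real.log B - B + 1))) := Real.exp_le_exp.mpr hkey
      have h2 : (1:ℝ) ≤ B / (B - 1) := by
        rw [le_div_iff₀ hB1]; linarith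
      calc Real.exp (-s * a + (m : ℝ) * (θ * (Real.exp s - 1)))
          ≤ Real.exp (-(x₁ * θ * (B * Real.log B - B + 1))) := h1
        _ ≤ ε := le_mul_of_one_le_left (Real.exp_pos _).le h2
    have hsub : T m ⊆ {ω | a ≤ (∑ i ∈ Finset.range m, Z i) ω} := by
      intro ω hω
      have hcasteq : ((∑ i ∈ Finset.range m, ξ (n, i) ω : ℕ) : ℝ)
          = (∑ i ∈ Finset.range m, Z i) ω := by
        rw [Finset.sum_apply]
        push_cast
        rfl
      have : a < ((∑ i ∈ Finset.range m, ξ (n, i) ω : ℕ) : ℝ) := hω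
      rw [hcasteq] at this
      exact this.le
    calc P (T m) ≤ P {ω | a ≤ (∑ i ∈ Finset.range m, Z i) ω} := measure_mono hsub
      _ = ENNReal.ofReal (P {ω | a ≤ (∑ i ∈ Finset.range m, Z i) ω}).toReal :=
          (ENNReal.ofReal_toReal (measure_ne_top P _)).symm
      _ ≤ ENNReal.ofReal ε := by
          apply ENNReal.ofReal_le_ofReal
          calc (P {ω | a ≤ (∑ i ∈ Finset.range m, Z i) ω}).toReal
              ≤ Real.exp (-s * a) * mgf (∑ i ∈ Finset.range m, Z i) P s := hchern0
            _ = Real.exp (-s * a + (m : ℝ) * (θ * (Real.exp s - 1))) := by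
                rw [hmgfsum, hrhs]
            _ ≤ ε := hεge
  -- independence between generation σ-algebras
  have hIndep : ∀ m : ℕ,
      P ({ω | X n ω = m} ∩ T m) = P {ω | X n ω = m} * P (T m) := by
    intro m
    set mS : MeasurableSpace Ω :=
      ⨆ p ∈ {p : ℕ × ℕ | p.1 < n}, MeasurableSpace.comap (ξ p) inferInstance with hmS
    set mT : MeasurableSpace Ω :=
      ⨆ p ∈ {p : ℕ × ℕ | p.1 = n}, MeasurableSpace.comap (ξ p) inferInstance with hmT
    have hiI : iIndep (fun p : ℕ × ℕ => MeasurableSpace.comap (ξ p) inferInstance) P :=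
      hξindep.iIndep
    have hle : ∀ p : ℕ × ℕ, MeasurableSpace.comap (ξ p) inferInstance ≤ _ :=
      fun p => measurable_iff_comap_le.mp (hξmeas p)
    have hdisj : Disjoint {p : ℕ × ℕ | p.1 < n} {p : ℕ × ℕ | p.1 = n} := by
      rw [Set.disjoint_left]
      rintro p hp hp2
      exact absurd hp2 (Set.mem_setOf_eq ▸ hp).ne
    have hI : Indep mS mT P := indep_iSup_of_disjoint hle hiI hdisj
    have hXnMS : Measurable[mS] (X n) := by
      refine aux_X_meas ξ X hX0 hXs n (fun p hp => ?_) n le_rfl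
      have hc : Measurable[MeasurableSpace.comap (ξ p) inferInstance] (ξ p) :=
        fun u hu => ⟨u, hu, rfl⟩
      have hle1 : MeasurableSpace.comap (ξ p) inferInstance ≤ mS := by
        rw [hmS]
        exact le_biSup (fun p : ℕ × ℕ => MeasurableSpace.comap (ξ p) inferInstance)
          (show p ∈ {p : ℕ × ℕ | p.1 < n} from hp)
      exact hc.mono hle1 le_rfl
    have hYMT : Measurable[mT] fun ω => ∑ i ∈ Finset.range m, ξ (n, i) ω := by
      refine Finset.measurable_sum _ fun i _ => ?_
      have hc : Measurable[MeasurableSpace.comap (ξ (n, i)) inferInstance] (ξ (n, i)) :=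
        fun u hu => ⟨u, hu, rfl⟩
      have hle1 : MeasurableSpace.comap (ξ (n, i)) inferInstance ≤ mT := by
        rw [hmT]
        exact le_biSup (fun p : ℕ × ℕ => MeasurableSpace.comap (ξ p) inferInstance)
          (show ((n, i) : ℕ × ℕ) ∈ {p : ℕ × ℕ | p.1 = n} from rfl)
      exact hc.mono hle1 le_rfl
    have hMS1 : MeasurableSet[mS] {ω | X n ω = m} := hXnMS (measurableSet_singleton m)
    have hMT1 : MeasurableSet[mT] (T m) := by
      have : T m = (fun ω => ((∑ i ∈ Finset.range m, ξ (n, i) ω : ℕ) : ℝ)) ⁻¹' (Set.Ioi a) :=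
        rfl
      rw [this]
      exact (hcast.comp hYMT) measurableSet_Ioi
    exact (Indep_iff _ _ _).1 hI _ _ hMS1 hMT1
  -- per-m bound
  have hDm : ∀ m : ℕ, P (D m) ≤ ENNReal.ofReal ε * P (E m) := by
    intro m
    by_cases hcond : x₁ ≤ (m : ℝ) ∧ (m : ℝ) ≤ x₂
    · have huniv : {ω : Ω | x₁ ≤ (m:ℝ) ∧ (m:ℝ) ≤ x₂} = Set.univ :=
        Set.eq_univ_of_forall fun ω => hcond
      have hDeq : D m = {ω | X n ω = m} ∩ T m := by
        rw [hD]; simp only [huniv, Set.univ_inter]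
      have hEeq : E m = {ω | X n ω = m} := by
        rw [hE]; simp only [huniv, Set.inter_univ]
      rw [hDeq, hEeq, hIndep m, mul_comm]
      exact mul_le_mul_left (hchern m hcond.2) _
    · have hempty : {ω : Ω | x₁ ≤ (m:ℝ) ∧ (m:ℝ) ≤ x₂} = ∅ := by
        ext ω
        simp only [Set.mem_setOf_eq, Set.mem_empty_iff_false, iff_false]
        exact hcond
      have : D m = ∅ := by
        rw [hD]; simp only [hempty, Set.empty_inter, Set.inter_empty]
      rw [this]
      simp
  -- put things together
  have h1 : P (A \ S) = ∑' m, P (D m) := by rw [hAS]; exact measure_iUnion hDdisj hDmeas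
  have h2 : P A = ∑' m, P (E m) := by rw [hAE]; exact measure_iUnion hEdisj hEmeas
  have hbadle : P (A \ S) ≤ ENNReal.ofReal ε * P A := by
    rw [h1, h2, ← ENNReal.tsum_mul_left]
    exact ENNReal.tsum_le_tsum hDm
  rw [cond_apply hAmeas P]
  by_cases hε1 : 1 ≤ ε
  · have hle0 : 1 - ε ≤ 0 := by linarith
    rw [ENNReal.ofReal_eq_zero.mpr hle0]
    exact zero_le
  · push_neg at hε1
    have hPA_ne_top : P A ≠ ⊤ := measure_ne_top P A
    have hPA_ne : P A ≠ 0 := hpos.ne'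
    have hAsplit : P (A ∩ S) + P (A \ S) = P A := measure_inter_add_diff A hSmeas
    have hX2 : ENNReal.ofReal (1 - ε) * P A ≤ P (A ∩ S) := by
      have hsum : ENNReal.ofReal (1 - ε) * P A + ENNReal.ofReal ε * P A = P A := by
        rw [← add_mul, ← ENNReal.ofReal_add (by linarith) hεnn, sub_add_cancel,
          ENNReal.ofReal_one, one_mul]
      have h4 : ENNReal.ofReal (1 - ε) * P A + P (A \ S) ≤ P (A ∩ S) + P (A \ S) := by
        calc ENNReal.ofReal (1 - ε) * P A + P (A \ S)
            ≤ ENNReal.ofReal (1 - ε) * P A + ENNReal.ofReal ε * P A :=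
              add_le_add_right hbadle _
          _ = P A := hsum
          _ = P (A ∩ S) + P (A \ S) := hAsplit.symm
      exact (ENNReal.add_le_add_iff_right (measure_ne_top P _)).1 h4
    calc ENNReal.ofReal (1 - ε)
        = (P A)⁻¹ * (ENNReal.ofReal (1 - ε) * P A) := by
          rw [mul_comm (ENNReal.ofReal (1 - ε)) (P A), ← mul_assoc,
            ENNReal.inv_mul_cancel hPA_ne hPA_ne_top, one_mul]
      _ ≤ (P A)⁻¹ * P (A ∩ S) := mul_le_mul_right hX2 _
end

section
/- Let 1 < B < 3/2, let 0 < b < 1, assume (1-b+b·log b)·θ > 1, and let 1 ≤ x₁ < x₂ - 1. If the event {x₁ ≤ 𝒳_{t-1} ≤ x₂} has positive probability, then P(b·x₁·θ ≤ 𝒳_t ≤ B·x₂·θ | x₁ ≤ 𝒳_{t-1} ≤ x₂) ≥ 1 - x₁·θ·e^{-x₁·θ·(1-b)²/2} - (B/(B-1))·e^{-x₁·θ·(B-1)²/3}. -/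
open MeasureTheory ProbabilityTheory

namespace GW7
open Real

noncomputable def pois (lam : ℝ) (k : ℕ) : ℝ := Real.exp (-lam) * lam ^ k / (Nat.factorial k)

lemma pois_nonneg {lam : ℝ} (h : 0 ≤ lam) (k : ℕ) : 0 ≤ pois lam k := by
  unfold pois; positivity

lemma pois_succ (lam : ℝ) (k : ℕ) : pois lam (k+1) = pois lam k * (lam / (k+1)) := by
  unfold pois
  rw [Nat.factorial_succ]
  have h1 : (k.factorial : ℝ) ≠ 0 := Nat.cast_ne_zero.2 k.factorial_ne_zero
  have h2 : ((k:ℝ)+1) ≠ 0 := by positivity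
  push_cast
  field_simp
  ring

lemma f_tangent {c r : ℝ} (hc : 0 < c) (hr : 0 < r) :
    (1 - c + c * Real.log c) + (r - c) * Real.log c ≤ 1 - r + r * Real.log r := by
  have h1 : Real.log (c / r) ≤ c / r - 1 := Real.log_le_sub_one_of_pos (by positivity)
  rw [Real.log_div hc.ne' hr.ne'] at h1
  have h2 : r * (Real.log c - Real.log r) ≤ r * (c / r - 1) :=
    mul_le_mul_of_nonneg_left h1 hr.le
  have h3 : r * (c / r - 1) = c - r := by field_simp
  nlinarith [h2, h3]


lemma hasDeriv_xlogx {x : ℝ} (hx : x ≠ 0) :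
    HasDerivAt (fun y => y * Real.log y) (Real.log x + 1) x := by
  have h := (hasDerivAt_id x).mul (Real.hasDerivAt_log hx)
  convert h using 1
  · rfl
  · rfl
  · rfl
  · simp [mul_inv_cancel₀ hx]

lemma g_lower {b : ℝ} (hb0 : 0 < b) (hb1 : b ≤ 1) :
    (1 - b) ^ 2 / 2 ≤ 1 - b + b * Real.log b := by
  set f : ℝ → ℝ := fun x => 1 - x + x * Real.log x - (1 - x) ^ 2 / 2 with hf
  have key : AntitoneOn f (Set.Icc b 1) := by
    apply antitoneOn_of_deriv_nonpos (convex_Icc _ _)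
    · apply ContinuousOn.sub
      apply ContinuousOn.add
      · fun_prop
      · exact continuousOn_id.mul (Real.continuousOn_log.mono (fun x hx => by
          simp only [Set.mem_compl_iff, Set.mem_singleton_iff]
          exact ne_of_gt (lt_of_lt_of_le hb0 hx.1)))
      · fun_prop
    · intro x hx
      rw [interior_Icc] at hx
      have hx0 : x ≠ 0 := ne_of_gt (lt_trans hb0 hx.1)
      exact (((hasDerivAt_const x (1:ℝ)).sub (hasDerivAt_id x)).add (hasDeriv_xlogx hx0)).sub
        ((((hasDerivAt_const x (1:ℝ)).sub (hasDerivAt_id x)).pow 2).div_const 2)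
        |>.differentiableAt.differentiableWithinAt
    · intro x hx
      rw [interior_Icc] at hx
      have hx0 : x ≠ 0 := ne_of_gt (lt_trans hb0 hx.1)
      have hd : HasDerivAt f ((0 - 1 + (Real.log x + 1)) - (2 * (1 - x) ^ 1 * (0 - 1)) / 2) x :=
        (((hasDerivAt_const x (1:ℝ)).sub (hasDerivAt_id x)).add (hasDeriv_xlogx hx0)).sub
          ((((hasDerivAt_const x (1:ℝ)).sub (hasDerivAt_id x)).pow 2).div_const 2)
      rw [hd.deriv]
      have hlog : Real.log x ≤ x - 1 := Real.log_le_sub_one_of_pos (lt_trans hb0 hx.1)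
      nlinarith
  have h := key (Set.mem_Icc.2 ⟨le_refl b, hb1⟩) (Set.mem_Icc.2 ⟨hb1, le_refl 1⟩) hb1
  simp only [hf, Real.log_one, mul_zero] at h
  nlinarith [h]

lemma g_upper {B : ℝ} (hB0 : 1 ≤ B) (hB1 : B ≤ 3/2) :
    (B - 1) ^ 2 / 3 ≤ 1 - B + B * Real.log B := by
  set f : ℝ → ℝ := fun x => 1 - x + x * Real.log x - (x - 1) ^ 2 / 3 with hf
  have key : MonotoneOn f (Set.Icc 1 B) := by
    apply monotoneOn_of_deriv_nonneg (convex_Icc _ _)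
    · apply ContinuousOn.sub
      apply ContinuousOn.add
      · fun_prop
      · exact continuousOn_id.mul (Real.continuousOn_log.mono (fun x hx => by
          simp only [Set.mem_compl_iff, Set.mem_singleton_iff]
          exact ne_of_gt (lt_of_lt_of_le one_pos hx.1)))
      · fun_prop
    · intro x hx
      rw [interior_Icc] at hx
      have hx0 : x ≠ 0 := ne_of_gt (lt_trans one_pos hx.1)
      exact (((hasDerivAt_const x (1:ℝ)).sub (hasDerivAt_id x)).add (hasDeriv_xlogx hx0)).sub
        ((((hasDerivAt_id x).sub (hasDerivAt_const x (1:ℝ))).pow 2).div_const 3)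
        |>.differentiableAt.differentiableWithinAt
    · intro x hx
      rw [interior_Icc] at hx
      have hx1 : (1:ℝ) < x := hx.1
      have hx0 : x ≠ 0 := ne_of_gt (lt_trans one_pos hx1)
      have hd : HasDerivAt f ((0 - 1 + (Real.log x + 1)) - (2 * (x - 1) ^ 1 * (1 - 0)) / 3) x :=
        (((hasDerivAt_const x (1:ℝ)).sub (hasDerivAt_id x)).add (hasDeriv_xlogx hx0)).sub
          ((((hasDerivAt_id x).sub (hasDerivAt_const x (1:ℝ))).pow 2).div_const 3)
      rw [hd.deriv]
      have hlog : Real.log x⁻¹ ≤ x⁻¹ - 1 := Real.log_le_sub_one_of_pos (by positivity)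
      rw [Real.log_inv] at hlog
      have hxpos : (0:ℝ) < x := lt_trans one_pos hx1
      have hinv : x * x⁻¹ = 1 := mul_inv_cancel₀ hx0
      have hx2 : x < 3/2 := lt_of_lt_of_le hx.2 hB1
      nlinarith [hlog, hinv, hxpos]
  have h := key (Set.mem_Icc.2 ⟨le_refl 1, hB0⟩) (Set.mem_Icc.2 ⟨hB0, le_refl B⟩) hB0
  simp only [hf, Real.log_one, mul_zero] at h
  nlinarith [h]


lemma pois_le_exp {lam : ℝ} (hlam : 0 < lam) {k : ℕ} (hk : 1 ≤ k) :
    pois lam k ≤ Real.exp (-(lam * (1 - k/lam + (k/lam) * Real.log (k/lam)))) := by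
  have hkpos : (0:ℝ) < k := by exact_mod_cast hk
  have hfact : (0:ℝ) < (Nat.factorial k : ℝ) := by exact_mod_cast k.factorial_pos
  -- k^k ≤ k! * exp k
  have h1 : (k:ℝ) ^ k / (Nat.factorial k) ≤ Real.exp k := by
    calc (k:ℝ) ^ k / (Nat.factorial k)
        ≤ ∑ i ∈ Finset.range (k+1), (k:ℝ) ^ i / (Nat.factorial i) := by
          apply Finset.single_le_sum (f := fun i => (k:ℝ)^i / (Nat.factorial i))
          · intro i _; positivity
          · exact Finset.self_mem_range_succ k
      _ ≤ Real.exp k := Real.sum_le_exp_of_nonneg hkpos.le _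
  have h2 : (k:ℝ) ^ k ≤ (Nat.factorial k) * Real.exp k := by
    rw [div_le_iff₀ hfact] at h1; linarith [h1]
  -- lam^k / k! ≤ lam^k * exp k / k^k
  have hkk : (0:ℝ) < (k:ℝ)^k := by positivity
  have h3 : lam ^ k / (Nat.factorial k) ≤ lam ^ k * Real.exp k / (k:ℝ)^k := by
    rw [div_le_div_iff₀ hfact hkk]
    calc lam ^ k * (k:ℝ)^k ≤ lam ^ k * ((Nat.factorial k) * Real.exp k) := by
          apply mul_le_mul_of_nonneg_left h2 (by positivity)
      _ = lam ^ k * Real.exp k * (Nat.factorial k) := by ring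
  have h4 : pois lam k ≤ Real.exp (-lam) * (lam ^ k * Real.exp k / (k:ℝ)^k) := by
    unfold pois
    rw [mul_div_assoc]
    exact mul_le_mul_of_nonneg_left h3 (Real.exp_pos _).le
  -- rewrite RHS as single exponential
  have h5 : Real.exp (-lam) * (lam ^ k * Real.exp k / (k:ℝ)^k)
      = Real.exp (-lam + k * Real.log lam + k - k * Real.log k) := by
    have hl : lam ^ k = Real.exp (k * Real.log lam) := by
      rw [Real.exp_nat_mul, Real.exp_log hlam]
    have hkx : (k:ℝ) ^ k = Real.exp (k * Real.log k) := by
      rw [Real.exp_nat_mul, Real.exp_log hkpos]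
    rw [hl, hkx, ← Real.exp_add, ← Real.exp_sub, ← Real.exp_add]
    congr 1
    ring
  rw [h5] at h4
  have h6 : -lam + k * Real.log lam + k - k * Real.log k
      = -(lam * (1 - k/lam + (k/lam) * Real.log (k/lam))) := by
    rw [Real.log_div (by exact_mod_cast hkpos.ne') hlam.ne']
    field_simp
    ring
  rw [h6] at h4
  exact h4

lemma pois_le_low {lam b : ℝ} (hlam : 0 < lam) (hb0 : 0 < b) (hb1 : b < 1) {k : ℕ}
    (hk : (k:ℝ) ≤ b * lam) :
    pois lam k ≤ Real.exp (-(lam * (1 - b + b * Real.log b))) := by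
  have hlogb : Real.log b < 0 := Real.log_neg hb0 hb1
  rcases Nat.eq_zero_or_pos k with h0 | h1
  · subst h0
    have : pois lam 0 = Real.exp (-lam) := by unfold pois; simp
    rw [this, Real.exp_le_exp]
    nlinarith [hlogb, hlam]
  · refine le_trans (pois_le_exp hlam h1) ?_
    rw [Real.exp_le_exp, neg_le_neg_iff]
    have hr0 : (0:ℝ) < (k:ℝ)/lam := by
      have : (0:ℝ) < k := by exact_mod_cast h1
      positivity
    have hrb : (k:ℝ)/lam ≤ b := (div_le_iff₀ hlam).2 (by linarith [hk])
    have ht := f_tangent hb0 hr0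
    have : (1 - b + b * Real.log b) ≤ (1 - (k:ℝ)/lam + ((k:ℝ)/lam) * Real.log ((k:ℝ)/lam)) := by
      nlinarith [ht, hrb, hlogb]
    exact mul_le_mul_of_nonneg_left this hlam.le

lemma pois_le_high {lam B : ℝ} (hlam : 0 < lam) (hB1 : 1 < B) {k : ℕ}
    (hk : B * lam ≤ (k:ℝ)) :
    pois lam k ≤ Real.exp (-(lam * (1 - B + B * Real.log B))) := by
  have hB0 : (0:ℝ) < B := lt_trans one_pos hB1
  have hkpos : (0:ℝ) < k := lt_of_lt_of_le (by positivity) hk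
  have h1 : 1 ≤ k := by exact_mod_cast Nat.one_le_iff_ne_zero.2 (by
    intro h; rw [h] at hkpos; simp at hkpos)
  have hlogB : 0 < Real.log B := Real.log_pos hB1
  refine le_trans (pois_le_exp hlam h1) ?_
  rw [Real.exp_le_exp, neg_le_neg_iff]
  have hr0 : (0:ℝ) < (k:ℝ)/lam := by positivity
  have hrB : B ≤ (k:ℝ)/lam := (le_div_iff₀ hlam).2 hk
  have ht := f_tangent hB0 hr0
  have : (1 - B + B * Real.log B) ≤ (1 - (k:ℝ)/lam + ((k:ℝ)/lam) * Real.log ((k:ℝ)/lam)) := by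
    nlinarith [ht, hrB, hlogB]
  exact mul_le_mul_of_nonneg_left this hlam.le

lemma pois_conv (lam th : ℝ) (k : ℕ) :
    ∑ j ∈ Finset.range (k+1), pois lam j * pois th (k - j) = pois (lam + th) k := by
  unfold pois
  have hstep : ∀ j ∈ Finset.range (k+1),
      Real.exp (-lam) * lam ^ j / (Nat.factorial j) *
        (Real.exp (-th) * th ^ (k - j) / (Nat.factorial (k - j)))
      = Real.exp (-(lam + th)) * (lam ^ j * th ^ (k - j) * (Nat.choose k j)) /
          (Nat.factorial k) := by
    intro j hj
    have hjk : j ≤ k := Nat.lt_succ_iff.1 (Finset.mem_range.1 hj)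
    have hfac : (Nat.choose k j : ℝ) * (Nat.factorial j) * (Nat.factorial (k - j))
        = (Nat.factorial k) := by
      exact_mod_cast congrArg (Nat.cast (R := ℝ)) (Nat.choose_mul_factorial_mul_factorial hjk)
    have hj0 : ((Nat.factorial j : ℝ)) ≠ 0 := Nat.cast_ne_zero.2 j.factorial_ne_zero
    have hkj0 : ((Nat.factorial (k - j) : ℝ)) ≠ 0 := Nat.cast_ne_zero.2 (k-j).factorial_ne_zero
    have hk0 : ((Nat.factorial k : ℝ)) ≠ 0 := Nat.cast_ne_zero.2 k.factorial_ne_zero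
    rw [show -(lam + th) = -lam + -th by ring, Real.exp_add]
    field_simp
    linear_combination (-(lam ^ j * th ^ (k - j))) * hfac
  rw [Finset.sum_congr rfl hstep, ← Finset.sum_div, ← Finset.mul_sum, ← add_pow]


/-- σ-algebra generated by a subfamily of the ξ's. -/
def MS {Ω : Type*} (ξ : ℕ × ℕ → Ω → ℕ) (S : Set (ℕ × ℕ)) : MeasurableSpace Ω :=
  ⨆ p ∈ S, MeasurableSpace.comap (ξ p) inferInstance

lemma meas_MS {Ω : Type*} {ξ : ℕ × ℕ → Ω → ℕ} {S : Set (ℕ × ℕ)} {p : ℕ × ℕ} (hp : p ∈ S) :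
    Measurable[MS ξ S] (ξ p) := by
  rw [measurable_iff_comap_le]
  exact le_iSup₂ (f := fun p (_ : p ∈ S) => MeasurableSpace.comap (ξ p) inferInstance) p hp

lemma MS_le {Ω : Type*} [m0 : MeasurableSpace Ω] {ξ : ℕ × ℕ → Ω → ℕ}
    (hξ : ∀ p, Measurable (ξ p)) (S : Set (ℕ × ℕ)) : MS ξ S ≤ m0 :=
  iSup₂_le fun p _ => (hξ p).comap_le

lemma measurable_comp_nat {Ω : Type*} [m : MeasurableSpace Ω] {g : Ω → ℕ} {F : ℕ → Ω → ℕ}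
    (hg : Measurable g) (hF : ∀ n, Measurable (F n)) :
    Measurable (fun ω => F (g ω) ω) := by
  apply measurable_to_countable'
  intro k
  have h : (fun ω => F (g ω) ω) ⁻¹' {k} = ⋃ n, g ⁻¹' {n} ∩ F n ⁻¹' {k} := by
    ext ω
    simp only [Set.mem_preimage, Set.mem_singleton_iff, Set.mem_iUnion, Set.mem_inter_iff]
    constructor
    · intro hω; exact ⟨g ω, rfl, hω⟩
    · rintro ⟨n, rfl, hω⟩; exact hω
  rw [h]
  exact MeasurableSet.iUnion fun n =>
    (hg (measurableSet_singleton n)).inter (hF n (measurableSet_singleton k))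

lemma sum_meas_MS {Ω : Type*} (ξ : ℕ × ℕ → Ω → ℕ) {S : Set (ℕ × ℕ)} {s m : ℕ}
    (h : ∀ i < m, (s, i) ∈ S) :
    Measurable[MS ξ S] (fun ω => ∑ i ∈ Finset.range m, ξ (s, i) ω) := by
  letI := MS ξ S
  exact Finset.measurable_sum _ fun i hi => meas_MS (h i (Finset.mem_range.1 hi))

lemma X_meas_MS {Ω : Type*} {ξ : ℕ × ℕ → Ω → ℕ} {X : ℕ → Ω → ℕ}
    (hX0 : ∀ ω, X 0 ω = 1)
    (hXs : ∀ t ω, X (t + 1) ω = ∑ i ∈ Finset.range (X t ω), ξ (t, i) ω)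
    (s : ℕ) : Measurable[MS ξ {p | p.1 < s}] (X s) := by
  induction s with
  | zero =>
    have h : X 0 = fun _ => 1 := funext hX0
    rw [h]
    exact @measurable_const _ _ _ (MS ξ _) _
  | succ s ih =>
    letI m : MeasurableSpace Ω := MS ξ {p | p.1 < s + 1}
    have hmono : MS ξ {p | p.1 < s} ≤ MS ξ {p | p.1 < s + 1} := by
      apply iSup₂_le
      intro p hp
      exact le_iSup₂ (f := fun p (_ : p ∈ {p : ℕ × ℕ | p.1 < s + 1}) =>
        MeasurableSpace.comap (ξ p) inferInstance) p (Nat.lt_succ_of_lt hp)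
    have hg : Measurable[m] (X s) := ih.mono hmono le_rfl
    have hF : ∀ n, Measurable[m] (fun ω => ∑ i ∈ Finset.range n, ξ (s, i) ω) := by
      intro n
      exact sum_meas_MS ξ (fun i _ => Nat.lt_succ_self s)
    have h : X (s + 1) = fun ω => (fun n ω' => ∑ i ∈ Finset.range n, ξ (s, i) ω') (X s ω) ω :=
      funext fun ω => hXs s ω
    rw [h]
    exact measurable_comp_nat hg hF

lemma indep_prod {Ω : Type*} [m0 : MeasurableSpace Ω] {P : Measure Ω} [IsProbabilityMeasure P]
    {ξ : ℕ × ℕ → Ω → ℕ} (hξ : ∀ p, Measurable (ξ p))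
    (hind : iIndepFun ξ P)
    {S T : Set (ℕ × ℕ)} (hST : Disjoint S T) {f g : Ω → ℕ}
    (hf : Measurable[MS ξ S] f) (hg : Measurable[MS ξ T] g) (A B : Set ℕ) :
    P (f ⁻¹' A ∩ g ⁻¹' B) = P (f ⁻¹' A) * P (g ⁻¹' B) := by
  have h : Indep (MS ξ S) (MS ξ T) P :=
    indep_iSup_of_disjoint (fun p => (hξ p).comap_le) hind hST
  exact (Indep_iff _ _ _).1 h _ _ (hf (by trivial))
    (hg (by trivial))


lemma sum_xi_dist {Ω : Type*} [MeasurableSpace Ω] {P : Measure Ω} [IsProbabilityMeasure P]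
    {θ : ℝ} (hθ : 0 ≤ θ) {ξ : ℕ × ℕ → Ω → ℕ} (hξ : ∀ p, Measurable (ξ p))
    (hind : iIndepFun ξ P)
    (hpmf : ∀ p k, P {ω | ξ p ω = k} = ENNReal.ofReal (pois θ k))
    (s : ℕ) : ∀ (m k : ℕ),
      P {ω | ∑ i ∈ Finset.range m, ξ (s, i) ω = k} = ENNReal.ofReal (pois ((m : ℝ) * θ) k) := by
  intro m
  induction m with
  | zero =>
    intro k
    simp only [Finset.range_zero, Finset.sum_empty, Nat.cast_zero, zero_mul]
    cases k with
    | zero =>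
      have h1 : {ω : Ω | 0 = 0} = Set.univ := by ext ω; simp
      rw [h1, measure_univ]
      unfold pois
      norm_num
    | succ k =>
      have h1 : {ω : Ω | 0 = k + 1} = (∅ : Set Ω) := by ext ω; simp
      rw [h1, measure_empty]
      unfold pois
      rw [zero_pow (Nat.succ_ne_zero k)]
      simp
  | succ m ih =>
    intro k
    have hdisj : Disjoint {p : ℕ × ℕ | p.1 = s ∧ p.2 < m} ({(s, m)} : Set (ℕ × ℕ)) := by
      rw [Set.disjoint_left]
      rintro p ⟨h1, h2⟩ hp
      rw [Set.mem_singleton_iff] at hp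
      subst hp
      exact lt_irrefl m h2
    have hf : Measurable[MS ξ {p : ℕ × ℕ | p.1 = s ∧ p.2 < m}]
        (fun ω => ∑ i ∈ Finset.range m, ξ (s, i) ω) :=
      sum_meas_MS ξ (fun i hi => ⟨rfl, hi⟩)
    have hg : Measurable[MS ξ ({(s, m)} : Set (ℕ × ℕ))] (ξ (s, m)) :=
      meas_MS rfl
    have hsum_meas : Measurable (fun ω => ∑ i ∈ Finset.range m, ξ (s, i) ω) :=
      Finset.measurable_sum _ fun i _ => hξ (s, i)
    have hsplit : {ω : Ω | ∑ i ∈ Finset.range (m + 1), ξ (s, i) ω = k}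
        = ⋃ j ∈ Finset.range (k + 1),
            ({ω | ∑ i ∈ Finset.range m, ξ (s, i) ω = j} ∩ {ω | ξ (s, m) ω = k - j}) := by
      ext ω
      simp only [Set.mem_setOf_eq, Set.mem_iUnion, Finset.mem_range, Set.mem_inter_iff,
        Finset.sum_range_succ, Nat.lt_succ_iff, exists_prop]
      constructor
      · intro h
        exact ⟨∑ i ∈ Finset.range m, ξ (s, i) ω, by omega, rfl, by omega⟩
      · rintro ⟨j, hj, h1, h2⟩
        omega
    have hdis : (↑(Finset.range (k + 1)) : Set ℕ).PairwiseDisjoint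
        (fun j => ({ω : Ω | ∑ i ∈ Finset.range m, ξ (s, i) ω = j}
          ∩ {ω | ξ (s, m) ω = k - j})) := by
      intro j _ j' _ hne
      apply Set.disjoint_left.2
      rintro ω ⟨h1, _⟩ ⟨h1', _⟩
      exact hne (h1 ▸ h1' ▸ rfl)
    have hmeas : ∀ j ∈ Finset.range (k + 1), MeasurableSet
        ({ω : Ω | ∑ i ∈ Finset.range m, ξ (s, i) ω = j} ∩ {ω | ξ (s, m) ω = k - j}) := by
      intro j _
      exact (hsum_meas (measurableSet_singleton j)).inter
        ((hξ (s, m)) (measurableSet_singleton (k - j)))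
    rw [hsplit, measure_biUnion_finset hdis hmeas]
    have hterm : ∀ j ∈ Finset.range (k + 1),
        P ({ω : Ω | ∑ i ∈ Finset.range m, ξ (s, i) ω = j} ∩ {ω | ξ (s, m) ω = k - j})
        = ENNReal.ofReal (pois ((m : ℝ) * θ) j * pois θ (k - j)) := by
      intro j _
      have hpre1 : (fun ω => ∑ i ∈ Finset.range m, ξ (s, i) ω) ⁻¹' {j}
          = {ω : Ω | ∑ i ∈ Finset.range m, ξ (s, i) ω = j} := by ext ω; simp
      have hpre2 : (ξ (s, m)) ⁻¹' {k - j} = {ω : Ω | ξ (s, m) ω = k - j} := by ext ω; simp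
      have h := indep_prod hξ hind hdisj hf hg {j} {k - j}
      rw [hpre1, hpre2] at h
      rw [h, ih j, hpmf (s, m) (k - j), ← ENNReal.ofReal_mul (pois_nonneg (by positivity) j)]
    rw [Finset.sum_congr rfl hterm, ← ENNReal.ofReal_sum_of_nonneg
      (fun j _ => mul_nonneg (pois_nonneg (by positivity) j) (pois_nonneg hθ (k - j)))]
    rw [pois_conv ((m : ℝ) * θ) θ k]
    congr 1
    push_cast
    ring

lemma tail_bound {Ω : Type*} [MeasurableSpace Ω] {P : Measure Ω} [IsProbabilityMeasure P]
    {Y : Ω → ℕ} (hY : Measurable Y) {lam θ B b x₁ x₂ : ℝ}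
    (hθ : 0 < θ) (hB1 : 1 < B) (hB2 : B < 3 / 2) (hb0 : 0 < b) (hb1 : b < 1)
    (hθb : 1 < (1 - b + b * Real.log b) * θ) (hx₁ : 1 ≤ x₁)
    (hlam1 : x₁ * θ ≤ lam) (hlam2 : lam ≤ x₂ * θ)
    (hpmf : ∀ k, P {ω | Y ω = k} = ENNReal.ofReal (pois lam k)) :
    P {ω | ¬(b * x₁ * θ ≤ (Y ω : ℝ) ∧ (Y ω : ℝ) ≤ B * x₂ * θ)} ≤
      ENNReal.ofReal (x₁ * θ * Real.exp (-(x₁ * θ * (1 - b) ^ 2 / 2)) +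
        (B / (B - 1)) * Real.exp (-(x₁ * θ * (B - 1) ^ 2 / 3))) := by
  have hx₁θ : 0 < x₁ * θ := by nlinarith
  have hlam : 0 < lam := lt_of_lt_of_le hx₁θ hlam1
  have hlogb : Real.log b < 0 := Real.log_neg hb0 hb1
  have hbx : 0 < b * x₁ * θ := by positivity
  have hBx : 0 < B * x₂ * θ := lt_of_lt_of_le (by nlinarith) (by nlinarith [hlam2] : B * lam ≤ B * x₂ * θ)
  -- the two exceptional events
  set K₁ : ℕ := ⌈b * x₁ * θ⌉₊ with hK₁
  set K₂ : ℕ := ⌊B * x₂ * θ⌋₊ + 1 with hK₂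
  have hsub : {ω : Ω | ¬(b * x₁ * θ ≤ (Y ω : ℝ) ∧ (Y ω : ℝ) ≤ B * x₂ * θ)}
      ⊆ {ω : Ω | (Y ω : ℝ) < b * x₁ * θ} ∪ {ω : Ω | B * x₂ * θ < (Y ω : ℝ)} := by
    intro ω hω
    simp only [Set.mem_setOf_eq, not_and_or, not_le] at hω
    exact hω.imp (fun h => h) (fun h => h)
  refine le_trans (le_trans (measure_mono hsub) (measure_union_le _ _)) ?_
  -- lower tail
  have hlow : P {ω : Ω | (Y ω : ℝ) < b * x₁ * θ}
      ≤ ENNReal.ofReal (x₁ * θ * Real.exp (-(x₁ * θ * (1 - b) ^ 2 / 2))) := by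
    have hev : {ω : Ω | (Y ω : ℝ) < b * x₁ * θ} = ⋃ k ∈ Finset.range K₁, {ω : Ω | Y ω = k} := by
      ext ω
      simp only [Set.mem_setOf_eq, Set.mem_iUnion, Finset.mem_range, exists_prop]
      constructor
      · intro h
        exact ⟨Y ω, Nat.lt_ceil.2 h, rfl⟩
      · rintro ⟨k, hk, rfl⟩
        exact Nat.lt_ceil.1 hk
    rw [hev]
    refine le_trans (measure_biUnion_finset_le _ _) ?_
    have hterm : ∀ k ∈ Finset.range K₁,
        P {ω : Ω | Y ω = k} ≤ ENNReal.ofReal (Real.exp (-(x₁ * θ * (1 - b) ^ 2 / 2))) := by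
      intro k hk
      rw [hpmf k]
      apply ENNReal.ofReal_le_ofReal
      have hkb : (k : ℝ) ≤ b * lam := by
        have h1 : (k : ℝ) < b * x₁ * θ := Nat.lt_ceil.1 (Finset.mem_range.1 hk)
        nlinarith [hlam1, hb0]
      refine le_trans (pois_le_low hlam hb0 hb1 hkb) ?_
      rw [Real.exp_le_exp, neg_le_neg_iff]
      have hgl := g_lower hb0 hb1.le
      nlinarith [hgl, hlam1, hlam, hx₁θ, sq_nonneg (1 - b)]
    refine le_trans (Finset.sum_le_sum hterm) ?_
    rw [Finset.sum_const, Finset.card_range, nsmul_eq_mul]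
    rw [← ENNReal.ofReal_natCast K₁, ← ENNReal.ofReal_mul (by positivity)]
    apply ENNReal.ofReal_le_ofReal
    apply mul_le_mul_of_nonneg_right _ (Real.exp_pos _).le
    -- K₁ ≤ x₁ θ
    have h1 : (K₁ : ℝ) < b * x₁ * θ + 1 := Nat.ceil_lt_add_one hbx.le
    have h2 : (1 - b) * θ > 1 := by nlinarith [hθb, hlogb, hθ, hb0]
    nlinarith [h1, h2, hx₁, hθ, hb0, hb1]
  -- upper tail
  have hhigh : P {ω : Ω | B * x₂ * θ < (Y ω : ℝ)}
      ≤ ENNReal.ofReal ((B / (B - 1)) * Real.exp (-(x₁ * θ * (B - 1) ^ 2 / 3))) := by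
    set c₂ : ℝ := Real.exp (-(x₁ * θ * (B - 1) ^ 2 / 3)) with hc₂
    have hBlamK : B * lam < (K₂ : ℝ) := by
      have h1 : B * x₂ * θ < (K₂ : ℝ) := by
        rw [hK₂]
        push_cast
        exact Nat.lt_floor_add_one _
      nlinarith [hlam2, hB1]
    have hev : {ω : Ω | B * x₂ * θ < (Y ω : ℝ)} ⊆ ⋃ j : ℕ, {ω : Ω | Y ω = K₂ + j} := by
      intro ω hω
      simp only [Set.mem_setOf_eq] at hω
      have h1 : ⌊B * x₂ * θ⌋₊ < Y ω := (Nat.floor_lt hBx.le).2 hω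
      simp only [Set.mem_iUnion, Set.mem_setOf_eq]
      exact ⟨Y ω - K₂, by omega⟩
    refine le_trans (le_trans (measure_mono hev) (measure_iUnion_le _)) ?_
    -- geometric bound on each term
    have hgeo : ∀ j : ℕ, pois lam (K₂ + j) ≤ c₂ * (1 / B) ^ j := by
      have hK₂c : pois lam K₂ ≤ c₂ := by
        refine le_trans (pois_le_high hlam hB1 hBlamK.le) ?_
        rw [hc₂, Real.exp_le_exp, neg_le_neg_iff]
        have hgu := g_upper hB1.le hB2.le
        nlinarith [hgu, hlam1, hlam, hx₁θ, sq_nonneg (B - 1)]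
      intro j
      have hB0 : (0:ℝ) < B := lt_trans one_pos hB1
      induction j with
      | zero => simpa using hK₂c
      | succ j ihj =>
        have hBlamK' : B * lam < (⌊B * x₂ * θ⌋₊ : ℝ) + 1 := by
          have h' := hBlamK
          rw [hK₂] at h'
          push_cast at h'
          exact h'
        have hfrac : lam / (((K₂ + j : ℕ) : ℝ) + 1) ≤ 1 / B := by
          rw [div_le_div_iff₀ (by positivity) hB0]
          push_cast
          nlinarith [hBlamK', Nat.cast_nonneg (α := ℝ) j]
        have hpn : 0 ≤ pois lam (K₂ + j) := pois_nonneg hlam.le _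
        calc pois lam (K₂ + j + 1)
            = pois lam (K₂ + j) * (lam / (((K₂ + j : ℕ) : ℝ) + 1)) := pois_succ lam (K₂ + j)
          _ ≤ (c₂ * (1 / B) ^ j) * (1 / B) :=
              mul_le_mul ihj hfrac (div_nonneg hlam.le (by positivity)) (by positivity)
          _ = c₂ * (1 / B) ^ (j + 1) := by ring
    calc ∑' j : ℕ, P {ω : Ω | Y ω = K₂ + j}
        ≤ ∑' j : ℕ, ENNReal.ofReal (c₂ * (1 / B) ^ j) := by
          apply ENNReal.tsum_le_tsum
          intro j
          rw [hpmf (K₂ + j)]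
          exact ENNReal.ofReal_le_ofReal (hgeo j)
      _ = ENNReal.ofReal (∑' j : ℕ, c₂ * (1 / B) ^ j) := by
          have hB0 : (0:ℝ) < B := lt_trans one_pos hB1
          rw [ENNReal.ofReal_tsum_of_nonneg (fun j => mul_nonneg (by rw [hc₂]; positivity)
            (pow_nonneg (one_div_nonneg.2 hB0.le) j))]
          exact (summable_geometric_of_lt_one (one_div_nonneg.2 hB0.le) (by
            rw [div_lt_one hB0]; exact hB1)).mul_left c₂
      _ ≤ ENNReal.ofReal ((B / (B - 1)) * c₂) := by
          apply ENNReal.ofReal_le_ofReal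
          have hB0 : (0:ℝ) < B := lt_trans one_pos hB1
          rw [tsum_mul_left, tsum_geometric_of_lt_one (one_div_nonneg.2 hB0.le) (by
            rw [div_lt_one hB0]; exact hB1)]
          have h1 : (1 - 1 / B)⁻¹ = B / (B - 1) := by
            rw [one_div]
            field_simp
          rw [h1]
          ring_nf
          exact le_refl _
  refine le_trans (add_le_add hlow hhigh) ?_
  rw [← ENNReal.ofReal_add (mul_nonneg hx₁θ.le (Real.exp_pos _).le)
    (mul_nonneg (div_nonneg (by linarith) (by linarith)) (Real.exp_pos _).le)]

end GW7

open GW7 in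
/-- **Lemma.** If `1 < B < 3/2`, `0 < b < 1`, `(1-b+b log b) θ > 1`, `1 ≤ x₁ < x₂ - 1`, and
`P(x₁ ≤ 𝒳_{t-1} ≤ x₂) > 0`, then
`P(b x₁ θ ≤ 𝒳_t ≤ B x₂ θ | x₁ ≤ 𝒳_{t-1} ≤ x₂)
  ≥ 1 - x₁ θ e^{-x₁ θ (1-b)²/2} - (B/(B-1)) e^{-x₁ θ (B-1)²/3}`. -/
theorem stmt_7 {Ω : Type*} [MeasurableSpace Ω] (P : Measure Ω) [IsProbabilityMeasure P]
    (θ : ℝ) (hθpos : 0 < θ) (ξ : ℕ × ℕ → Ω → ℕ) (X : ℕ → Ω → ℕ)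
    (hGW : IsGWPoisson P θ ξ X)
    (B b x₁ x₂ : ℝ) (hB1 : 1 < B) (hB2 : B < 3 / 2) (hb0 : 0 < b) (hb1 : b < 1)
    (hθb : 1 < (1 - b + b * Real.log b) * θ)
    (hx₁ : 1 ≤ x₁) (hx₁₂ : x₁ < x₂ - 1)
    (t : ℕ) (ht : 1 ≤ t)
    (hpos : 0 < P {ω | x₁ ≤ (X (t - 1) ω : ℝ) ∧ (X (t - 1) ω : ℝ) ≤ x₂}) :
    ENNReal.ofReal (1 - x₁ * θ * Real.exp (-(x₁ * θ * (1 - b) ^ 2 / 2)) -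
        (B / (B - 1)) * Real.exp (-(x₁ * θ * (B - 1) ^ 2 / 3))) ≤
      (P[|{ω | x₁ ≤ (X (t - 1) ω : ℝ) ∧ (X (t - 1) ω : ℝ) ≤ x₂}])
        {ω | b * x₁ * θ ≤ (X t ω : ℝ) ∧ (X t ω : ℝ) ≤ B * x₂ * θ} := by
  obtain ⟨hξ, hind, hpmf, hX0, hXs⟩ := hGW
  obtain ⟨s, rfl⟩ : ∃ s, t = s + 1 := ⟨t - 1, (Nat.succ_pred_eq_of_pos ht).symm⟩
  simp only [Nat.add_sub_cancel] at hpos ⊢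
  have hx₂0 : (0:ℝ) ≤ x₂ := by linarith
  have hx₁θ : 0 < x₁ * θ := by nlinarith
  set ε : ℝ := x₁ * θ * Real.exp (-(x₁ * θ * (1 - b) ^ 2 / 2)) +
      (B / (B - 1)) * Real.exp (-(x₁ * θ * (B - 1) ^ 2 / 3)) with hε
  have hε0 : 0 ≤ ε := by
    apply add_nonneg (mul_nonneg hx₁θ.le (Real.exp_pos _).le)
    exact mul_nonneg (div_nonneg (by linarith) (by linarith)) (Real.exp_pos _).le
  set A : Set Ω := {ω | x₁ ≤ (X s ω : ℝ) ∧ (X s ω : ℝ) ≤ x₂} with hA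
  set Good : Set Ω := {ω | b * x₁ * θ ≤ (X (s+1) ω : ℝ) ∧ (X (s+1) ω : ℝ) ≤ B * x₂ * θ}
    with hGood
  set Sm : ℕ → Ω → ℕ := fun m ω => ∑ i ∈ Finset.range m, ξ (s, i) ω with hSm
  set M : Finset ℕ := Finset.Icc ⌈x₁⌉₊ ⌊x₂⌋₊ with hM
  set Em : ℕ → Set Ω := fun m => {ω | X s ω = m} with hEm
  set Gm : ℕ → Set Ω := fun m =>
    {ω | b * x₁ * θ ≤ (Sm m ω : ℝ) ∧ (Sm m ω : ℝ) ≤ B * x₂ * θ} with hGm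
  have hXmeas : Measurable (X s) := (X_meas_MS hX0 hXs s).mono (MS_le hξ _) le_rfl
  have hSmeas : ∀ m, Measurable (Sm m) := fun m =>
    Finset.measurable_sum _ fun i _ => hξ (s, i)
  have hmemM : ∀ m : ℕ, m ∈ M ↔ (x₁ ≤ (m : ℝ) ∧ (m : ℝ) ≤ x₂) := by
    intro m
    rw [hM, Finset.mem_Icc]
    constructor
    · rintro ⟨h1, h2⟩
      constructor
      · exact le_trans (Nat.le_ceil x₁) (by exact_mod_cast h1)
      · exact le_trans (by exact_mod_cast h2) (Nat.floor_le hx₂0)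
    · rintro ⟨h1, h2⟩
      exact ⟨Nat.ceil_le.2 h1, Nat.le_floor (by exact_mod_cast h2)⟩
  -- per-m independence
  have hdisjST : Disjoint {p : ℕ × ℕ | p.1 < s} {p : ℕ × ℕ | p.1 = s} := by
    rw [Set.disjoint_left]
    intro p h1 h2
    simp only [Set.mem_setOf_eq] at h1 h2
    omega
  have hkey : ∀ m : ℕ, P (Em m ∩ Gm m) = P (Em m) * P (Gm m) := by
    intro m
    have hf : Measurable[MS ξ {p : ℕ × ℕ | p.1 < s}] (X s) := X_meas_MS hX0 hXs s
    have hg : Measurable[MS ξ {p : ℕ × ℕ | p.1 = s}] (Sm m) :=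
      sum_meas_MS ξ (fun i _ => rfl)
    have h := indep_prod hξ hind hdisjST hf hg {m}
      {n : ℕ | b * x₁ * θ ≤ (n : ℝ) ∧ (n : ℝ) ≤ B * x₂ * θ}
    have hpre1 : X s ⁻¹' {m} = Em m := by ext ω; simp [hEm]
    have hpre2 : Sm m ⁻¹' {n : ℕ | b * x₁ * θ ≤ (n : ℝ) ∧ (n : ℝ) ≤ B * x₂ * θ} = Gm m := by
      ext ω; simp [hGm]
    rw [hpre1, hpre2] at h
    exact h
  -- lower bound on P (Gm m) for m ∈ M
  have hGmbound : ∀ m ∈ M, ENNReal.ofReal (1 - ε) ≤ P (Gm m) := by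
    intro m hm
    obtain ⟨hm1, hm2⟩ := (hmemM m).1 hm
    have hpmf' : ∀ k, P {ω | Sm m ω = k} = ENNReal.ofReal (pois ((m : ℝ) * θ) k) :=
      fun k => sum_xi_dist hθpos.le hξ hind (fun p k => hpmf p k) s m k
    have hbad := tail_bound (hSmeas m) hθpos hB1 hB2 hb0 hb1 hθb hx₁
      (mul_le_mul_of_nonneg_right hm1 hθpos.le)
      (mul_le_mul_of_nonneg_right hm2 hθpos.le) hpmf'
    have hcompl : {ω : Ω | ¬(b * x₁ * θ ≤ (Sm m ω : ℝ) ∧ (Sm m ω : ℝ) ≤ B * x₂ * θ)}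
        = (Gm m)ᶜ := by
      ext ω; simp [hGm]
    rw [hcompl] at hbad
    have hGmeas : MeasurableSet (Gm m) := by
      have : Gm m = Sm m ⁻¹' {n : ℕ | b * x₁ * θ ≤ (n : ℝ) ∧ (n : ℝ) ≤ B * x₂ * θ} := by
        ext ω; simp [hGm]
      rw [this]
      exact hSmeas m (by trivial)
    rcases le_total ε 1 with h1 | h1
    · rw [← ENNReal.add_le_add_iff_right (ENNReal.ofReal_ne_top (r := ε))]
      calc ENNReal.ofReal (1 - ε) + ENNReal.ofReal ε = 1 := by
            rw [← ENNReal.ofReal_add (by linarith) hε0]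
            norm_num
        _ = P (Gm m) + P (Gm m)ᶜ := by
            rw [measure_add_measure_compl hGmeas, measure_univ]
        _ ≤ P (Gm m) + ENNReal.ofReal ε := add_le_add_right hbad _
    · rw [ENNReal.ofReal_eq_zero.2 (by linarith)]
      exact zero_le
  -- decompose A
  have hEmdis : (↑M : Set ℕ).PairwiseDisjoint Em := by
    intro m _ m' _ hne
    apply Set.disjoint_left.2
    intro ω h1 h2
    simp only [hEm, Set.mem_setOf_eq] at h1 h2
    exact hne (h1 ▸ h2 ▸ rfl)
  have hEmdis2 : (↑M : Set ℕ).PairwiseDisjoint (fun m => Em m ∩ Gm m) := by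
    intro m hm m' hm' hne
    exact Set.disjoint_of_subset Set.inter_subset_left Set.inter_subset_left
      (hEmdis hm hm' hne)
  have hEmmeas : ∀ m, MeasurableSet (Em m) := by
    intro m
    have : Em m = X s ⁻¹' {m} := by ext ω; simp [hEm]
    rw [this]
    exact hXmeas (measurableSet_singleton m)
  have hGmmeas : ∀ m, MeasurableSet (Gm m) := by
    intro m
    have : Gm m = Sm m ⁻¹' {n : ℕ | b * x₁ * θ ≤ (n : ℝ) ∧ (n : ℝ) ≤ B * x₂ * θ} := by
      ext ω; simp [hGm]
    rw [this]
    exact hSmeas m (by trivial)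
  have hAunion : A = ⋃ m ∈ M, Em m := by
    ext ω
    simp only [hA, Set.mem_setOf_eq, Set.mem_iUnion, exists_prop, hEm]
    constructor
    · intro h
      exact ⟨X s ω, (hmemM _).2 h, rfl⟩
    · rintro ⟨m, hm, rfl⟩
      exact (hmemM _).1 hm
  have hInter : A ∩ Good = ⋃ m ∈ M, (Em m ∩ Gm m) := by
    ext ω
    simp only [hA, hGood, hGm, hEm, hSm, Set.mem_inter_iff, Set.mem_setOf_eq, Set.mem_iUnion,
      exists_prop]
    constructor
    · rintro ⟨hω1, hω2⟩
      refine ⟨X s ω, (hmemM _).2 hω1, rfl, ?_⟩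
      rw [← hXs s ω]
      exact hω2
    · rintro ⟨m, hm, hXm, hG⟩
      refine ⟨hXm ▸ (hmemM _).1 hm, ?_⟩
      rw [hXs s ω, hXm]
      exact hG
  have hPA : P A = ∑ m ∈ M, P (Em m) := by
    rw [hAunion, measure_biUnion_finset hEmdis (fun m _ => hEmmeas m)]
  have hPAG : ENNReal.ofReal (1 - ε) * P A ≤ P (A ∩ Good) := by
    rw [hInter, measure_biUnion_finset hEmdis2
      (fun m _ => (hEmmeas m).inter (hGmmeas m)), hPA, Finset.mul_sum]
    apply Finset.sum_le_sum
    intro m hm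
    rw [hkey m, mul_comm (ENNReal.ofReal (1 - ε)) (P (Em m))]
    exact mul_le_mul_right (hGmbound m hm) _
  -- conclude via conditional probability
  have hAmeas : MeasurableSet A := by
    have : A = X s ⁻¹' {n : ℕ | x₁ ≤ (n : ℝ) ∧ (n : ℝ) ≤ x₂} := by
      ext ω; simp [hA]
    rw [this]
    exact hXmeas (by trivial)
  rw [ProbabilityTheory.cond_apply hAmeas]
  have hgoal : 1 - x₁ * θ * Real.exp (-(x₁ * θ * (1 - b) ^ 2 / 2)) -
      (B / (B - 1)) * Real.exp (-(x₁ * θ * (B - 1) ^ 2 / 3)) = 1 - ε := by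
    rw [hε]; ring
  rw [hgoal]
  calc ENNReal.ofReal (1 - ε)
      = (P A)⁻¹ * (ENNReal.ofReal (1 - ε) * P A) := by
        rw [mul_comm (ENNReal.ofReal (1 - ε)) (P A), ← mul_assoc,
          ENNReal.inv_mul_cancel hpos.ne' (measure_ne_top P A), one_mul]
    _ ≤ (P A)⁻¹ * P (A ∩ Good) := mul_le_mul_right hPAG _
end

section
/- Fix ε with 0 < ε < 2α/(3α + 8 + √(α² + 48α + 64)) and set ε₁ := 4ε/(α(1-2ε)(1-ε) - 4ε). Then there exists τ₀ such that for all t ≥ τ₀: log G((1-ε₁)·u_n(t)) ≥ -((1-2ε)/α)·t·log^{(n)}(t) and log G((1+ε₁)·u_n(t)) ≤ -((1+2ε)/α)·t·log^{(n)}(t). -/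
open Filter MeasureTheory

noncomputable section

/-- `iterLog n` is the `n`-fold iterated natural logarithm, `log^{(0)}(x) = x`. -/
def iterLog : ℕ → ℝ → ℝ
  | 0, x => x
  | n + 1, x => Real.log (iterLog n x)

/-- Condition (A1): `L(x)/x^ε → 0` and `1/(L(x) x^ε) → 0` as `x → ∞`, for every `ε > 0`. -/
def CondA1 (L : ℝ → ℝ) : Prop :=
  ∀ ε : ℝ, 0 < ε →
    Tendsto (fun x => L x / x ^ ε) atTop (nhds 0) ∧
    Tendsto (fun x => 1 / (L x * x ^ ε)) atTop (nhds 0)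

/-- Condition (A2): `L(x ℓ(x))/L(x) → 1` for every positive `ℓ` satisfying (A1). -/
def CondA2 (L : ℝ → ℝ) : Prop :=
  ∀ ℓ : ℝ → ℝ, (∀ x, 0 < ℓ x) → CondA1 ℓ →
    Tendsto (fun x => L (x * ℓ x) / L x) atTop (nhds 1)

/-- The operator `d/d(log x)`, i.e. `g ↦ x g'(x)`. -/
def logDerivOp (g : ℝ → ℝ) : ℝ → ℝ := fun x => x * deriv g x

/-- Condition (A4): `(d/d log x)^j log L(x^γ) → 0` for every `j ∈ ℕ` and `γ > 0`. -/
def CondA4 (L : ℝ → ℝ) : Prop :=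
  ∀ (j : ℕ) (γ : ℝ), 0 < γ →
    Tendsto (logDerivOp^[j] (fun x => Real.log (L (x ^ γ)))) atTop (nhds 0)

/-- `ω_W(y) = (log y / α)^{δ_{n,1}/α} · L(y^{1/α})^{-1/α}`. -/
def omegaW (n : ℕ) (α : ℝ) (L : ℝ → ℝ) (y : ℝ) : ℝ :=
  (Real.log y / α) ^ ((if n = 1 then (1 : ℝ) else 0) / α) * (L (y ^ (1 / α))) ^ (-(1 / α))

/-- `u_n(t) = (log^{(n-1)} t)^{1/α} · ω_W(log^{(n-1)} t)`. -/
def un (n : ℕ) (α : ℝ) (L : ℝ → ℝ) (t : ℝ) : ℝ :=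
  (iterLog (n - 1) t) ^ (1 / α) * omegaW n α L (iterLog (n - 1) t)

set_option maxHeartbeats 2000000

namespace StmtAux

open Real Filter

lemma iterLog_succ' (n : ℕ) (x : ℝ) : iterLog (n+1) x = iterLog n (Real.log x) := by
  induction n generalizing x with
  | zero => rfl
  | succ k ih =>
    show Real.log (iterLog (k+1) x) = Real.log (iterLog k (Real.log x))
    rw [ih]

def E : ℕ → ℝ
  | 0 => 1
  | m + 1 => Real.exp (E m)

lemma E_ge_one : ∀ m, (1:ℝ) ≤ E m
  | 0 => le_refl 1
  | m + 1 => by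
    have := E_ge_one m
    have := Real.add_one_le_exp (E m)
    show (1:ℝ) ≤ Real.exp (E m)
    linarith

lemma E_pos (m : ℕ) : (0:ℝ) < E m := lt_of_lt_of_le one_pos (E_ge_one m)

lemma log_ge_of_ge_exp {x c : ℝ} (h : Real.exp c ≤ x) : c ≤ Real.log x :=
  (Real.le_log_iff_exp_le (lt_of_lt_of_le (Real.exp_pos c) h)).2 h

lemma iterLog_mono (m : ℕ) : ∀ x y : ℝ, E m ≤ x → x ≤ y → iterLog m x ≤ iterLog m y := by
  induction m with
  | zero => intro x y _ h; exact h
  | succ k ih =>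
    intro x y hx h
    rw [iterLog_succ', iterLog_succ']
    have hx0 : 0 < x := lt_of_lt_of_le (E_pos _) hx
    have hlogx : E k ≤ Real.log x := log_ge_of_ge_exp hx
    exact ih _ _ hlogx (Real.log_le_log hx0 h)

lemma iterLog_strictMono (m : ℕ) : ∀ x y : ℝ, E m ≤ x → x < y → iterLog m x < iterLog m y := by
  induction m with
  | zero => intro x y _ h; exact h
  | succ k ih =>
    intro x y hx h
    rw [iterLog_succ', iterLog_succ']
    have hx0 : 0 < x := lt_of_lt_of_le (E_pos _) hx
    have hlogx : E k ≤ Real.log x := log_ge_of_ge_exp hx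
    exact ih _ _ hlogx (Real.log_lt_log hx0 h)

lemma iterLog_ge_one (m : ℕ) : ∀ y : ℝ, E m ≤ y → 1 ≤ iterLog m y := by
  induction m with
  | zero => intro y h; exact h
  | succ k ih =>
    intro y h
    rw [iterLog_succ']
    exact ih _ (log_ge_of_ge_exp h)

lemma iterLog_le_self (m : ℕ) : ∀ y : ℝ, E m ≤ y → iterLog m y ≤ y := by
  induction m with
  | zero => intro y _; exact le_refl y
  | succ k ih =>
    intro y h
    rw [iterLog_succ']
    have hy0 : 0 < y := lt_of_lt_of_le (E_pos _) h
    have h1 : Real.log y ≤ y - 1 := Real.log_le_sub_one_of_pos hy0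
    have h2 : iterLog k (Real.log y) ≤ Real.log y := ih _ (log_ge_of_ge_exp h)
    linarith

lemma iterLog_tendsto (m : ℕ) : Tendsto (iterLog m) atTop atTop := by
  induction m with
  | zero => exact tendsto_id
  | succ k ih =>
    have : iterLog (k+1) = fun x => iterLog k (Real.log x) := by
      funext x; exact iterLog_succ' k x
    rw [this]
    exact ih.comp Real.tendsto_log_atTop

lemma log_le_mul_eventually {c : ℝ} (hc : 0 < c) : ∀ᶠ s in atTop, Real.log s ≤ c * s := by
  have h := Real.isLittleO_log_id_atTop.def hc
  filter_upwards [h, eventually_ge_atTop (1:ℝ)] with s hs hs1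
  have : |Real.log s| ≤ c * |s| := by simpa [Real.norm_eq_abs] using hs
  calc Real.log s ≤ |Real.log s| := le_abs_self _
    _ ≤ c * |s| := this
    _ = c * s := by rw [abs_of_nonneg (by linarith)]

lemma SQ : ∀ k : ℕ, ∀ β : ℝ, 1 < β → ∀ᶠ t in atTop, iterLog (k+2) (t^2) ≤ β * iterLog (k+2) t := by
  intro k
  induction k with
  | zero =>
    intro β hβ
    filter_upwards [eventually_gt_atTop (Real.exp 1),
      (iterLog_tendsto 2).eventually_ge_atTop (Real.log 2 / (β - 1))] with t ht ht2
    have hlt : 1 < Real.log t := by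
      have := Real.log_lt_log (Real.exp_pos 1) ht
      simpa [Real.log_exp] using this
    have h1 : iterLog 2 (t^2) = Real.log (2 * Real.log t) := by
      show Real.log (Real.log (t^2)) = _
      rw [Real.log_pow]; norm_num
    have h2 : iterLog 2 t = Real.log (Real.log t) := rfl
    rw [h1, h2, Real.log_mul two_ne_zero (by linarith)]
    rw [h2] at ht2
    have : Real.log 2 ≤ (β - 1) * Real.log (Real.log t) := by
      rw [div_le_iff₀ (by linarith)] at ht2; linarith
    linarith
  | succ k ih =>
    intro β hβ
    have hIH := ih β hβ
    filter_upwards [Real.tendsto_log_atTop.eventually hIH,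
      Real.tendsto_log_atTop.eventually (eventually_ge_atTop (max 2 (E (k+2)))),
      eventually_gt_atTop (1:ℝ)] with t hiht hlog ht1
    have hlog2 : 2 ≤ Real.log t := le_trans (le_max_left _ _) hlog
    have hlogE : E (k+2) ≤ Real.log t := le_trans (le_max_right _ _) hlog
    have e1 : iterLog (k+3) (t^2) = iterLog (k+2) (2 * Real.log t) := by
      rw [iterLog_succ', Real.log_pow]; norm_num
    have e2 : iterLog (k+3) t = iterLog (k+2) (Real.log t) := iterLog_succ' _ _
    rw [e1, e2]
    have step : iterLog (k+2) (2 * Real.log t) ≤ iterLog (k+2) ((Real.log t)^2) := by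
      apply iterLog_mono
      · nlinarith [E_ge_one (k+2)]
      · nlinarith
    exact le_trans step hiht

lemma UPB : ∀ m : ℕ, ∀ β K : ℝ, 1 < β → 0 < K →
    ∀ᶠ t in atTop, iterLog (m+1) (K * t * iterLog (m+2) t) ≤ β * iterLog (m+1) t := by
  intro m
  cases m with
  | zero =>
    intro β K hβ hK
    have hc : (0:ℝ) < (β-1)/2 := by linarith
    filter_upwards [Real.tendsto_log_atTop.eventually (log_le_mul_eventually hc),
      Real.tendsto_log_atTop.eventually (eventually_ge_atTop (max 1 (E 1))),
      eventually_gt_atTop (0:ℝ),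
      Real.tendsto_log_atTop.eventually_ge_atTop (Real.log K / ((β-1)/2))] with t hll hlog ht0 hlK
    have hlog1 : 1 ≤ Real.log t := le_trans (le_max_left _ _) hlog
    have hlogE : E 1 ≤ Real.log t := le_trans (le_max_right _ _) hlog
    have hit2 : 1 ≤ iterLog 2 t := iterLog_ge_one 1 (Real.log t) hlogE
    have hit2le : iterLog 2 t ≤ Real.log t := iterLog_le_self 1 (Real.log t) hlogE
    have e1 : iterLog 1 (K * t * iterLog 2 t) =
        Real.log K + Real.log t + Real.log (iterLog 2 t) := by
      show Real.log (K * t * iterLog 2 t) = _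
      rw [Real.log_mul (by positivity) (by linarith), Real.log_mul hK.ne' ht0.ne']
    have e2 : (iterLog 1 t : ℝ) = Real.log t := rfl
    rw [e1, e2]
    have b1 : Real.log (iterLog 2 t) ≤ Real.log (Real.log t) :=
      Real.log_le_log (by linarith) hit2le
    have b2 : Real.log (Real.log t) ≤ (β-1)/2 * Real.log t := hll
    have b3 : Real.log K ≤ (β-1)/2 * Real.log t := by
      rw [div_le_iff₀ hc] at hlK; linarith
    linarith
  | succ m =>
    intro β K hβ hK
    have hSQ := SQ m β hβ
    have h1 : ∀ᶠ t in atTop, K * Real.log t ≤ t := by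
      have := log_le_mul_eventually (show (0:ℝ) < 1/K by positivity)
      filter_upwards [this, eventually_gt_atTop (0:ℝ)] with s hs hs0
      calc K * Real.log s ≤ K * (1/K * s) := by
            apply mul_le_mul_of_nonneg_left hs hK.le
        _ = s := by field_simp
    filter_upwards [hSQ, h1,
      Real.tendsto_log_atTop.eventually (eventually_ge_atTop (max 1 (E (m+2)))),
      ((iterLog_tendsto (m+3)).const_mul_atTop hK).eventually_ge_atTop 1,
      eventually_ge_atTop (max 1 (E (m+2)))] with t hsq hkl hlog hKit htE
    have ht1 : (1:ℝ) ≤ t := le_trans (le_max_left _ _) htE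
    have htE' : E (m+2) ≤ t := le_trans (le_max_right _ _) htE
    have hlogE : E (m+2) ≤ Real.log t := le_trans (le_max_right _ _) hlog
    have hitle : iterLog (m+3) t ≤ Real.log t := by
      rw [iterLog_succ']
      exact iterLog_le_self (m+2) (Real.log t) hlogE
    have hRle : K * t * iterLog (m+3) t ≤ t^2 := by
      have : K * iterLog (m+3) t ≤ t := le_trans (by nlinarith) hkl
      nlinarith
    have hRge : t ≤ K * t * iterLog (m+3) t := by
      have h2 : 1 ≤ K * iterLog (m+3) t := hKit
      nlinarith
    have step1 : iterLog (m+2) (K * t * iterLog (m+3) t) ≤ iterLog (m+2) (t^2) := by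
      apply iterLog_mono _ _ _ (le_trans htE' hRge)
      nlinarith
    exact le_trans step1 hsq

lemma rpow_oneDiv {x α : ℝ} (hx : 0 ≤ x) (hα : α ≠ 0) : (x ^ (1/α)) ^ α = x := by
  rw [← Real.rpow_mul hx, one_div_mul_cancel hα, Real.rpow_one]

lemma rpow_negOneDiv {x α : ℝ} (hx : 0 ≤ x) (hα : α ≠ 0) : (x ^ (-(1/α))) ^ α = x⁻¹ := by
  rw [← Real.rpow_mul hx, neg_mul, one_div_mul_cancel hα, Real.rpow_neg_one]

end StmtAux

/-- **Lemma.** For a type I tail function `G` with tail index `n` and tail parameter `α`: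
for `0 < ε < 2α/(3α + 8 + √(α² + 48α + 64))` and
`ε₁ = 4ε/(α(1-2ε)(1-ε) - 4ε)` there is `τ₀` such that for all `t ≥ τ₀`,
`log G((1-ε₁) u_n(t)) ≥ -((1-2ε)/α) t log^{(n)} t` and
`log G((1+ε₁) u_n(t)) ≤ -((1+2ε)/α) t log^{(n)} t`. -/

theorem stmt_11 (n : ℕ) (hn : 1 ≤ n) (α : ℝ) (hα : 0 < α)
    (L : ℝ → ℝ) (hLpos : ∀ᶠ x in atTop, 0 < L x)
    (hLsmooth : ∃ x₁ : ℝ, ContDiffOn ℝ 4 L (Set.Ioi x₁))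
    (hA1 : CondA1 L) (hA2 : CondA2 L) (hA4 : CondA4 L)
    (μ : Measure ℝ) [IsProbabilityMeasure μ] (hμ0 : μ (Set.Iic 0) = 0)
    (hunb : ∀ x : ℝ, 0 < μ (Set.Ioi x))
    (G : ℝ → ℝ) (hG : ∀ x, G x = (μ (Set.Ioi x)).toReal)
    (hTypeI : Tendsto (fun x => iterLog n (1 / G x) / (x ^ α * L x)) atTop (nhds 1))
    (ε : ℝ) (hε0 : 0 < ε)
    (hεup : ε < 2 * α / (3 * α + 8 + Real.sqrt (α ^ 2 + 48 * α + 64)))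
    (ε₁ : ℝ) (hε₁ : ε₁ = 4 * ε / (α * (1 - 2 * ε) * (1 - ε) - 4 * ε)) :
    ∃ τ₀ : ℝ, ∀ t : ℝ, τ₀ ≤ t →
      -((1 - 2 * ε) / α) * t * iterLog n t ≤ Real.log (G ((1 - ε₁) * un n α L t)) ∧
      Real.log (G ((1 + ε₁) * un n α L t)) ≤ -((1 + 2 * ε) / α) * t * iterLog n t := by
  classical
  obtain ⟨m, rfl⟩ : ∃ m, n = m + 1 := ⟨n - 1, (Nat.succ_pred_eq_of_pos hn).symm⟩
  clear hn
  -- ε algebra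
  obtain ⟨s, hs⟩ : ∃ s, s = Real.sqrt (α ^ 2 + 48 * α + 64) := ⟨_, rfl⟩
  rw [← hs] at hεup
  have hs0 : 0 ≤ s := hs ▸ Real.sqrt_nonneg _
  have hs2 : s ^ 2 = α ^ 2 + 48 * α + 64 := hs ▸ Real.sq_sqrt (by positivity)
  have hsgtα : α < s := by nlinarith
  have hden : 0 < 3 * α + 8 + s := by linarith
  have hkey : ε * (3 * α + 8 + s) < 2 * α := by
    have := (lt_div_iff₀ hden).1 hεup
    linarith
  have hεhalf : ε < 1/2 := by nlinarith
  have hQ : 0 < 2*α*ε^2 - (3*α+8)*ε + α := by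
    nlinarith [mul_pos (show (0:ℝ) < 2*α - (3*α+8)*ε - s*ε by nlinarith)
      (show (0:ℝ) < 2*α - (3*α+8)*ε + s*ε by nlinarith)]
  obtain ⟨D, hD⟩ : ∃ D, D = α * (1 - 2 * ε) * (1 - ε) - 4 * ε := ⟨_, rfl⟩
  rw [← hD] at hε₁
  have hDQ : D = (2*α*ε^2 - (3*α+8)*ε + α) + 4*ε := by rw [hD]; ring
  have hDpos : 4*ε < D := by rw [hDQ]; linarith
  have hε₁pos : 0 < ε₁ := by rw [hε₁]; exact div_pos (by linarith) (by linarith)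
  have hε₁lt1 : ε₁ < 1 := by rw [hε₁, div_lt_one (by linarith)]; linarith
  have hDne : D ≠ 0 := ne_of_gt (by linarith)
  have hε₁D : ε₁ * D = 4 * ε := by rw [hε₁, div_mul_cancel₀ _ hDne]
  have hI : (1 - ε₁) ^ α < 1 - 2*ε := by
    have h1 : (1 - ε₁ : ℝ) ^ α ≤ 1 / (1 + α * ε₁) := by
      rw [Real.rpow_def_of_pos (by linarith)]
      have hlog : Real.log (1 - ε₁) ≤ -ε₁ := by
        have := Real.log_le_sub_one_of_pos (show (0:ℝ) < 1 - ε₁ by linarith)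
        linarith
      have h2 : Real.log (1 - ε₁) * α ≤ -(α * ε₁) := by nlinarith
      calc Real.exp (Real.log (1 - ε₁) * α) ≤ Real.exp (-(α*ε₁)) := Real.exp_le_exp.2 h2
        _ = 1 / Real.exp (α*ε₁) := by rw [Real.exp_neg]; ring
        _ ≤ 1 / (1 + α*ε₁) := by
            apply one_div_le_one_div_of_le (by positivity)
            linarith [Real.add_one_le_exp (α*ε₁)]
    have h3 : 1 < (1 - 2*ε) * (1 + α * ε₁) := by
      have h4 : 2*ε < α * ε₁ * (1 - 2*ε) := by
        have h5 : D < 2*α*(1-2*ε) := by rw [hD]; nlinarith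
        nlinarith [mul_pos hε₁pos (show (0:ℝ) < 2*α*(1-2*ε) - D by linarith)]
      nlinarith
    calc (1 - ε₁ : ℝ) ^ α ≤ 1 / (1 + α * ε₁) := h1
      _ < 1 - 2*ε := by
          rw [div_lt_iff₀ (by positivity)]; linarith
  have hII : 1 + 2*ε < (1 + ε₁) ^ α := by
    have h1 : 1 + α * (ε₁ / (1 + ε₁)) ≤ (1 + ε₁ : ℝ) ^ α := by
      rw [Real.rpow_def_of_pos (by linarith)]
      have hlog : ε₁ / (1 + ε₁) ≤ Real.log (1 + ε₁) := by
        have h2 := Real.log_le_sub_one_of_pos (show (0:ℝ) < (1+ε₁)⁻¹ by positivity)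
        rw [Real.log_inv] at h2
        have h3 : (1+ε₁)⁻¹ - 1 = -(ε₁/(1+ε₁)) := by field_simp; ring
        linarith [h2, h3 ▸ h2]
      calc 1 + α * (ε₁ / (1 + ε₁)) ≤ 1 + Real.log (1+ε₁) * α := by nlinarith
        _ ≤ Real.exp (Real.log (1+ε₁) * α) := by
            linarith [Real.add_one_le_exp (Real.log (1+ε₁) * α)]
    have hDα : D < α := by rw [hD]; nlinarith
    have h4 : 2*ε < α * (ε₁ / (1 + ε₁)) := by
      rw [mul_div_assoc', lt_div_iff₀ (by linarith : (0:ℝ) < 1 + ε₁)]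
      have e2 : D * (1+ε₁) < 2*α := by
        have h6 : D * ε₁ < D * 1 := mul_lt_mul_of_pos_left hε₁lt1 (by linarith : (0:ℝ) < D)
        have h7 : D*(1+ε₁) = D + D*ε₁ := by ring
        linarith
      have e3 : ε₁ * (D * (1+ε₁)) < ε₁ * (2*α) := mul_lt_mul_of_pos_left e2 hε₁pos
      have e4 : ε₁ * (D * (1+ε₁)) = 4*ε*(1+ε₁) := by rw [← hε₁D]; ring
      rw [e4] at e3
      linarith
    linarith
  -- L tends to 1
  have hL1 : Tendsto L atTop (nhds 1) := by
    have h0 := hA4 0 1 one_pos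
    have e0 : (logDerivOp^[0] fun x : ℝ => Real.log (L (x ^ (1:ℝ)))) =
        fun x : ℝ => Real.log (L x) := by
      funext x
      rw [Function.iterate_zero_apply, Real.rpow_one]
    rw [e0] at h0
    have h0' : Tendsto (fun x : ℝ => Real.log (L x)) atTop (nhds 0) := h0
    have h1 := (Real.continuous_exp.tendsto 0).comp h0'
    rw [Real.exp_zero] at h1
    refine h1.congr' ?_
    filter_upwards [hLpos] with x hx
    exact Real.exp_log hx
  -- -log G tends to atTop
  have hGpos : ∀ x, 0 < G x := fun x => by
    rw [hG]; exact ENNReal.toReal_pos (hunb x).ne' (measure_ne_top μ _)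
  have hGto0 : Tendsto G atTop (nhds 0) := by
    have h1 : Tendsto (fun x => μ (Set.Iic x)) atTop (nhds (μ Set.univ)) :=
      MeasureTheory.tendsto_measure_Iic_atTop μ
    have h2 : Tendsto (fun x => (μ (Set.Iic x)).toReal) atTop (nhds (μ Set.univ).toReal) :=
      (ENNReal.tendsto_toReal (measure_ne_top μ _)).comp h1
    have h3 : ∀ x, G x = 1 - (μ (Set.Iic x)).toReal := by
      intro x
      rw [hG, show Set.Ioi x = (Set.Iic x)ᶜ from Set.compl_Iic.symm,
        measure_compl measurableSet_Iic (measure_ne_top μ _),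
        ENNReal.toReal_sub_of_le (measure_mono (Set.subset_univ _)) (measure_ne_top μ _)]
      simp
    have h4 : Tendsto (fun x => 1 - (μ (Set.Iic x)).toReal) atTop (nhds (1 - (μ Set.univ).toReal)) :=
      tendsto_const_nhds.sub h2
    have h5 : (1 : ℝ) - (μ Set.univ).toReal = 0 := by simp
    rw [h5] at h4
    exact h4.congr fun x => (h3 x).symm
  have hGat : Tendsto (fun x => -Real.log (G x)) atTop atTop := by
    have h5 : Tendsto G atTop (nhdsWithin 0 (Set.Ioi 0)) :=
      tendsto_nhdsWithin_of_tendsto_nhds_of_eventually_within _ hGto0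
        (Eventually.of_forall fun x => hGpos x)
    exact tendsto_neg_atBot_atTop.comp (Real.tendsto_log_nhdsGT_zero.comp h5)
  have hGS : ∀ x : ℝ, iterLog (m+1) (1 / G x) = iterLog m (-Real.log (G x)) := by
    intro x
    rw [StmtAux.iterLog_succ', one_div, Real.log_inv]
  have h1α : (0:ℝ) < 1/α := by positivity
  have hKmpos : 0 < (1 - 2*ε)/α := div_pos (by linarith) hα
  have hKppos : 0 < (1 + 2*ε)/α := div_pos (by linarith) hα
  have hcmpos : (0:ℝ) < 1 - ε₁ := by linarith
  have hcppos : (0:ℝ) < 1 + ε₁ := by linarith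
  rcases m with _ | m'
  · -- n = 1
    have hzt : Tendsto (fun t : ℝ => t ^ (1/α)) atTop atTop := tendsto_rpow_atTop h1α
    have hLz : Tendsto (fun t : ℝ => L (t ^ (1/α))) atTop (nhds 1) := hL1.comp hzt
    have hLzinv : Tendsto (fun t : ℝ => (L (t ^ (1/α)))⁻¹) atTop (nhds 1) := by
      simpa using hLz.inv₀ one_ne_zero
    have homega : Tendsto (fun t : ℝ => omegaW 1 α L t) atTop atTop := by
      have h1 : Tendsto (fun t : ℝ => (Real.log t / α) ^ ((1:ℝ)/α)) atTop atTop :=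
        (tendsto_rpow_atTop h1α).comp (Real.tendsto_log_atTop.atTop_div_const hα)
      have h2 : Tendsto (fun t : ℝ => (L (t ^ (1/α))) ^ (-(1/α))) atTop (nhds 1) := by
        have hcont : ContinuousAt (fun x : ℝ => x ^ (-(1/α))) 1 :=
          Real.continuousAt_rpow_const 1 _ (Or.inl one_ne_zero)
        have := hcont.tendsto.comp hLz
        simpa [Real.one_rpow, Function.comp_def] using this
      have h3 := h1.atTop_mul_pos one_pos h2
      refine h3.congr fun t => ?_
      simp [omegaW]
    have hun : Tendsto (un 1 α L) atTop atTop := by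
      have h3 := hzt.atTop_mul_atTop₀ homega
      refine h3.congr fun t => ?_
      simp [un, iterLog]
    have key : ∀ c : ℝ, 0 < c →
        Tendsto (fun t => -Real.log (G (c * un 1 α L t)) / (t * (Real.log t / α)))
          atTop (nhds (c ^ α)) := by
      intro c hc
      have hV : Tendsto (fun t : ℝ => c * un 1 α L t) atTop atTop :=
        Tendsto.const_mul_atTop hc hun
      have hA : Tendsto (fun t => -Real.log (G (c * un 1 α L t)) /
          ((c * un 1 α L t) ^ α * L (c * un 1 α L t))) atTop (nhds 1) := by
        have h4 := hTypeI.comp hV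
        refine h4.congr fun t => ?_
        simp only [Function.comp_apply]
        rw [hGS]
        rfl
      have hident : ∀ᶠ t : ℝ in atTop, (c * un 1 α L t) ^ α =
          c ^ α * (t * (Real.log t / α)) * (L (t ^ (1/α)))⁻¹ := by
        filter_upwards [hzt.eventually hLpos, eventually_gt_atTop 1] with t hLp ht1
        have ht0 : (0:ℝ) < t := lt_trans one_pos ht1
        have hlt : 0 < Real.log t := Real.log_pos ht1
        have hw : (0:ℝ) ≤ Real.log t / α := by positivity
        have h1 : un 1 α L t =
            t ^ (1/α) * ((Real.log t / α) ^ ((1:ℝ)/α) * (L (t ^ (1/α))) ^ (-(1/α))) := by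
          simp [un, omegaW, iterLog]
        rw [h1, Real.mul_rpow hc.le (by positivity),
          Real.mul_rpow (by positivity) (by positivity),
          Real.mul_rpow (by positivity) (by positivity),
          StmtAux.rpow_oneDiv ht0.le hα.ne', StmtAux.rpow_oneDiv hw hα.ne',
          StmtAux.rpow_negOneDiv hLp.le hα.ne']
        ring
      have hB : Tendsto (fun t => ((c * un 1 α L t) ^ α * L (c * un 1 α L t)) /
          (t * (Real.log t / α))) atTop (nhds (c ^ α)) := by
        have hlim : Tendsto (fun t => c ^ α * (L (t ^ (1/α)))⁻¹ * L (c * un 1 α L t))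
            atTop (nhds (c ^ α)) := by
          have h7 : Tendsto (fun t : ℝ => (c ^ α * (L (t ^ (1/α)))⁻¹) * L (c * un 1 α L t))
              atTop (nhds ((c ^ α * 1) * 1)) :=
            ((tendsto_const_nhds (x := c ^ α)).mul hLzinv).mul (hL1.comp hV)
          simpa using h7
        refine hlim.congr' ?_
        filter_upwards [hident, eventually_gt_atTop 1] with t hid ht1
        have ht0 : (0:ℝ) < t := lt_trans one_pos ht1
        have hlt : 0 < Real.log t := Real.log_pos ht1
        have hbase : t * (Real.log t / α) ≠ 0 := ne_of_gt (mul_pos ht0 (div_pos hlt hα))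
        rw [hid, eq_div_iff hbase]
        ring
      have hD0 : ∀ᶠ t in atTop, ((c * un 1 α L t) ^ α * L (c * un 1 α L t)) ≠ 0 := by
        filter_upwards [hV.eventually hLpos, hV.eventually (eventually_gt_atTop 0)] with t p1 p2
        have := Real.rpow_pos_of_pos p2 α
        positivity
      have h8 := hA.mul hB
      rw [one_mul] at h8
      refine h8.congr' ?_
      filter_upwards [hD0] with t hDt
      rw [div_mul_div_comm, mul_comm (-Real.log (G (c * un 1 α L t))) _,
        mul_div_mul_left _ _ hDt]
    have hup := (key _ hcmpos).eventually_lt_const hI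
    have hdn := (key _ hcppos).eventually_const_lt hII
    have hev : ∀ᶠ t : ℝ in atTop,
        -((1 - 2 * ε) / α) * t * iterLog 1 t ≤ Real.log (G ((1 - ε₁) * un 1 α L t)) ∧
        Real.log (G ((1 + ε₁) * un 1 α L t)) ≤ -((1 + 2 * ε) / α) * t * iterLog 1 t := by
      filter_upwards [hup, hdn, eventually_gt_atTop 1] with t h1 h2 ht1
      have ht0 : (0:ℝ) < t := lt_trans one_pos ht1
      have hlt : 0 < Real.log t := Real.log_pos ht1
      have hbase : 0 < t * (Real.log t / α) := mul_pos ht0 (div_pos hlt hα)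
      have hil : iterLog 1 t = Real.log t := rfl
      constructor
      · have h3 := (div_lt_iff₀ hbase).1 h1
        have e : (1-2*ε)*(t*(Real.log t/α)) = ((1-2*ε)/α)*t*Real.log t := by ring
        rw [hil]
        nlinarith [h3, e]
      · have h4 := (lt_div_iff₀ hbase).1 h2
        have e : (1+2*ε)*(t*(Real.log t/α)) = ((1+2*ε)/α)*t*Real.log t := by ring
        rw [hil]
        nlinarith [h4, e]
    rcases eventually_atTop.1 hev with ⟨τ₀, hτ⟩
    exact ⟨τ₀, hτ⟩
  · -- n = m' + 2
    have hy := StmtAux.iterLog_tendsto (m'+1)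
    have hz : Tendsto (fun t => (iterLog (m'+1) t) ^ (1/α)) atTop atTop :=
      (tendsto_rpow_atTop h1α).comp hy
    have hLz : Tendsto (fun t : ℝ => L ((iterLog (m'+1) t) ^ (1/α))) atTop (nhds 1) :=
      hL1.comp hz
    have hLzinv : Tendsto (fun t : ℝ => (L ((iterLog (m'+1) t) ^ (1/α)))⁻¹) atTop (nhds 1) := by
      simpa using hLz.inv₀ one_ne_zero
    have homegaEq : ∀ s : ℝ, omegaW (m'+2) α L s = (L (s ^ (1/α))) ^ (-(1/α)) := by
      intro s
      rw [omegaW, if_neg (by omega), zero_div, Real.rpow_zero, one_mul]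
    have homega : Tendsto (fun t : ℝ => omegaW (m'+2) α L (iterLog (m'+1) t))
        atTop (nhds 1) := by
      have hcont : ContinuousAt (fun x : ℝ => x ^ (-(1/α))) 1 :=
        Real.continuousAt_rpow_const 1 _ (Or.inl one_ne_zero)
      have h2 := hcont.tendsto.comp hLz
      rw [Real.one_rpow] at h2
      refine h2.congr fun t => ?_
      rw [homegaEq]
      rfl
    have hunEq : ∀ t : ℝ, un (m'+2) α L t =
        (iterLog (m'+1) t) ^ (1/α) * omegaW (m'+2) α L (iterLog (m'+1) t) := fun t => rfl
    have hun : Tendsto (un (m'+2) α L) atTop atTop := by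
      have h3 := hz.atTop_mul_pos one_pos homega
      exact h3.congr fun t => (hunEq t).symm
    have key : ∀ c : ℝ, 0 < c →
        Tendsto (fun t => iterLog (m'+1) (-Real.log (G (c * un (m'+2) α L t))) /
          iterLog (m'+1) t) atTop (nhds (c ^ α)) := by
      intro c hc
      have hV : Tendsto (fun t : ℝ => c * un (m'+2) α L t) atTop atTop :=
        Tendsto.const_mul_atTop hc hun
      have hA : Tendsto (fun t => iterLog (m'+1) (-Real.log (G (c * un (m'+2) α L t))) /
          ((c * un (m'+2) α L t) ^ α * L (c * un (m'+2) α L t))) atTop (nhds 1) := by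
        have h4 := hTypeI.comp hV
        refine h4.congr fun t => ?_
        simp only [Function.comp_apply]
        rw [hGS]
      have hident : ∀ᶠ t : ℝ in atTop, (c * un (m'+2) α L t) ^ α =
          c ^ α * iterLog (m'+1) t * (L ((iterLog (m'+1) t) ^ (1/α)))⁻¹ := by
        filter_upwards [hz.eventually hLpos, hy.eventually (eventually_gt_atTop 0)]
          with t hLp hy0
        rw [hunEq, homegaEq, Real.mul_rpow hc.le (by positivity),
          Real.mul_rpow (by positivity) (by positivity),
          StmtAux.rpow_oneDiv hy0.le hα.ne', StmtAux.rpow_negOneDiv hLp.le hα.ne']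
        ring
      have hB : Tendsto (fun t => ((c * un (m'+2) α L t) ^ α * L (c * un (m'+2) α L t)) /
          iterLog (m'+1) t) atTop (nhds (c ^ α)) := by
        have hlim : Tendsto (fun t => c ^ α * (L ((iterLog (m'+1) t) ^ (1/α)))⁻¹ *
            L (c * un (m'+2) α L t)) atTop (nhds (c ^ α)) := by
          have h7 : Tendsto (fun t : ℝ =>
              (c ^ α * (L ((iterLog (m'+1) t) ^ (1/α)))⁻¹) * L (c * un (m'+2) α L t))
              atTop (nhds ((c ^ α * 1) * 1)) :=
            ((tendsto_const_nhds (x := c ^ α)).mul hLzinv).mul (hL1.comp hV)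
          simpa using h7
        refine hlim.congr' ?_
        filter_upwards [hident, hy.eventually (eventually_gt_atTop 0)] with t hid hy0
        rw [hid, eq_div_iff hy0.ne']
        ring
      have hD0 : ∀ᶠ t in atTop,
          ((c * un (m'+2) α L t) ^ α * L (c * un (m'+2) α L t)) ≠ 0 := by
        filter_upwards [hV.eventually hLpos, hV.eventually (eventually_gt_atTop 0)] with t p1 p2
        have := Real.rpow_pos_of_pos p2 α
        positivity
      have h8 := hA.mul hB
      rw [one_mul] at h8
      refine h8.congr' ?_
      filter_upwards [hD0] with t hDt
      rw [div_mul_div_comm, mul_comm (iterLog (m'+1) (-Real.log (G (c * un (m'+2) α L t)))) _,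
        mul_div_mul_left _ _ hDt]
    -- lower bound half
    have hcαlt : (1 - ε₁) ^ α < 1 := Real.rpow_lt_one (by linarith) (by linarith) hα
    have hev₁ : ∀ᶠ t : ℝ in atTop,
        -((1 - 2 * ε) / α) * t * iterLog (m'+2) t ≤
          Real.log (G ((1 - ε₁) * un (m'+2) α L t)) := by
      have h1 := (key _ hcmpos).eventually_lt_const hcαlt
      have hK1 : ∀ᶠ t : ℝ in atTop, 1 ≤ ((1-2*ε)/α) * iterLog (m'+2) t :=
        (Tendsto.const_mul_atTop hKmpos (StmtAux.iterLog_tendsto (m'+2))).eventually_ge_atTop 1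
      filter_upwards [h1, hK1, eventually_ge_atTop (StmtAux.E (m'+1)),
        hy.eventually (eventually_gt_atTop 0), eventually_gt_atTop 0] with t hr hk hE hy0 ht0
      have hS : iterLog (m'+1) (-Real.log (G ((1 - ε₁) * un (m'+2) α L t))) <
          iterLog (m'+1) t := by
        have := (div_lt_one hy0).1 hr
        exact this
      have hR : t ≤ ((1-2*ε)/α) * t * iterLog (m'+2) t := by nlinarith
      have h2 : iterLog (m'+1) t ≤ iterLog (m'+1) (((1-2*ε)/α) * t * iterLog (m'+2) t) :=
        StmtAux.iterLog_mono _ _ _ hE hR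
      have hfin : -Real.log (G ((1 - ε₁) * un (m'+2) α L t)) ≤
          ((1-2*ε)/α) * t * iterLog (m'+2) t := by
        by_contra hcon
        push_neg at hcon
        have := StmtAux.iterLog_strictMono (m'+1) _ _ (le_trans hE hR) hcon
        linarith
      linarith
    -- upper bound half
    have hcαgt : 1 < (1 + ε₁) ^ α := by
      rw [Real.one_lt_rpow_iff_of_pos (by linarith)]
      exact Or.inl ⟨by linarith, hα⟩
    have hβ1 : 1 < (1 + (1+ε₁)^α)/2 := by linarith
    have hβ2 : (1 + (1+ε₁)^α)/2 < (1+ε₁)^α := by linarith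
    have hev₂ : ∀ᶠ t : ℝ in atTop,
        Real.log (G ((1 + ε₁) * un (m'+2) α L t)) ≤
          -((1 + 2 * ε) / α) * t * iterLog (m'+2) t := by
      have h1 := (key _ hcppos).eventually_const_lt hβ2
      have h2 := StmtAux.UPB m' ((1 + (1+ε₁)^α)/2) ((1+2*ε)/α) hβ1 hKppos
      have hVp : Tendsto (fun t : ℝ => (1+ε₁) * un (m'+2) α L t) atTop atTop :=
        Tendsto.const_mul_atTop hcppos hun
      have hSE : ∀ᶠ t : ℝ in atTop,
          StmtAux.E (m'+1) ≤ -Real.log (G ((1+ε₁) * un (m'+2) α L t)) :=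
        (hGat.comp hVp).eventually_ge_atTop _
      filter_upwards [h1, h2, hSE, hy.eventually (eventually_gt_atTop 0)] with t hr hu hSE' hy0
      have hS : (1 + (1+ε₁)^α)/2 * iterLog (m'+1) t <
          iterLog (m'+1) (-Real.log (G ((1+ε₁) * un (m'+2) α L t))) := by
        have := (lt_div_iff₀ hy0).1 hr
        linarith
      have hRS : (1+2*ε)/α * t * iterLog (m'+2) t ≤
          -Real.log (G ((1+ε₁) * un (m'+2) α L t)) := by
        by_contra hcon
        push_neg at hcon
        have := StmtAux.iterLog_strictMono (m'+1) _ _ hSE' hcon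
        linarith
      linarith
    rcases eventually_atTop.1 (hev₁.and hev₂) with ⟨τ₀, hτ⟩
    exact ⟨τ₀, fun t ht => hτ t ht⟩
end
end

section
/- Let a, b be integers and let f be a positive continuous function on [a-1, b+1] that has a unique local maximum at x_c with a < x_c < b, in the sense that f(x) < f(y) whenever a-1 ≤ x < y ≤ x_c and f(x) > f(y) whenever x_c ≤ x < y ≤ b+1. Define F(x) := ∑_{k=a}^{⌊x⌋} f(k). Then for every x with a ≤ x ≤ b, |F(x) - ∫_a^x f(y)dy| ≤ 7·f(x_c). -/
open scoped BigOperators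
open MeasureTheory

/-- **Lemma (sum vs. integral for unimodal functions).**
Let `a, b` be integers and `f` a positive continuous function on `[a-1, b+1]` with a unique
local maximum at `x_c`, `a < x_c < b`, increasing strictly before `x_c` and decreasing strictly
after.  Then for every `x ∈ [a, b]`,
`|∑_{k=a}^{⌊x⌋} f(k) - ∫_a^x f(y) dy| ≤ 7 f(x_c)`. -/
theorem stmt_12 (a b : ℤ) (f : ℝ → ℝ) (x_c : ℝ)
    (hax : (a : ℝ) < x_c) (hxb : x_c < (b : ℝ))
    (hcont : ContinuousOn f (Set.Icc ((a : ℝ) - 1) ((b : ℝ) + 1)))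
    (hpos : ∀ y ∈ Set.Icc ((a : ℝ) - 1) ((b : ℝ) + 1), 0 < f y)
    (hinc : ∀ x y : ℝ, (a : ℝ) - 1 ≤ x → x < y → y ≤ x_c → f x < f y)
    (hdec : ∀ x y : ℝ, x_c ≤ x → x < y → y ≤ (b : ℝ) + 1 → f y < f x) :
    ∀ x : ℝ, (a : ℝ) ≤ x → x ≤ (b : ℝ) →
      |(∑ k ∈ Finset.Icc a ⌊x⌋, f (k : ℝ)) - ∫ y in (a : ℝ)..x, f y| ≤ 7 * f x_c := by
  have hab : (a:ℝ) < (b:ℝ) := lt_trans hax hxb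
  have hmax : ∀ y : ℝ, (a:ℝ)-1 ≤ y → y ≤ (b:ℝ)+1 → f y ≤ f x_c := by
    intro y h1 h2
    rcases lt_trichotomy y x_c with h | h | h
    · exact (hinc y x_c h1 h le_rfl).le
    · exact le_of_eq (by rw [h])
    · exact (hdec x_c y le_rfl h h2).le
  have hfxc : 0 < f x_c := hpos x_c ⟨by linarith, by linarith⟩
  have hInt : ∀ c d : ℝ, (a:ℝ)-1 ≤ c → c ≤ d → d ≤ (b:ℝ)+1 →
      IntervalIntegrable f volume c d := by
    intro c d h1 h2 h3
    exact (hcont.mono (by rw [Set.uIcc_of_le h2]; exact Set.Icc_subset_Icc h1 h3)).intervalIntegrable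
  have hle : ∀ c d M : ℝ, (a:ℝ)-1 ≤ c → c ≤ d → d ≤ (b:ℝ)+1 →
      (∀ y, c ≤ y → y ≤ d → f y ≤ M) → (∫ y in c..d, f y) ≤ (d - c) * M := by
    intro c d M h1 h2 h3 hb
    have := intervalIntegral.integral_mono_on h2 (hInt c d h1 h2 h3)
      (intervalIntegrable_const (c := M)) (fun y hy => hb y hy.1 hy.2)
    simpa [intervalIntegral.integral_const, smul_eq_mul, mul_comm] using this
  have hge : ∀ c d M : ℝ, (a:ℝ)-1 ≤ c → c ≤ d → d ≤ (b:ℝ)+1 →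
      (∀ y, c ≤ y → y ≤ d → M ≤ f y) → (d - c) * M ≤ ∫ y in c..d, f y := by
    intro c d M h1 h2 h3 hb
    have := intervalIntegral.integral_mono_on h2 (intervalIntegrable_const (c := M))
      (hInt c d h1 h2 h3) (fun y hy => hb y hy.1 hy.2)
    simpa [intervalIntegral.integral_const, smul_eq_mul, mul_comm] using this
  have hins : ∀ m : ℤ, a ≤ m →
      Finset.Ico a (m+1) = insert m (Finset.Ico a m) := by
    intro m hm; ext k; simp only [Finset.mem_Ico, Finset.mem_insert]; omega
  have hsumtop : ∀ m : ℤ, a ≤ m → (∑ k ∈ Finset.Ico a (m+1), f (k:ℝ))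
      = (∑ k ∈ Finset.Ico a m, f (k:ℝ)) + f (m:ℝ) := by
    intro m hm
    rw [hins m hm, Finset.sum_insert (by simp)]
    ring
  -- phase 1 : increasing region
  have phase1 : ∀ m : ℤ, a ≤ m → ((m:ℝ) ≤ x_c →
      f (a:ℝ) - f (m:ℝ) ≤ (∑ k ∈ Finset.Ico a m, f (k:ℝ)) - (∫ y in (a:ℝ)..(m:ℝ), f y) ∧
      (∑ k ∈ Finset.Ico a m, f (k:ℝ)) - (∫ y in (a:ℝ)..(m:ℝ), f y) ≤ 0) := by
    intro m
    refine Int.le_induction (motive := fun m _ => (m:ℝ) ≤ x_c →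
      f (a:ℝ) - f (m:ℝ) ≤ (∑ k ∈ Finset.Ico a m, f (k:ℝ)) - (∫ y in (a:ℝ)..(m:ℝ), f y) ∧
      (∑ k ∈ Finset.Ico a m, f (k:ℝ)) - (∫ y in (a:ℝ)..(m:ℝ), f y) ≤ 0) ?_ ?_ m
    · intro _; simp
    · intro m hm ih h1
      push_cast at h1 ⊢
      have hmm : (a:ℝ) ≤ (m:ℝ) := by exact_mod_cast hm
      obtain ⟨ih1, ih2⟩ := ih (by linarith)
      have hadd : (∫ y in (a:ℝ)..(m:ℝ), f y) + (∫ y in (m:ℝ)..((m:ℝ)+1), f y)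
          = ∫ y in (a:ℝ)..((m:ℝ)+1), f y :=
        intervalIntegral.integral_add_adjacent_intervals
          (hInt _ _ (by linarith) hmm (by linarith))
          (hInt _ _ (by linarith) (by linarith) (by linarith))
      have hIlow : f (m:ℝ) ≤ ∫ y in (m:ℝ)..((m:ℝ)+1), f y := by
        have h := hge (m:ℝ) ((m:ℝ)+1) (f (m:ℝ)) (by linarith) (by linarith) (by linarith)
          (fun y hy1 hy2 => by
            rcases eq_or_lt_of_le hy1 with h | h
            · rw [← h]
            · exact (hinc (m:ℝ) y (by linarith) h (by linarith)).le)
        have e : ((m:ℝ)+1 - (m:ℝ)) * f (m:ℝ) = f (m:ℝ) := by ring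
        linarith
      have hIhigh : (∫ y in (m:ℝ)..((m:ℝ)+1), f y) ≤ f ((m:ℝ)+1) := by
        have h := hle (m:ℝ) ((m:ℝ)+1) (f ((m:ℝ)+1)) (by linarith) (by linarith) (by linarith)
          (fun y hy1 hy2 => by
            rcases eq_or_lt_of_le hy2 with h | h
            · rw [h]
            · exact (hinc y ((m:ℝ)+1) (by linarith) h (by linarith)).le)
        have e : ((m:ℝ)+1 - (m:ℝ)) * f ((m:ℝ)+1) = f ((m:ℝ)+1) := by ring
        linarith
      rw [hsumtop m hm, ← hadd]
      constructor <;> linarith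
  -- floor of x_c
  set p : ℤ := ⌊x_c⌋ with hp
  have hap : a ≤ p := Int.le_floor.mpr hax.le
  have hpx : (p:ℝ) ≤ x_c := Int.floor_le x_c
  have hxp1 : x_c < (p:ℝ)+1 := Int.lt_floor_add_one x_c
  have hpb : p + 1 ≤ b := by
    have : (p:ℝ) < (b:ℝ) := lt_of_le_of_lt hpx hxb
    have : p < b := by exact_mod_cast this
    omega
  have hpar : (a:ℝ) ≤ (p:ℝ) := by exact_mod_cast hap
  have hpbr : (p:ℝ) + 1 ≤ (b:ℝ) := by exact_mod_cast hpb
  -- bound on G(p+1)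
  have hfp_pos : 0 < f (p:ℝ) := hpos _ ⟨by linarith, by linarith⟩
  have hfp_le : f (p:ℝ) ≤ f x_c := hmax _ (by linarith) (by linarith)
  have hfa_pos : 0 < f (a:ℝ) := hpos _ ⟨by linarith, by linarith⟩
  have hImid_low : 0 ≤ ∫ y in (p:ℝ)..((p:ℝ)+1), f y := by
    have h := hge (p:ℝ) ((p:ℝ)+1) 0 (by linarith) (by linarith) (by linarith)
      (fun y hy1 hy2 => (hpos y ⟨by linarith, by linarith⟩).le)
    linarith
  have hImid_high : (∫ y in (p:ℝ)..((p:ℝ)+1), f y) ≤ f x_c := by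
    have h := hle (p:ℝ) ((p:ℝ)+1) (f x_c) (by linarith) (by linarith) (by linarith)
      (fun y hy1 hy2 => hmax y (by linarith) (by linarith))
    have e : ((p:ℝ)+1 - (p:ℝ)) * f x_c = f x_c := by ring
    linarith
  have haddp : (∫ y in (a:ℝ)..(p:ℝ), f y) + (∫ y in (p:ℝ)..((p:ℝ)+1), f y)
      = ∫ y in (a:ℝ)..((p:ℝ)+1), f y :=
    intervalIntegral.integral_add_adjacent_intervals
      (hInt _ _ (by linarith) hpar (by linarith))
      (hInt _ _ (by linarith) (by linarith) (by linarith))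
  obtain ⟨hp1, hp2⟩ := phase1 p hap hpx
  obtain ⟨c, hc_eq, hc1, hc2⟩ : ∃ c : ℝ,
      (∑ k ∈ Finset.Ico a (p+1), f (k:ℝ)) - (∫ y in (a:ℝ)..((p+1:ℤ):ℝ), f y) = c ∧
      -(2 * f x_c) ≤ c ∧ c ≤ f x_c := by
    refine ⟨_, rfl, ?_, ?_⟩ <;>
    · push_cast
      rw [hsumtop p hap, ← haddp]
      linarith
  -- phase 2 : decreasing region
  have phase2 : ∀ m : ℤ, p + 1 ≤ m → (m ≤ b →
      c ≤ (∑ k ∈ Finset.Ico a m, f (k:ℝ)) - (∫ y in (a:ℝ)..(m:ℝ), f y) ∧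
      (∑ k ∈ Finset.Ico a m, f (k:ℝ)) - (∫ y in (a:ℝ)..(m:ℝ), f y)
        ≤ c + f ((p:ℝ)+1) - f (m:ℝ)) := by
    intro m
    refine Int.le_induction (motive := fun m _ => m ≤ b →
      c ≤ (∑ k ∈ Finset.Ico a m, f (k:ℝ)) - (∫ y in (a:ℝ)..(m:ℝ), f y) ∧
      (∑ k ∈ Finset.Ico a m, f (k:ℝ)) - (∫ y in (a:ℝ)..(m:ℝ), f y)
        ≤ c + f ((p:ℝ)+1) - f (m:ℝ)) ?_ ?_ m
    · intro _
      push_cast at hc_eq ⊢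
      rw [hc_eq]
      constructor <;> linarith
    · intro m hm ih hmb
      push_cast
      have hmar : (a:ℝ) ≤ (m:ℝ) := by
        have : a ≤ m := by omega
        exact_mod_cast this
      have hpmr : (p:ℝ) + 1 ≤ (m:ℝ) := by exact_mod_cast hm
      have hmbr : (m:ℝ) + 1 ≤ (b:ℝ) := by
        have : m + 1 ≤ b := hmb
        exact_mod_cast this
      obtain ⟨ih1, ih2⟩ := ih (by omega)
      have ham : a ≤ m := by omega
      have hadd : (∫ y in (a:ℝ)..(m:ℝ), f y) + (∫ y in (m:ℝ)..((m:ℝ)+1), f y)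
          = ∫ y in (a:ℝ)..((m:ℝ)+1), f y :=
        intervalIntegral.integral_add_adjacent_intervals
          (hInt _ _ (by linarith) hmar (by linarith))
          (hInt _ _ (by linarith) (by linarith) (by linarith))
      have hIlow : f ((m:ℝ)+1) ≤ ∫ y in (m:ℝ)..((m:ℝ)+1), f y := by
        have h := hge (m:ℝ) ((m:ℝ)+1) (f ((m:ℝ)+1)) (by linarith) (by linarith) (by linarith)
          (fun y hy1 hy2 => by
            rcases eq_or_lt_of_le hy2 with h | h
            · rw [h]
            · exact (hdec y ((m:ℝ)+1) (by linarith) h (by linarith)).le)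
        have e : ((m:ℝ)+1 - (m:ℝ)) * f ((m:ℝ)+1) = f ((m:ℝ)+1) := by ring
        linarith
      have hIhigh : (∫ y in (m:ℝ)..((m:ℝ)+1), f y) ≤ f (m:ℝ) := by
        have h := hle (m:ℝ) ((m:ℝ)+1) (f (m:ℝ)) (by linarith) (by linarith) (by linarith)
          (fun y hy1 hy2 => by
            rcases eq_or_lt_of_le hy1 with h | h
            · rw [← h]
            · exact (hdec (m:ℝ) y (by linarith) h (by linarith)).le)
        have e : ((m:ℝ)+1 - (m:ℝ)) * f (m:ℝ) = f (m:ℝ) := by ring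
        linarith
      rw [hsumtop m ham, ← hadd]
      constructor <;> linarith
  -- main argument
  intro x hxa hxb'
  set n : ℤ := ⌊x⌋ with hn
  have hna : a ≤ n := Int.le_floor.mpr hxa
  have hnx : (n:ℝ) ≤ x := Int.floor_le x
  have hxn1 : x < (n:ℝ)+1 := Int.lt_floor_add_one x
  have hnb : n ≤ b := by
    have : (n:ℝ) ≤ (b:ℝ) := le_trans hnx hxb'
    exact_mod_cast this
  have hnar : (a:ℝ) ≤ (n:ℝ) := by exact_mod_cast hna
  have hnbr : (n:ℝ) ≤ (b:ℝ) := by exact_mod_cast hnb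
  have hfn_pos : 0 < f (n:ℝ) := hpos _ ⟨by linarith, by linarith⟩
  have hfn_le : f (n:ℝ) ≤ f x_c := hmax _ (by linarith) (by linarith)
  have hfp1_le : f ((p:ℝ)+1) ≤ f x_c := hmax _ (by linarith) (by linarith)
  -- bound on G n
  have hGn : -(2 * f x_c) ≤ (∑ k ∈ Finset.Ico a n, f (k:ℝ)) - (∫ y in (a:ℝ)..(n:ℝ), f y) ∧
      (∑ k ∈ Finset.Ico a n, f (k:ℝ)) - (∫ y in (a:ℝ)..(n:ℝ), f y) ≤ 2 * f x_c := by
    rcases le_or_gt n p with h | h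
    · have hnr : (n:ℝ) ≤ x_c := le_trans (by exact_mod_cast h) hpx
      obtain ⟨h1, h2⟩ := phase1 n hna hnr
      constructor <;> linarith
    · obtain ⟨h1, h2⟩ := phase2 n (by omega) hnb
      constructor <;> linarith
  obtain ⟨hGn1, hGn2⟩ := hGn
  -- tail integral
  have htail_low : 0 ≤ ∫ y in (n:ℝ)..x, f y := by
    have h := hge (n:ℝ) x 0 (by linarith) hnx (by linarith)
      (fun y hy1 hy2 => (hpos y ⟨by linarith, by linarith⟩).le)
    linarith
  have htail_high : (∫ y in (n:ℝ)..x, f y) ≤ f x_c := by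
    have h := hle (n:ℝ) x (f x_c) (by linarith) hnx (by linarith)
      (fun y hy1 hy2 => hmax y (by linarith) (by linarith))
    nlinarith
  -- decompose
  have hIcc : Finset.Icc a n = Finset.Ico a (n+1) := by
    ext k; simp only [Finset.mem_Icc, Finset.mem_Ico]; omega
  have hadd : (∫ y in (a:ℝ)..(n:ℝ), f y) + (∫ y in (n:ℝ)..x, f y)
      = ∫ y in (a:ℝ)..x, f y :=
    intervalIntegral.integral_add_adjacent_intervals
      (hInt _ _ (by linarith) hnar (by linarith))
      (hInt _ _ (by linarith) hnx (by linarith))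
  rw [hIcc, hsumtop n hna, ← hadd, abs_le]
  constructor <;> linarith
end
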